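/- arXiv:1503.03658 — 5 statements merged into one kernel-verified Lean document; each statement's English description precedes it below -/
import Mathlib

section
/- For the randomized Collatz chain, set m_n := min(3, d_n) for n ≥ 1. Then for every n ≥ 1 the random variable m_n is independent of the σ-algebra σ(ξ_1, …, ξ_{n-1}), and the sequence (m_n)_{n≥1} is i.i.d. with P(m_n = 1) = 1/2 and P(m_n = 2) = P(m_n = 3) = 1/4. -/
open MeasureTheory ProbabilityTheory MeasurableSpace
open scoped ENNReal

namespace Stmt4Aux

/-- The value of `min 3 (padicValNat 2 N)` read off from residues mod 8 (for `N > 0`). -/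
def G (N : ℕ) : ℕ :=
  if N % 8 = 0 then 3 else if N % 8 = 4 then 2 else if N % 4 = 2 then 1 else 0

lemma min3_padic {N : ℕ} (h : 0 < N) : min 3 (padicValNat 2 N) = G N := by
  haveI : Fact (Nat.Prime 2) := ⟨Nat.prime_two⟩
  have hN : N ≠ 0 := h.ne'
  have h1 := padicValNat_dvd_iff_le (p := 2) (n := 1) hN
  have h2 := padicValNat_dvd_iff_le (p := 2) (n := 2) hN
  have h3 := padicValNat_dvd_iff_le (p := 2) (n := 3) hN
  norm_num at h1 h2 h3
  simp only [G]
  split_ifs <;> omega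

lemma G_mod (N : ℕ) : G (N % 8) = G N := by
  have a : N % 8 % 8 = N % 8 := Nat.mod_mod_of_dvd N dvd_rfl
  have b : N % 8 % 4 = N % 4 := Nat.mod_mod_of_dvd N (by norm_num)
  simp only [G, a, b]

lemma count1 : ∀ a ∈ ({1, 3, 5, 7} : Finset ℕ),
    (({1, 3, 5, 7} : Finset ℕ).filter fun b => G ((3 * a + b) % 8) = 1).card = 2 := by decide

lemma count2 : ∀ a ∈ ({1, 3, 5, 7} : Finset ℕ),
    (({1, 3, 5, 7} : Finset ℕ).filter fun b => G ((3 * a + b) % 8) = 2).card = 1 := by decide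

lemma count3 : ∀ a ∈ ({1, 3, 5, 7} : Finset ℕ),
    (({1, 3, 5, 7} : Finset ℕ).filter fun b => G ((3 * a + b) % 8) = 3).card = 1 := by decide

lemma Grange : ∀ a ∈ ({1, 3, 5, 7} : Finset ℕ), ∀ b ∈ ({1, 3, 5, 7} : Finset ℕ),
    G ((3 * a + b) % 8) = 1 ∨ G ((3 * a + b) % 8) = 2 ∨ G ((3 * a + b) % 8) = 3 := by decide

/-- The distribution of `min 3 (d n)`. -/
noncomputable def pmf3 : ℕ → ℝ≥0∞ := fun v =>
  if v = 1 then 1 / 2 else if v = 2 then 1 / 4 else if v = 3 then 1 / 4 else 0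

variable {Ω : Type*} [MeasurableSpace Ω] (ξ : ℕ → Ω → ℕ)

/-- The σ-algebra generated by `ξ 1, …, ξ k`. -/
def Galg (k : ℕ) : MeasurableSpace Ω :=
  ⨆ i ∈ Set.Icc 1 k, MeasurableSpace.comap (ξ i) inferInstance

lemma Galg_le (hξmeas : ∀ n, Measurable (ξ n)) (k : ℕ) :
    Galg ξ k ≤ ‹MeasurableSpace Ω› :=
  iSup₂_le fun i _ => (hξmeas i).comap_le

lemma Galg_mono : Monotone (Galg ξ) := fun _ _ hab =>
  biSup_mono fun _ hi => ⟨hi.1, hi.2.trans hab⟩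

lemma xi_meas_Galg (i k : ℕ) (h : i ∈ Set.Icc 1 k) : Measurable[Galg ξ k] (ξ i) :=
  Measurable.of_comap_le
    (le_iSup₂ (f := fun i (_ : i ∈ Set.Icc 1 k) => MeasurableSpace.comap (ξ i) inferInstance) i h)

end Stmt4Aux

open Stmt4Aux

/-- For the randomized Collatz chain, with `m n := min 3 (d n)` for `n ≥ 1`: each `m n`
is independent of `σ(ξ 1, …, ξ (n-1))`, and the sequence `(m n)` (for `n ≥ 1`) is i.i.d.
with `P(m n = 1) = 1/2` and `P(m n = 2) = P(m n = 3) = 1/4`. -/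
theorem stmt_4
    {Ω : Type*} [MeasurableSpace Ω] (μ : MeasureTheory.Measure Ω)
    [MeasureTheory.IsProbabilityMeasure μ]
    (ξ : ℕ → Ω → ℕ)
    (hξval : ∀ n ω, ξ n ω = 1 ∨ ξ n ω = 3 ∨ ξ n ω = 5 ∨ ξ n ω = 7)
    (hξmeas : ∀ n, Measurable (ξ n))
    (hξindep : ProbabilityTheory.iIndepFun ξ μ)
    (hξdist : ∀ n, μ {ω | ξ n ω = 1} = 1/4 ∧ μ {ω | ξ n ω = 3} = 1/4 ∧
      μ {ω | ξ n ω = 5} = 1/4 ∧ μ {ω | ξ n ω = 7} = 1/4)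
    (x : ℕ) (hx : Odd x) (hxpos : 0 < x)
    (X : ℕ → Ω → ℕ)
    (hX0 : ∀ ω, X 0 ω = x)
    (hXrec : ∀ n ω, X (n + 1) ω =
      (3 * X n ω + ξ (n + 1) ω) / 2 ^ padicValNat 2 (3 * X n ω + ξ (n + 1) ω))
    (d : ℕ → Ω → ℕ)
    (hd : ∀ n ω, d (n + 1) ω = padicValNat 2 (3 * X n ω + ξ (n + 1) ω)) :
    (∀ n, 1 ≤ n →
      ProbabilityTheory.Indep
        (MeasurableSpace.comap (fun ω => min 3 (d n ω)) inferInstance)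
        (⨆ i ∈ Set.Icc 1 (n - 1), MeasurableSpace.comap (ξ i) inferInstance) μ) ∧
    ProbabilityTheory.iIndepFun
      (fun n ω => min 3 (d (n + 1) ω)) μ ∧
    (∀ n, 1 ≤ n → μ {ω | min 3 (d n ω) = 1} = 1/2 ∧
      μ {ω | min 3 (d n ω) = 2} = 1/4 ∧ μ {ω | min 3 (d n ω) = 3} = 1/4) := by
  classical
  -- preimage measure computation for ξ
  have hpre : ∀ (j : ℕ) (P : ℕ → Prop) [DecidablePred P],
      μ (ξ j ⁻¹' {b | P b})
        = ((({1, 3, 5, 7} : Finset ℕ).filter P).card : ℝ≥0∞) * (1 / 4 : ℝ≥0∞) := by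
    intro j P _
    have hunion : ξ j ⁻¹' {b | P b}
        = ⋃ b ∈ ({1, 3, 5, 7} : Finset ℕ).filter P, ξ j ⁻¹' {b} := by
      ext ω
      simp only [Set.mem_preimage, Set.mem_iUnion, Finset.mem_filter, Finset.mem_insert,
        Finset.mem_singleton, Set.mem_singleton_iff, Set.mem_setOf_eq, exists_prop]
      constructor
      · intro hB; exact ⟨ξ j ω, ⟨hξval j ω, hB⟩, rfl⟩
      · rintro ⟨b, ⟨-, hbB⟩, hb⟩; rw [hb]; exact hbB
    rw [hunion, measure_biUnion_finset ?_ ?_]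
    · rw [Finset.sum_congr rfl (fun b hb => ?_), Finset.sum_const, nsmul_eq_mul]
      have hb' : b = 1 ∨ b = 3 ∨ b = 5 ∨ b = 7 := by
        have := (Finset.mem_filter.mp hb).1; simpa using this
      have h4 := hξdist j
      have hpb : ξ j ⁻¹' ({b} : Set ℕ) = {ω | ξ j ω = b} := rfl
      rcases hb' with rfl | rfl | rfl | rfl <;>
        rw [hpb] <;> [exact h4.1; exact h4.2.1; exact h4.2.2.1; exact h4.2.2.2]
    · intro a ha b hb hab
      refine Set.disjoint_left.mpr fun ω h1 h2 => hab ?_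
      have h1' : ξ j ω = a := h1
      have h2' : ξ j ω = b := h2
      rw [← h1', h2']
    · intro b _
      exact hξmeas j MeasurableSet.of_discrete
  -- distribution of ξ over the key sets
  have hxiB : ∀ (j a : ℕ), (a = 1 ∨ a = 3 ∨ a = 5 ∨ a = 7) → ∀ v,
      μ (ξ j ⁻¹' {b | G ((3 * a + b) % 8) = v}) = pmf3 v := by
    intro j a ha v
    have hmem : a ∈ ({1, 3, 5, 7} : Finset ℕ) := by
      rcases ha with rfl | rfl | rfl | rfl <;> decide
    rw [hpre j (fun b => G ((3 * a + b) % 8) = v)]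
    by_cases h1 : v = 1
    · subst h1; rw [count1 a hmem]
      norm_num [pmf3]
      rw [show (4:ℝ≥0∞) = 2 * 2 by norm_num,
        ENNReal.mul_inv (Or.inl two_ne_zero) (Or.inl (by norm_num)),
        ← mul_assoc, ENNReal.mul_inv_cancel two_ne_zero (by norm_num), one_mul]
    by_cases h2 : v = 2
    · subst h2; rw [count2 a hmem]; norm_num [pmf3]
    by_cases h3 : v = 3
    · subst h3; rw [count3 a hmem]; norm_num [pmf3]
    have hempty : (({1, 3, 5, 7} : Finset ℕ).filter fun b => G ((3 * a + b) % 8) = v) = ∅ := by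
      refine Finset.filter_eq_empty_iff.mpr fun b hb hGb => ?_
      rcases Grange a hmem b hb with h | h | h <;> rw [hGb] at h <;> omega
    rw [hempty]
    simp [pmf3, h1, h2, h3]
  -- X is odd and positive
  have hXop : ∀ n ω, Odd (X n ω) ∧ 0 < X n ω := by
    intro n
    induction n with
    | zero => intro ω; rw [hX0]; exact ⟨hx, hxpos⟩
    | succ n ih =>
      intro ω
      have hN : 3 * X n ω + ξ (n + 1) ω ≠ 0 := by have := (ih ω).2; omega
      have hfac : (3 * X n ω + ξ (n + 1) ω).factorization 2
          = padicValNat 2 (3 * X n ω + ξ (n + 1) ω) := Nat.factorization_def _ Nat.prime_two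
      have heq : X (n + 1) ω = ordCompl[2] (3 * X n ω + ξ (n + 1) ω) := by
        rw [hXrec n ω, ← hfac]
      constructor
      · rw [heq, Nat.odd_iff]
        have := Nat.not_dvd_ordCompl Nat.prime_two hN
        omega
      · rw [heq]; exact Nat.ordCompl_pos 2 hN
    -- measurability of X with respect to Galg
  have hXG : ∀ k, Measurable[Galg ξ k] (X k) := by
    intro k
    induction k with
    | zero =>
      have hconst : X 0 = fun _ => x := funext hX0
      rw [hconst]; exact measurable_const
    | succ k ih =>
      have h1 : Measurable[Galg ξ (k + 1)] (X k) :=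
        ih.mono (Galg_mono ξ (Nat.le_succ k)) le_rfl
      have h2 : Measurable[Galg ξ (k + 1)] (ξ (k + 1)) :=
        xi_meas_Galg ξ (k + 1) (k + 1) (by simp)
      have h3 : Measurable[Galg ξ (k + 1)] fun ω =>
          (3 * X k ω + ξ (k + 1) ω) / 2 ^ padicValNat 2 (3 * X k ω + ξ (k + 1) ω) :=
        (measurable_of_countable
          (fun q : ℕ × ℕ => (3 * q.1 + q.2) / 2 ^ padicValNat 2 (3 * q.1 + q.2))).comp
          (h1.prodMk h2)
      have hfun : X (k + 1) = fun ω =>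
          (3 * X k ω + ξ (k + 1) ω) / 2 ^ padicValNat 2 (3 * X k ω + ξ (k + 1) ω) :=
        funext (hXrec k)
      rw [hfun]; exact h3
  -- global measurability of min 3 (d (k+1))
  have hdm : ∀ k, Measurable fun ω => min 3 (d (k + 1) ω) := by
    intro k
    have hXm : Measurable (X k) := (hXG k).mono (Galg_le ξ hξmeas k) le_rfl
    have hfun : (fun ω => min 3 (d (k + 1) ω))
        = fun ω => min 3 (padicValNat 2 (3 * X k ω + ξ (k + 1) ω)) :=
      funext fun ω => by rw [hd]
    rw [hfun]
    exact (measurable_of_countable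
      (fun q : ℕ × ℕ => min 3 (padicValNat 2 (3 * q.1 + q.2)))).comp
      (hXm.prodMk (hξmeas (k + 1)))
  -- Galg measurability of min 3 (d (k+1))
  have hdG : ∀ k, Measurable[Galg ξ (k + 1)] fun ω => min 3 (d (k + 1) ω) := by
    intro k
    have hXm : Measurable[Galg ξ (k + 1)] (X k) :=
      (hXG k).mono (Galg_mono ξ (Nat.le_succ k)) le_rfl
    have h2 : Measurable[Galg ξ (k + 1)] (ξ (k + 1)) :=
      xi_meas_Galg ξ (k + 1) (k + 1) (by simp)
    have hfun : (fun ω => min 3 (d (k + 1) ω))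
        = fun ω => min 3 (padicValNat 2 (3 * X k ω + ξ (k + 1) ω)) :=
      funext fun ω => by rw [hd]
    rw [hfun]
    exact (measurable_of_countable
      (fun q : ℕ × ℕ => min 3 (padicValNat 2 (3 * q.1 + q.2)))).comp (hXm.prodMk h2)
  -- the value of min 3 (d (k+1)) in terms of residues
  have hmval : ∀ k ω, min 3 (d (k + 1) ω) = G ((3 * (X k ω % 8) + ξ (k + 1) ω) % 8) := by
    intro k ω
    have hpos : 0 < 3 * X k ω + ξ (k + 1) ω := by
      have := (hXop k ω).2; have := hξval (k + 1) ω; omega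
    rw [hd, min3_padic hpos, ← G_mod (3 * X k ω + ξ (k + 1) ω)]
    congr 1
    omega
  have hXmod8 : ∀ k ω, X k ω % 8 = 1 ∨ X k ω % 8 = 3 ∨ X k ω % 8 = 5 ∨ X k ω % 8 = 7 := by
    intro k ω
    have := (hXop k ω).1
    rw [Nat.odd_iff] at this
    omega
  have hmrange : ∀ k ω,
      min 3 (d (k + 1) ω) = 1 ∨ min 3 (d (k + 1) ω) = 2 ∨ min 3 (d (k + 1) ω) = 3 := by
    intro k ω
    rw [hmval k ω]
    have hamem : X k ω % 8 ∈ ({1, 3, 5, 7} : Finset ℕ) := by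
      rcases hXmod8 k ω with h | h | h | h <;> simp [h]
    have hbmem : ξ (k + 1) ω ∈ ({1, 3, 5, 7} : Finset ℕ) := by
      rcases hξval (k + 1) ω with h | h | h | h <;> simp [h]
    exact Grange _ hamem _ hbmem
  -- independence of ξ (k+1) from Galg k
  have hxiIndep : ∀ k,
      Indep (MeasurableSpace.comap (ξ (k + 1)) inferInstance) (Galg ξ k) μ := by
    intro k
    have h := indep_biSup_compl (fun i => (hξmeas i).comap_le) hξindep {k + 1}
    refine indep_of_indep_of_le_right (indep_of_indep_of_le_left h ?_) ?_
    · exact le_iSup₂ (f := fun i (_ : i ∈ ({k + 1} : Set ℕ)) =>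
        MeasurableSpace.comap (ξ i) inferInstance) (k + 1) rfl
    · refine biSup_mono fun i hi => ?_
      simp only [Set.mem_Icc] at hi
      simp only [Set.mem_compl_iff, Set.mem_singleton_iff]
      omega
  -- the core computation
  have hcore : ∀ (k v : ℕ) (T : Set Ω), MeasurableSet[Galg ξ k] T →
      μ ({ω | min 3 (d (k + 1) ω) = v} ∩ T) = pmf3 v * μ T := by
    intro k v T hT
    have hTm : MeasurableSet T := Galg_le ξ hξmeas k T hT
    have hXmod : Measurable[Galg ξ k] fun ω => X k ω % 8 :=
      (measurable_of_countable (· % 8)).comp (hXG k)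
    have hEG : ∀ a : ℕ, MeasurableSet[Galg ξ k] {ω | X k ω % 8 = a} := fun a =>
      hXmod (MeasurableSet.of_discrete (s := {a}))
    have hsplit : {ω | min 3 (d (k + 1) ω) = v} ∩ T
        = ⋃ a ∈ ({1, 3, 5, 7} : Finset ℕ),
            (ξ (k + 1) ⁻¹' {b | G ((3 * a + b) % 8) = v} ∩ ({ω | X k ω % 8 = a} ∩ T)) := by
      ext ω
      simp only [Set.mem_inter_iff, Set.mem_setOf_eq, Set.mem_iUnion, Set.mem_preimage,
        Finset.mem_insert, Finset.mem_singleton, exists_prop]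
      constructor
      · rintro ⟨hv, hT'⟩
        refine ⟨X k ω % 8, hXmod8 k ω, ?_, rfl, hT'⟩
        rw [← hmval k ω]; exact hv
      · rintro ⟨a, _, hGv, haE, hT'⟩
        refine ⟨?_, hT'⟩
        rw [hmval k ω, haE]; exact hGv
    rw [hsplit, measure_biUnion_finset ?_ ?_]
    · have hterm : ∀ a ∈ ({1, 3, 5, 7} : Finset ℕ),
          μ (ξ (k + 1) ⁻¹' {b | G ((3 * a + b) % 8) = v} ∩ ({ω | X k ω % 8 = a} ∩ T))
            = pmf3 v * μ ({ω | X k ω % 8 = a} ∩ T) := by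
        intro a ha
        have hs1 : MeasurableSet[MeasurableSpace.comap (ξ (k + 1)) inferInstance]
            (ξ (k + 1) ⁻¹' {b | G ((3 * a + b) % 8) = v}) :=
          (Measurable.of_comap_le le_rfl) MeasurableSet.of_discrete
        rw [(ProbabilityTheory.Indep_iff _ _ _).mp (hxiIndep k) _ _ hs1
          (((hEG a).inter hT)), hxiB (k + 1) a (by simpa using ha) v]
      rw [Finset.sum_congr rfl hterm, ← Finset.mul_sum]
      congr 1
      rw [← measure_biUnion_finset ?_ ?_]
      · congr 1
        ext ω
        simp only [Set.mem_iUnion, Set.mem_inter_iff, Finset.mem_insert, Finset.mem_singleton,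
          Set.mem_setOf_eq, exists_prop]
        constructor
        · rintro ⟨a, -, -, hT'⟩; exact hT'
        · intro hT'
          exact ⟨X k ω % 8, hXmod8 k ω, rfl, hT'⟩
      · intro a _ b _ hab
        refine Set.disjoint_left.mpr ?_
        rintro ω ⟨hae, -⟩ ⟨hbe, -⟩
        exact hab (hae.symm.trans hbe)
      · intro a _
        exact (Galg_le ξ hξmeas k _ (hEG a)).inter hTm
    · intro a _ b _ hab
      refine Set.disjoint_left.mpr ?_
      rintro ω ⟨-, hae, -⟩ ⟨-, hbe, -⟩
      exact hab (hae.symm.trans hbe)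
    · intro a _
      exact (hξmeas (k + 1) MeasurableSet.of_discrete).inter
        ((Galg_le ξ hξmeas k _ (hEG a)).inter hTm)
  -- the one-dimensional distribution
  have hdist : ∀ k v, μ {ω | min 3 (d (k + 1) ω) = v} = pmf3 v := by
    intro k v
    have := hcore k v Set.univ MeasurableSet.univ
    simpa [Set.inter_univ, measure_univ] using this
  -- the independence of min 3 (d (k+1)) from Galg k
  have hIndep : ∀ k,
      Indep (MeasurableSpace.comap (fun ω => min 3 (d (k + 1) ω)) inferInstance)
        (Galg ξ k) μ := by
    intro k
    refine ProbabilityTheory.IndepSets.indep (p1 := {s | ∃ v, (v = 1 ∨ v = 2 ∨ v = 3) ∧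
        s = (fun ω => min 3 (d (k + 1) ω)) ⁻¹' {v}})
      (p2 := {s | MeasurableSet[Galg ξ k] s})
      ((hdm k).comap_le) (Galg_le ξ hξmeas k) ?_
      (@isPiSystem_measurableSet Ω (Galg ξ k)) ?_
      (@generateFrom_measurableSet Ω (Galg ξ k)).symm ?_
    · rintro s ⟨v, hv, rfl⟩ t ⟨w, hw, rfl⟩ hst
      obtain ⟨ω, h1, h2⟩ := hst
      simp only [Set.mem_preimage, Set.mem_singleton_iff] at h1 h2
      have hvw : v = w := h1 ▸ h2
      subst hvw
      rw [Set.inter_self]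
      exact ⟨v, hv, rfl⟩
    · apply le_antisymm
      · rintro s ⟨S, -, rfl⟩
        have hdecomp : (fun ω => min 3 (d (k + 1) ω)) ⁻¹' S
            = ⋃ v ∈ (S ∩ {1, 2, 3} : Set ℕ), (fun ω => min 3 (d (k + 1) ω)) ⁻¹' {v} := by
          ext ω
          simp only [Set.mem_preimage, Set.mem_iUnion, Set.mem_inter_iff, Set.mem_insert_iff,
            Set.mem_singleton_iff, exists_prop]
          constructor
          · intro h
            exact ⟨min 3 (d (k + 1) ω), ⟨h, by simpa using hmrange k ω⟩, rfl⟩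
          · rintro ⟨v, ⟨hvS, -⟩, rfl⟩
            exact hvS
        rw [hdecomp]
        refine MeasurableSet.biUnion (Set.to_countable _) fun v hv => ?_
        exact measurableSet_generateFrom ⟨v, by simpa using hv.2, rfl⟩
      · refine generateFrom_le ?_
        rintro s ⟨v, _, rfl⟩
        exact ⟨{v}, MeasurableSet.of_discrete, rfl⟩
    · rw [ProbabilityTheory.IndepSets_iff]
      rintro s t ⟨v, _, rfl⟩ ht
      have h1 : (fun ω => min 3 (d (k + 1) ω)) ⁻¹' {v} = {ω | min 3 (d (k + 1) ω) = v} := rfl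
      rw [h1, hcore k v t ht, hdist k v]
  refine ⟨?_, ?_, ?_⟩
  · intro n hn
    obtain ⟨k, rfl⟩ : ∃ k, n = k + 1 := ⟨n - 1, by omega⟩
    simpa [Nat.add_sub_cancel, Galg] using hIndep k
  · rw [ProbabilityTheory.iIndepFun_iff_measure_inter_preimage_eq_mul]
    intro S sets hsets
    clear hsets
    induction S using Finset.induction_on_max with
    | empty => simp
    | insert j s hmax ih =>
      have hjs : j ∉ s := fun h => lt_irrefl j (hmax j h)
      have hTmeas : MeasurableSet[Galg ξ j]
          (⋂ i ∈ s, (fun n ω => min 3 (d (n + 1) ω)) i ⁻¹' sets i) := by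
        refine Finset.measurableSet_biInter s fun i hi => ?_
        have h1 : Measurable[Galg ξ (i + 1)] fun ω => min 3 (d (i + 1) ω) := hdG i
        have h2 : Galg ξ (i + 1) ≤ Galg ξ j := Galg_mono ξ (hmax i hi)
        exact h2 _ (h1 MeasurableSet.of_discrete)
      have hs1 : MeasurableSet[MeasurableSpace.comap
          (fun ω => min 3 (d (j + 1) ω)) inferInstance]
          ((fun ω => min 3 (d (j + 1) ω)) ⁻¹' sets j) :=
        (Measurable.of_comap_le le_rfl) MeasurableSet.of_discrete
      have hpair := (ProbabilityTheory.Indep_iff _ _ _).mp (hIndep j) _ _ hs1 hTmeas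
      calc μ (⋂ i ∈ insert j s, (fun n ω => min 3 (d (n + 1) ω)) i ⁻¹' sets i)
          = μ ((fun n ω => min 3 (d (n + 1) ω)) j ⁻¹' sets j
              ∩ ⋂ i ∈ s, (fun n ω => min 3 (d (n + 1) ω)) i ⁻¹' sets i) := by
            rw [Finset.set_biInter_insert]
        _ = μ ((fun n ω => min 3 (d (n + 1) ω)) j ⁻¹' sets j)
              * μ (⋂ i ∈ s, (fun n ω => min 3 (d (n + 1) ω)) i ⁻¹' sets i) := hpair
        _ = μ ((fun n ω => min 3 (d (n + 1) ω)) j ⁻¹' sets j)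
              * ∏ i ∈ s, μ ((fun n ω => min 3 (d (n + 1) ω)) i ⁻¹' sets i) := by rw [ih]
        _ = ∏ i ∈ insert j s, μ ((fun n ω => min 3 (d (n + 1) ω)) i ⁻¹' sets i) := by
            rw [Finset.prod_insert hjs]
  · intro n hn
    obtain ⟨k, rfl⟩ : ∃ k, n = k + 1 := ⟨n - 1, by omega⟩
    exact ⟨(hdist k 1).trans (by norm_num [pmf3]),
      (hdist k 2).trans (by norm_num [pmf3]),
      (hdist k 3).trans (by norm_num [pmf3])⟩
end

section
/- (Proposition 1) For the randomized Collatz chain started at any positive odd integer x, almost surely limsup_{n→∞} X_n = ∞. -/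
namespace Stmt7Aux

/-- One step of the randomized Collatz map. -/
def step (m e : ℕ) : ℕ := (3 * m + e) / 2 ^ padicValNat 2 (3 * m + e)

/-- Trajectory as a function of the noise sequence. -/
def traj (x : ℕ) (v : ℕ → ℕ) : ℕ → ℕ
  | 0 => x
  | n+1 => step (traj x v n) (v (n+1))

lemma traj_congr (x : ℕ) (v w : ℕ → ℕ) (n : ℕ) (h : ∀ i, 1 ≤ i → i ≤ n → v i = w i) :
    traj x v n = traj x w n := by
  induction n with
  | zero => rfl
  | succ n ih =>
    have h1 : traj x v n = traj x w n := ih fun i h1 h2 => h i h1 (h2.trans (Nat.le_succ n))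
    simp only [traj, h1, h (n+1) (by omega) le_rfl]

lemma step_eq_ord_compl (m e : ℕ) : step m e = ordCompl[2] (3 * m + e) := by
  rw [step, Nat.factorization_def _ Nat.prime_two]

lemma step_odd (m e : ℕ) (he : 0 < e) : Odd (step m e) := by
  have hy : 3 * m + e ≠ 0 := by omega
  have h := Nat.not_dvd_ordCompl Nat.prime_two hy
  rw [step_eq_ord_compl]
  rw [Nat.odd_iff]
  omega

lemma step_pos (m e : ℕ) (he : 0 < e) : 0 < step m e := by
  rw [step_eq_ord_compl]
  exact Nat.ordCompl_pos 2 (by omega)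

lemma padicValNat_eq_one_of_mod (y : ℕ) (h : y % 4 = 2) : padicValNat 2 y = 1 := by
  have hy : y ≠ 0 := by omega
  have h1 : 2 ^ padicValNat 2 y ∣ y := pow_padicValNat_dvd
  have h2 : ¬ 2 ^ (padicValNat 2 y + 1) ∣ y :=
    @pow_succ_padicValNat_not_dvd 2 y ⟨Nat.prime_two⟩ hy
  by_contra hne
  rcases Nat.lt_or_ge (padicValNat 2 y) 1 with hlt | hge
  · interval_cases h' : padicValNat 2 y
    · simp at h1 h2; omega
  · have : (2:ℕ) ^ 2 ∣ y := dvd_trans (pow_dvd_pow 2 (by omega)) h1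
    omega

lemma step_ge (m e : ℕ) (hm : 0 < m) (he : 0 < e) (h : (3 * m + e) % 4 = 2) :
    m + 1 ≤ step m e := by
  rw [step, padicValNat_eq_one_of_mod _ h, pow_one]
  have : 2 * (m + 1) ≤ 3 * m + e := by omega
  omega

open MeasureTheory ProbabilityTheory Set

variable {Ω : Type*}

lemma traj_odd (x : ℕ) (hx : Odd x) (v : ℕ → ℕ) (hv : ∀ i, 0 < v i) (n : ℕ) :
    Odd (traj x v n) := by
  cases n with
  | zero => exact hx
  | succ n => exact step_odd _ _ (hv (n+1))

lemma traj_pos (x : ℕ) (hx : 0 < x) (v : ℕ → ℕ) (hv : ∀ i, 0 < v i) (n : ℕ) :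
    0 < traj x v n := by
  cases n with
  | zero => exact hx
  | succ n => exact step_pos _ _ (hv (n+1))

/-- The tuple of the first `n+1` noise variables. -/
def tup (ξ : ℕ → Ω → ℕ) (n : ℕ) : Ω → ((Finset.range (n+1) : Finset ℕ) → ℕ) :=
  fun ω i => ξ i ω

/-- `E` is determined by the noise variables with index `≤ n`. -/
def det (ξ : ℕ → Ω → ℕ) (n : ℕ) (E : Set Ω) : Prop :=
  ∃ S : Set ((Finset.range (n+1) : Finset ℕ) → ℕ), E = tup ξ n ⁻¹' S

/-- Extend a finite tuple to a full sequence by zeros. -/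
def ext' (n : ℕ) (u : (Finset.range (n+1) : Finset ℕ) → ℕ) : ℕ → ℕ :=
  fun i => if h : i ∈ Finset.range (n+1) then u ⟨i, h⟩ else 0

/-- The event that step `n → n+1` of the chain is a "good" (growth) step. -/
def good (ξ : ℕ → Ω → ℕ) (x : ℕ) (n : ℕ) : Set Ω :=
  {ω | (3 * traj x (fun i => ξ i ω) n + ξ (n+1) ω) % 4 = 2}

/-- The event that all steps from `a` to `a+t` are good. -/
def runSet (ξ : ℕ → Ω → ℕ) (x : ℕ) (a t : ℕ) : Set Ω :=
  ⋂ j ∈ Finset.range t, good ξ x (a + j)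

section Meas

variable [MeasurableSpace Ω]

lemma measurable_tup {ξ : ℕ → Ω → ℕ} (hξmeas : ∀ n, Measurable (ξ n)) (n : ℕ) :
    Measurable (tup ξ n) :=
  measurable_pi_lambda _ fun i => hξmeas i

lemma det.measurableSet {ξ : ℕ → Ω → ℕ} (hξmeas : ∀ n, Measurable (ξ n)) {n : ℕ}
    {E : Set Ω} (hE : det ξ n E) : MeasurableSet E := by
  obtain ⟨S, rfl⟩ := hE
  exact measurable_tup hξmeas n .of_discrete

end Meas

lemma det_mono {ξ : ℕ → Ω → ℕ} {n m : ℕ} (hnm : n ≤ m) {E : Set Ω} (hE : det ξ n E) :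
    det ξ m E := by
  obtain ⟨S, rfl⟩ := hE
  refine ⟨(fun (u : (Finset.range (m+1) : Finset ℕ) → ℕ)
      (i : (Finset.range (n+1) : Finset ℕ)) =>
        u ⟨(i : ℕ), Finset.mem_range.mpr (lt_of_lt_of_le (Finset.mem_range.mp i.2) (by omega))⟩)
      ⁻¹' S, ?_⟩
  rfl

lemma det_univ (ξ : ℕ → Ω → ℕ) (n : ℕ) : det ξ n Set.univ :=
  ⟨Set.univ, rfl⟩

lemma det.inter {ξ : ℕ → Ω → ℕ} {n : ℕ} {E F : Set Ω} (hE : det ξ n E) (hF : det ξ n F) :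
    det ξ n (E ∩ F) := by
  obtain ⟨S, rfl⟩ := hE
  obtain ⟨S', rfl⟩ := hF
  exact ⟨S ∩ S', rfl⟩

lemma det.compl {ξ : ℕ → Ω → ℕ} {n : ℕ} {E : Set Ω} (hE : det ξ n E) : det ξ n Eᶜ := by
  obtain ⟨S, rfl⟩ := hE
  exact ⟨Sᶜ, rfl⟩

lemma traj_ext' (ξ : ℕ → Ω → ℕ) (x : ℕ) {n m : ℕ} (hnm : n ≤ m) (ω : Ω) :
    traj x (ext' m (tup ξ m ω)) n = traj x (fun i => ξ i ω) n := by
  refine traj_congr x _ _ n fun i h1 h2 => ?_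
  have hi : i ∈ Finset.range (m+1) := Finset.mem_range.mpr (by omega)
  simp [ext', hi, tup]

lemma det_good (ξ : ℕ → Ω → ℕ) (x : ℕ) (n : ℕ) : det ξ (n+1) (good ξ x n) := by
  refine ⟨{u | (3 * traj x (ext' (n+1) u) n
      + u ⟨n+1, Finset.mem_range.mpr (by omega)⟩) % 4 = 2}, ?_⟩
  ext ω
  simp only [good, Set.mem_setOf_eq, Set.mem_preimage, traj_ext' ξ x (Nat.le_succ n) ω]
  rfl

lemma runSet_succ (ξ : ℕ → Ω → ℕ) (x : ℕ) (a t : ℕ) :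
    runSet ξ x a (t+1) = runSet ξ x a t ∩ good ξ x (a + t) := by
  simp [runSet, Finset.range_add_one, Set.iInter_comm, Set.inter_comm]

lemma det_runSet (ξ : ℕ → Ω → ℕ) (x : ℕ) (a t : ℕ) : det ξ (a + t) (runSet ξ x a t) := by
  induction t with
  | zero => simpa [runSet] using det_univ ξ a
  | succ t ih =>
    rw [runSet_succ]
    exact (det_mono (by omega) ih).inter (by simpa [Nat.add_assoc] using det_good ξ x (a + t))


section Prob
variable [MeasurableSpace Ω]

lemma half (μ : Measure Ω) (ξ : ℕ → Ω → ℕ)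
    (hξval : ∀ n ω, ξ n ω = 1 ∨ ξ n ω = 3 ∨ ξ n ω = 5 ∨ ξ n ω = 7)
    (hξmeas : ∀ n, Measurable (ξ n))
    (hξdist : ∀ n, μ {ω | ξ n ω = 1} = 1/4 ∧ μ {ω | ξ n ω = 3} = 1/4 ∧
      μ {ω | ξ n ω = 5} = 1/4 ∧ μ {ω | ξ n ω = 7} = 1/4)
    (m : ℕ) {r : ℕ} (hr : r = 1 ∨ r = 3) :
    μ {ω | ξ m ω % 4 = r} = 2⁻¹ := by
  have hset : {ω | ξ m ω % 4 = r} = {ω | ξ m ω = r} ∪ {ω | ξ m ω = r + 4} := by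
    ext ω
    rcases hξval m ω with h|h|h|h <;> rcases hr with hr|hr <;>
      simp only [Set.mem_setOf_eq, Set.mem_union, h, hr] <;> decide
  have hdisj : Disjoint {ω | ξ m ω = r} {ω | ξ m ω = r + 4} :=
    Set.disjoint_left.mpr fun ω h1 h2 => by
      simp only [Set.mem_setOf_eq] at h1 h2; omega
  have hms : MeasurableSet {ω | ξ m ω = r + 4} := (hξmeas m) (measurableSet_singleton (r+4))
  rw [hset, measure_union hdisj hms]
  obtain ⟨h1, h3, h5, h7⟩ := hξdist m
  rcases hr with hr|hr <;> subst hr <;>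
    simp only [show (1:ℕ)+4 = 5 from rfl, show (3:ℕ)+4 = 7 from rfl, h1, h3, h5, h7] <;>
    rw [ENNReal.div_add_div_same, one_add_one_eq_two, ENNReal.div_eq_inv_mul,
      show (4:ENNReal) = 2*2 by norm_num,
      ENNReal.mul_inv (by norm_num) (by norm_num), mul_assoc,
      ENNReal.inv_mul_cancel (by norm_num) (by norm_num), mul_one]


lemma key (μ : Measure Ω) [IsProbabilityMeasure μ] (ξ : ℕ → Ω → ℕ)
    (hξval : ∀ n ω, ξ n ω = 1 ∨ ξ n ω = 3 ∨ ξ n ω = 5 ∨ ξ n ω = 7)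
    (hξmeas : ∀ n, Measurable (ξ n))
    (hξindep : ProbabilityTheory.iIndepFun ξ μ)
    (hξdist : ∀ n, μ {ω | ξ n ω = 1} = 1/4 ∧ μ {ω | ξ n ω = 3} = 1/4 ∧
      μ {ω | ξ n ω = 5} = 1/4 ∧ μ {ω | ξ n ω = 7} = 1/4)
    (x : ℕ) (hx : Odd x) (n : ℕ) {E : Set Ω} (hE : det ξ n E) :
    μ (E ∩ good ξ x n) = μ E * 2⁻¹ := by
  obtain ⟨S, rfl⟩ := hE
  set c : ((Finset.range (n+1) : Finset ℕ) → ℕ) → ℕ :=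
    fun u => if (3 * traj x (ext' n u) n + 1) % 4 = 2 then 1 else 3 with hc
  set S1 : Set ((Finset.range (n+1) : Finset ℕ) → ℕ) := S ∩ {u | c u = 1} with hS1
  set S3 : Set ((Finset.range (n+1) : Finset ℕ) → ℕ) := S ∩ {u | c u = 3} with hS3
  have hξpos : ∀ ω i, 0 < ξ i ω := fun ω i => by rcases hξval i ω with h|h|h|h <;> omega
  -- decomposition of the event
  have hdecomp : tup ξ n ⁻¹' S ∩ good ξ x n
      = (tup ξ n ⁻¹' S1 ∩ {ω | ξ (n+1) ω % 4 = 1})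
        ∪ (tup ξ n ⁻¹' S3 ∩ {ω | ξ (n+1) ω % 4 = 3}) := by
    ext ω
    have hodd : (traj x (fun i => ξ i ω) n) % 2 = 1 :=
      Nat.odd_iff.mp (traj_odd x hx _ (hξpos ω) n)
    have htr : traj x (ext' n (tup ξ n ω)) n = traj x (fun i => ξ i ω) n :=
      traj_ext' ξ x le_rfl ω
    by_cases hS : tup ξ n ω ∈ S
    · simp only [Set.mem_inter_iff, Set.mem_union, Set.mem_preimage, Set.mem_setOf_eq,
        good, hS1, hS3, hc, Set.mem_inter_iff, Set.mem_setOf_eq, hS, true_and, htr]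
      rcases hξval (n+1) ω with h|h|h|h <;> rw [h] <;> split_ifs <;> omega
    · simp only [Set.mem_inter_iff, Set.mem_union, Set.mem_preimage, hS1, hS3,
        Set.mem_inter_iff, hS, false_and, and_false, or_self, iff_false]
  -- independence step
  have hkey_r : ∀ (S' : Set ((Finset.range (n+1) : Finset ℕ) → ℕ)) (r : ℕ), r = 1 ∨ r = 3 →
      μ (tup ξ n ⁻¹' S' ∩ {ω | ξ (n+1) ω % 4 = r}) = μ (tup ξ n ⁻¹' S') * 2⁻¹ := by
    intro S' r hr
    have hdisj : Disjoint (Finset.range (n+1)) ({n+1} : Finset ℕ) := by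
      simp [Finset.disjoint_left]
      omega
    have hindep := hξindep.indepFun_finset (Finset.range (n+1)) {n+1} hdisj hξmeas
    have h2 : {ω | ξ (n+1) ω % 4 = r} =
        (fun ω (i : ({n+1} : Finset ℕ)) => ξ i ω) ⁻¹'
          {u | u ⟨n+1, Finset.mem_singleton_self _⟩ % 4 = r} := rfl
    rw [h2]
    unfold tup
    rw [hindep.measure_inter_preimage_eq_mul S' _ .of_discrete .of_discrete, ← h2,
      half μ ξ hξval hξmeas hξdist (n+1) hr]
  -- pieces measurability / disjointness
  have hmeasmod : ∀ r : ℕ, MeasurableSet {ω | ξ (n+1) ω % 4 = r} := fun r =>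
    ((Measurable.of_discrete (f := fun k : ℕ => k % 4)).comp (hξmeas (n+1)))
      (measurableSet_singleton r)
  have hmS : ∀ S' : Set ((Finset.range (n+1) : Finset ℕ) → ℕ),
      MeasurableSet (tup ξ n ⁻¹' S') := fun S' => (measurable_tup hξmeas n) .of_discrete
  have hdisj2 : Disjoint (tup ξ n ⁻¹' S1 ∩ {ω | ξ (n+1) ω % 4 = 1})
      (tup ξ n ⁻¹' S3 ∩ {ω | ξ (n+1) ω % 4 = 3}) := by
    refine Set.disjoint_left.mpr fun ω h1 h2 => ?_
    have := h1.2
    have := h2.2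
    simp only [Set.mem_setOf_eq] at *
    omega
  have hdisj13 : Disjoint (tup ξ n ⁻¹' S1) (tup ξ n ⁻¹' S3) := by
    refine Set.disjoint_left.mpr fun ω h1 h2 => ?_
    have h1' : c (tup ξ n ω) = 1 := h1.2
    have h2' : c (tup ξ n ω) = 3 := h2.2
    omega
  rw [hdecomp, measure_union hdisj2 ((hmS S3).inter (hmeasmod 3)),
    hkey_r S1 1 (Or.inl rfl), hkey_r S3 3 (Or.inr rfl), ← add_mul,
    ← measure_union hdisj13 (hmS S3), ← Set.preimage_union]
  have hU : S1 ∪ S3 = S := by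
    ext u
    by_cases h : (3 * traj x (ext' n u) n + 1) % 4 = 2 <;> simp [hS1, hS3, hc, h]
  rw [hU]

lemma run_measure (μ : Measure Ω) [IsProbabilityMeasure μ] (ξ : ℕ → Ω → ℕ)
    (hξval : ∀ n ω, ξ n ω = 1 ∨ ξ n ω = 3 ∨ ξ n ω = 5 ∨ ξ n ω = 7)
    (hξmeas : ∀ n, Measurable (ξ n))
    (hξindep : ProbabilityTheory.iIndepFun ξ μ)
    (hξdist : ∀ n, μ {ω | ξ n ω = 1} = 1/4 ∧ μ {ω | ξ n ω = 3} = 1/4 ∧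
      μ {ω | ξ n ω = 5} = 1/4 ∧ μ {ω | ξ n ω = 7} = 1/4)
    (x : ℕ) (hx : Odd x) (a t : ℕ) {E : Set Ω} (hE : det ξ a E) :
    μ (E ∩ runSet ξ x a t) = μ E * 2⁻¹ ^ t := by
  induction t with
  | zero => simp [runSet]
  | succ t ih =>
    rw [runSet_succ, ← Set.inter_assoc,
      key μ ξ hξval hξmeas hξindep hξdist x hx (a+t)
        ((det_mono (Nat.le_add_right a t) hE).inter (det_runSet ξ x a t)),
      ih, pow_succ, mul_assoc]

lemma bad_null (μ : Measure Ω) [IsProbabilityMeasure μ] (ξ : ℕ → Ω → ℕ)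
    (hξval : ∀ n ω, ξ n ω = 1 ∨ ξ n ω = 3 ∨ ξ n ω = 5 ∨ ξ n ω = 7)
    (hξmeas : ∀ n, Measurable (ξ n))
    (hξindep : ProbabilityTheory.iIndepFun ξ μ)
    (hξdist : ∀ n, μ {ω | ξ n ω = 1} = 1/4 ∧ μ {ω | ξ n ω = 3} = 1/4 ∧
      μ {ω | ξ n ω = 5} = 1/4 ∧ μ {ω | ξ n ω = 7} = 1/4)
    (x : ℕ) (hx : Odd x) (L a : ℕ) :
    μ (⋂ k : ℕ, (runSet ξ x ((a+k)*L) L)ᶜ) = 0 := by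
  set E : ℕ → Set Ω := fun j => ⋂ k ∈ Finset.range j, (runSet ξ x ((a+k)*L) L)ᶜ with hEdef
  have hdetE : ∀ j : ℕ, det ξ ((a+j)*L) (E j) := by
    intro j
    induction j with
    | zero => simpa [hEdef] using det_univ ξ (a*L)
    | succ j ihj =>
      have h1 : E (j+1) = E j ∩ (runSet ξ x ((a+j)*L) L)ᶜ := by
        simp only [hEdef, Finset.range_add_one]
        ext ω
        simp only [Set.mem_iInter, Finset.mem_insert, Set.mem_inter_iff, Set.mem_compl_iff,
          Finset.mem_range]
        constructor
        · intro h
          exact ⟨fun k hk => h k (Or.inr hk), h j (Or.inl rfl)⟩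
        · rintro ⟨h, hj⟩ k (rfl | hk)
          · exact hj
          · exact h k hk
      rw [h1]
      have h2 : det ξ ((a+(j+1))*L) (runSet ξ x ((a+j)*L) L) := by
        have := det_runSet ξ x ((a+j)*L) L
        exact det_mono (le_of_eq (by ring)) this
      exact (det_mono (Nat.mul_le_mul_right L (by omega)) ihj).inter h2.compl
  have hbound : ∀ j : ℕ, μ (E j) ≤ (1 - 2⁻¹ ^ L) ^ j := by
    intro j
    induction j with
    | zero => simp [hEdef]
    | succ j ihj =>
      have h1 : E (j+1) = E j \ (E j ∩ runSet ξ x ((a+j)*L) L) := by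
        simp only [hEdef, Finset.range_add_one]
        ext ω
        simp only [Set.mem_iInter, Finset.mem_insert, Set.mem_diff, Set.mem_inter_iff,
          Set.mem_compl_iff]
        constructor
        · intro h
          refine ⟨fun k hk => h k (Or.inr hk), fun hc => (h j (Or.inl rfl)) hc.2⟩
        · rintro ⟨h, hni⟩ k hk
          rcases hk with rfl | hk
          · exact fun hr => hni ⟨fun i hi => h i hi, hr⟩
          · exact h k hk
      have hrm : μ (E j ∩ runSet ξ x ((a+j)*L) L) = μ (E j) * 2⁻¹ ^ L :=
        run_measure μ ξ hξval hξmeas hξindep hξdist x hx _ L (hdetE j)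
      have hms : MeasurableSet (E j ∩ runSet ξ x ((a+j)*L) L) :=
        ((det_mono (Nat.le_add_right _ L) (hdetE j)).inter
          (det_runSet ξ x ((a+j)*L) L)).measurableSet hξmeas
      rw [h1, measure_diff Set.inter_subset_left hms.nullMeasurableSet
        (measure_ne_top μ _), hrm]
      have heq : μ (E j) - μ (E j) * 2⁻¹ ^ L = (1 - 2⁻¹ ^ L) * μ (E j) := by
        rw [ENNReal.sub_mul (fun _ _ => measure_ne_top μ _), one_mul, mul_comm]
      rw [heq, pow_succ, mul_comm ((1 - 2⁻¹ ^ L) ^ j) _]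
      exact mul_le_mul_right ihj _
  have hsub : ∀ j : ℕ, (⋂ k : ℕ, (runSet ξ x ((a+k)*L) L)ᶜ) ⊆ E j := by
    intro j ω hω
    simp only [hEdef, Set.mem_iInter]
    intro k _
    exact Set.mem_iInter.mp hω k
  have hq1 : (1 - 2⁻¹ ^ L : ENNReal) < 1 := by
    by_cases hL : L = 0
    · subst hL; simp
    apply ENNReal.sub_lt_self ENNReal.one_ne_top one_ne_zero
    exact pow_ne_zero L (by norm_num)
  have htend := ENNReal.tendsto_pow_atTop_nhds_zero_of_lt_one hq1
  have hle : μ (⋂ k : ℕ, (runSet ξ x ((a+k)*L) L)ᶜ) ≤ 0 :=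
    ge_of_tendsto' htend fun j => le_trans (measure_mono (hsub j)) (hbound j)
  exact le_antisymm hle zero_le

end Prob

end Stmt7Aux



/-- (Proposition 1) For the randomized Collatz chain started at any positive odd integer
`x`, almost surely `limsup Xₙ = ∞`. -/
theorem stmt_7
    {Ω : Type*} [MeasurableSpace Ω] (μ : MeasureTheory.Measure Ω)
    [MeasureTheory.IsProbabilityMeasure μ]
    (ξ : ℕ → Ω → ℕ)
    (hξval : ∀ n ω, ξ n ω = 1 ∨ ξ n ω = 3 ∨ ξ n ω = 5 ∨ ξ n ω = 7)
    (hξmeas : ∀ n, Measurable (ξ n))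
    (hξindep : ProbabilityTheory.iIndepFun ξ μ)
    (hξdist : ∀ n, μ {ω | ξ n ω = 1} = 1/4 ∧ μ {ω | ξ n ω = 3} = 1/4 ∧
      μ {ω | ξ n ω = 5} = 1/4 ∧ μ {ω | ξ n ω = 7} = 1/4)
    (x : ℕ) (hx : Odd x) (hxpos : 0 < x)
    (X : ℕ → Ω → ℕ)
    (hX0 : ∀ ω, X 0 ω = x)
    (hXrec : ∀ n ω, X (n + 1) ω =
      (3 * X n ω + ξ (n + 1) ω) / 2 ^ padicValNat 2 (3 * X n ω + ξ (n + 1) ω))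
    (d : ℕ → Ω → ℕ)
    (hd : ∀ n ω, d (n + 1) ω = padicValNat 2 (3 * X n ω + ξ (n + 1) ω)) :
    ∀ᵐ ω ∂μ, Filter.limsup (fun n => (X n ω : ENNReal)) Filter.atTop = ⊤ := by
  classical
  have hξpos : ∀ (ω : Ω) (i : ℕ), 0 < ξ i ω := fun ω i => by
    rcases hξval i ω with h|h|h|h <;> omega
  have hXg : ∀ n (ω : Ω), X n ω = Stmt7Aux.traj x (fun i => ξ i ω) n := by
    intro n
    induction n with
    | zero => intro ω; exact hX0 ω
    | succ n ih =>
      intro ω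
      rw [hXrec n ω, ih ω]
      rfl
  have hXpos : ∀ n (ω : Ω), 0 < X n ω := fun n ω => by
    rw [hXg n ω]; exact Stmt7Aux.traj_pos x hxpos _ (hξpos ω) n
  -- growth along good runs
  have hgrow : ∀ a t (ω : Ω), ω ∈ Stmt7Aux.runSet ξ x a t → X a ω + t ≤ X (a+t) ω := by
    intro a t
    induction t with
    | zero => intro ω _; simp
    | succ t ih =>
      intro ω hω
      rw [Stmt7Aux.runSet_succ] at hω
      have h1 := ih ω hω.1
      have hg : (3 * X (a+t) ω + ξ (a+t+1) ω) % 4 = 2 := by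
        have := hω.2
        simpa only [Stmt7Aux.good, Set.mem_setOf_eq, ← hXg] using this
      have h2 : X (a+t) ω + 1 ≤ X (a+t+1) ω := by
        rw [hXrec (a+t) ω]
        exact Stmt7Aux.step_ge _ _ (hXpos (a+t) ω) (hξpos ω (a+t+1)) hg
      show X a ω + (t + 1) ≤ X (a + t + 1) ω
      omega
  -- the bad event
  set Bad : Set Ω :=
    ⋃ (l : ℕ) (a : ℕ), ⋂ k : ℕ, (Stmt7Aux.runSet ξ x ((a+k)*(l+1)) (l+1))ᶜ with hBad
  have hBadNull : μ Bad = 0 :=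
    MeasureTheory.measure_iUnion_null fun l => MeasureTheory.measure_iUnion_null fun a =>
      Stmt7Aux.bad_null μ ξ hξval hξmeas hξindep hξdist x hx (l+1) a
  -- pointwise conclusion off the bad event
  have hconc : ∀ ω, ω ∉ Bad →
      Filter.limsup (fun n => (X n ω : ENNReal)) Filter.atTop = ⊤ := by
    intro ω hω
    have hrun : ∀ l a : ℕ, ∃ k : ℕ, ω ∈ Stmt7Aux.runSet ξ x ((a+k)*(l+1)) (l+1) := by
      intro l a
      by_contra hcon
      push_neg at hcon
      exact hω (Set.mem_iUnion.mpr ⟨l, Set.mem_iUnion.mpr ⟨a,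
        Set.mem_iInter.mpr fun k => hcon k⟩⟩)
    refine top_unique ?_
    rw [Filter.limsup_eq_iInf_iSup_of_nat]
    refine le_iInf fun n => ?_
    rw [← ENNReal.iSup_natCast]
    refine iSup_le fun l => ?_
    obtain ⟨k, hk⟩ := hrun l n
    set s := (n+k)*(l+1) with hs
    have hXbig : X s ω + (l+1) ≤ X (s + (l+1)) ω := hgrow s (l+1) ω hk
    have hXval : (l : ℕ) < X (s + (l+1)) ω := by
      have := hXpos s ω
      omega
    have hge : n ≤ s + (l+1) := by
      have : n + k ≤ (n+k)*(l+1) := Nat.le_mul_of_pos_right _ (by omega)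
      omega
    refine le_trans ?_ (le_iSup₂ (s + (l+1)) hge)
    exact_mod_cast Nat.cast_le.mpr (le_of_lt hXval)
  -- conclude almost everywhere
  rw [MeasureTheory.ae_iff]
  refine le_antisymm (le_trans (MeasureTheory.measure_mono ?_) hBadNull.le) zero_le
  intro ω hω
  by_contra hB
  exact hω (hconc ω hB)
end

section
/- For the randomized Collatz chain started at any positive odd integer x, let M > 1 be fixed and let N_1 := inf{ n ≥ 0 : ln X_n ≥ M }. Then there exists α_0 > 0 such that E[e^{α N_1}] < ∞ for all α < α_0; in particular N_1 < ∞ almost surely and E[N_1] < ∞. -/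
set_option linter.unusedSectionVars false
set_option maxHeartbeats 1000000

open scoped ENNReal NNReal

namespace Stmt10Aux

open MeasureTheory ProbabilityTheory

variable {Ω : Type*} [MeasurableSpace Ω]

/-- Tuple of the first `n` noise variables. -/
def tup (ξ : ℕ → Ω → ℕ) (n : ℕ) : Ω → (↥(Finset.range n) → ℕ) :=
  fun ω i => ξ i ω

/-- `E` is determined by the first `n` noise variables. -/
def DetBy (ξ : ℕ → Ω → ℕ) (n : ℕ) (E : Set Ω) : Prop :=
  ∃ B, E = tup ξ n ⁻¹' B

/-- `f` factors through the first `n` noise variables. -/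
def FacBy (ξ : ℕ → Ω → ℕ) (n : ℕ) (f : Ω → ℕ) : Prop :=
  ∃ F : (↥(Finset.range n) → ℕ) → ℕ, ∀ ω, f ω = F (tup ξ n ω)

variable {ξ : ℕ → Ω → ℕ} {n m : ℕ} {E E' : Set Ω} {f g : Ω → ℕ}

lemma tup_measurable (hξ : ∀ i, Measurable (ξ i)) (n : ℕ) : Measurable (tup ξ n) :=
  measurable_pi_lambda _ fun i => hξ i

lemma DetBy.measurableSet (hξ : ∀ i, Measurable (ξ i)) (h : DetBy ξ n E) :
    MeasurableSet E := by
  obtain ⟨B, rfl⟩ := h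
  exact tup_measurable hξ n (Set.to_countable B).measurableSet

lemma DetBy.mono (h : DetBy ξ n E) (hnm : n ≤ m) : DetBy ξ m E := by
  obtain ⟨B, rfl⟩ := h
  refine ⟨(fun (v : ↥(Finset.range m) → ℕ)
      (i : ↥(Finset.range n)) =>
        v ⟨i, Finset.mem_range.mpr (lt_of_lt_of_le (Finset.mem_range.mp i.2) hnm)⟩) ⁻¹' B, ?_⟩
  rfl

lemma FacBy.mono (h : FacBy ξ n f) (hnm : n ≤ m) : FacBy ξ m f := by
  obtain ⟨F, hF⟩ := h
  exact ⟨fun v => F (fun i =>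
    v ⟨i, Finset.mem_range.mpr (lt_of_lt_of_le (Finset.mem_range.mp i.2) hnm)⟩), fun ω => hF ω⟩

lemma facBy_const (c : ℕ) : FacBy ξ n (fun _ => c) := ⟨fun _ => c, fun _ => rfl⟩

lemma facBy_coord {i : ℕ} (hi : i < n) : FacBy ξ n (ξ i) :=
  ⟨fun v => v ⟨i, Finset.mem_range.mpr hi⟩, fun _ => rfl⟩

lemma FacBy.comp2 (h : ℕ → ℕ → ℕ) (hf : FacBy ξ n f) (hg : FacBy ξ n g) :
    FacBy ξ n (fun ω => h (f ω) (g ω)) := by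
  obtain ⟨F, hF⟩ := hf; obtain ⟨G, hG⟩ := hg
  exact ⟨fun v => h (F v) (G v), fun ω => by simp [hF ω, hG ω]⟩

lemma detBy_rel (P : ℕ → ℕ → Prop) (hf : FacBy ξ n f) (hg : FacBy ξ n g) :
    DetBy ξ n {ω | P (f ω) (g ω)} := by
  obtain ⟨F, hF⟩ := hf; obtain ⟨G, hG⟩ := hg
  refine ⟨{v | P (F v) (G v)}, ?_⟩
  ext ω; simp [hF ω, hG ω]

lemma detBy_prop (P : ℕ → Prop) (hf : FacBy ξ n f) : DetBy ξ n {ω | P (f ω)} :=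
  detBy_rel (fun a _ => P a) hf hf

lemma detBy_univ : DetBy ξ n (Set.univ) := ⟨Set.univ, by simp⟩

lemma DetBy.compl (h : DetBy ξ n E) : DetBy ξ n Eᶜ := by
  obtain ⟨B, rfl⟩ := h; exact ⟨Bᶜ, by simp⟩

lemma DetBy.inter (h : DetBy ξ n E) (h' : DetBy ξ n E') : DetBy ξ n (E ∩ E') := by
  obtain ⟨B, rfl⟩ := h; obtain ⟨B', rfl⟩ := h'; exact ⟨B ∩ B', by simp⟩

lemma detBy_biInter_range {f : ℕ → Set Ω} {m : ℕ} (h : ∀ j < m, DetBy ξ n (f j)) :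
    DetBy ξ n (⋂ j ∈ Finset.range m, f j) := by
  induction m with
  | zero => simpa using detBy_univ
  | succ m ih =>
    rw [Finset.range_add_one, Finset.set_biInter_insert]
    exact (h m (Nat.lt_succ_self m)).inter (ih fun j hj => h j (hj.trans (Nat.lt_succ_self m)))

/-- Key independence fact: an event determined by `ξ 0, …, ξ n` is independent of any
event defined from `ξ (n+1)`. -/
lemma key_indep (μ : Measure Ω) (hξmeas : ∀ i, Measurable (ξ i))
    (hξindep : ProbabilityTheory.iIndepFun ξ μ)
    (hE : DetBy ξ (n + 1) E) (s : Set ℕ) :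
    μ (E ∩ ξ (n + 1) ⁻¹' s) = μ E * μ (ξ (n + 1) ⁻¹' s) := by
  obtain ⟨B, rfl⟩ := hE
  have hdisj : Disjoint (Finset.range (n + 1)) ({n + 1} : Finset ℕ) := by
    simp [Finset.disjoint_singleton_right]
  have hind := hξindep.indepFun_finset (Finset.range (n + 1)) {n + 1} hdisj hξmeas
  have key := hind.measure_inter_preimage_eq_mul (s := B)
    (t := {v : ↥({n + 1} : Finset ℕ) → ℕ | v ⟨n + 1, Finset.mem_singleton_self _⟩ ∈ s})
    (Set.to_countable _).measurableSet (Set.to_countable _).measurableSet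
  have h2 : (fun a (i : ↥({n + 1} : Finset ℕ)) => ξ i a) ⁻¹'
      {v : ↥({n + 1} : Finset ℕ) → ℕ | v ⟨n + 1, Finset.mem_singleton_self _⟩ ∈ s}
      = ξ (n + 1) ⁻¹' s := rfl
  rw [h2] at key
  exact key

lemma quarter_add_quarter : (1 / 4 : ℝ≥0∞) + 1 / 4 = 1 / 2 := by
  rw [ENNReal.div_add_div_same]
  rw [ENNReal.div_eq_div_iff (by norm_num) (by norm_num) (by norm_num) (by norm_num)]
  norm_num

lemma padic_two_eq_one {s : ℕ} (h : s % 4 = 2) : padicValNat 2 s = 1 := by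
  haveI : Fact (Nat.Prime 2) := ⟨Nat.prime_two⟩
  have hs0 : 0 < s := by omega
  have h2 : 2 ∣ s := by omega
  have h1 : 1 ≤ padicValNat 2 s := one_le_padicValNat_of_dvd hs0.ne' h2
  by_contra hne
  have h2le : 2 ≤ padicValNat 2 s := by omega
  have h4 : (2 : ℕ) ^ 2 ∣ s := dvd_trans (pow_dvd_pow 2 h2le) pow_padicValNat_dvd
  norm_num at h4
  omega

/-- "Good" step event. -/
def Gset (ξ X : ℕ → Ω → ℕ) (i : ℕ) : Set Ω := {ω | (3 * X i ω + ξ (i + 1) ω) % 4 = 2}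

/-- Good block of `k` consecutive good steps starting at `j*k`. -/
def Bset (ξ X : ℕ → Ω → ℕ) (k j : ℕ) : Set Ω := ⋂ t ∈ Finset.range k, Gset ξ X (j * k + t)

/-- No good block among the first `m` blocks. -/
def Eset (ξ X : ℕ → Ω → ℕ) (k m : ℕ) : Set Ω := ⋂ j ∈ Finset.range m, (Bset ξ X k j)ᶜ

/-- `log Xⱼ < M` for all `j ≤ n`. -/
def Cset (X : ℕ → Ω → ℕ) (M : ℝ) (n : ℕ) : Set Ω :=
  ⋂ j ∈ Finset.range (n + 1), {ω | ¬ M ≤ Real.log (X j ω)}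

end Stmt10Aux

open Stmt10Aux MeasureTheory ProbabilityTheory in
/-- For the randomized Collatz chain started at a positive odd integer `x`, with `M > 1`
and `N₁ := inf {n ≥ 0 : ln Xₙ ≥ M}`, there exists `α₀ > 0` with `E[exp (α N₁)] < ∞` for
all `α < α₀`; in particular `N₁ < ∞` a.s. and `E[N₁] < ∞`. -/
theorem stmt_10
    {Ω : Type*} [MeasurableSpace Ω] (μ : MeasureTheory.Measure Ω)
    [MeasureTheory.IsProbabilityMeasure μ]
    (ξ : ℕ → Ω → ℕ)
    (hξval : ∀ n ω, ξ n ω = 1 ∨ ξ n ω = 3 ∨ ξ n ω = 5 ∨ ξ n ω = 7)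
    (hξmeas : ∀ n, Measurable (ξ n))
    (hξindep : ProbabilityTheory.iIndepFun ξ μ)
    (hξdist : ∀ n, μ {ω | ξ n ω = 1} = 1/4 ∧ μ {ω | ξ n ω = 3} = 1/4 ∧
      μ {ω | ξ n ω = 5} = 1/4 ∧ μ {ω | ξ n ω = 7} = 1/4)
    (x : ℕ) (hx : Odd x) (hxpos : 0 < x)
    (X : ℕ → Ω → ℕ)
    (hX0 : ∀ ω, X 0 ω = x)
    (hXrec : ∀ n ω, X (n + 1) ω =
      (3 * X n ω + ξ (n + 1) ω) / 2 ^ padicValNat 2 (3 * X n ω + ξ (n + 1) ω))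
    (d : ℕ → Ω → ℕ)
    (hd : ∀ n ω, d (n + 1) ω = padicValNat 2 (3 * X n ω + ξ (n + 1) ω))
    (M : ℝ) (hM : 1 < M)
    (N₁ : Ω → ℕ∞)
    (hN₁ : ∀ ω, N₁ ω = ⨅ (n : ℕ) (_ : M ≤ Real.log (X n ω)), (n : ℕ∞)) :
    (∃ α₀ > (0 : ℝ), ∀ α : ℝ, α < α₀ →
      ∫⁻ ω, ENNReal.ofReal (Real.exp (α * (N₁ ω).toNat)) ∂μ < ⊤) ∧
    (∀ᵐ ω ∂μ, N₁ ω < ⊤) ∧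
    ∫⁻ ω, (N₁ ω : ENNReal) ∂μ < ⊤ := by
  -- positivity and oddness of the chain
  have hXposodd : ∀ n ω, 0 < X n ω ∧ Odd (X n ω) := by
    intro n
    induction n with
    | zero => intro ω; rw [hX0]; exact ⟨hxpos, hx⟩
    | succ n ih =>
      intro ω
      have hs0 : 3 * X n ω + ξ (n + 1) ω ≠ 0 := by
        rcases hξval (n + 1) ω with h | h | h | h <;> omega
      have hfac : padicValNat 2 (3 * X n ω + ξ (n + 1) ω)
          = (3 * X n ω + ξ (n + 1) ω).factorization 2 :=
        (Nat.factorization_def _ Nat.prime_two).symm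
      rw [hXrec, hfac]
      constructor
      · exact Nat.ordCompl_pos 2 hs0
      · have hnd := Nat.not_dvd_ordCompl Nat.prime_two hs0
        rcases Nat.even_or_odd ((3 * X n ω + ξ (n + 1) ω) / 2 ^ (3 * X n ω + ξ (n + 1) ω).factorization 2) with he | ho
        · exact absurd he.two_dvd hnd
        · exact ho
  -- good step: value doubles relation
  have hstep2 : ∀ i ω, ω ∈ Gset ξ X i →
      2 * X (i + 1) ω = 3 * X i ω + ξ (i + 1) ω := by
    intro i ω h
    have h' : (3 * X i ω + ξ (i + 1) ω) % 4 = 2 := h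
    rw [hXrec, padic_two_eq_one h', pow_one]
    exact Nat.mul_div_cancel' (by omega)
  -- X n factors through the noise
  have hXfac : ∀ n, FacBy ξ (n + 1) (X n) := by
    intro n
    induction n with
    | zero => exact ⟨fun _ => x, fun ω => hX0 ω⟩
    | succ n ih =>
      have h1 : FacBy ξ (n + 2) (X n) := ih.mono (by omega)
      have h2 : FacBy ξ (n + 2) (ξ (n + 1)) := facBy_coord (by omega)
      obtain ⟨F, hF⟩ :=
        h1.comp2 (fun a b => (3 * a + b) / 2 ^ padicValNat 2 (3 * a + b)) (hg := h2)
      exact ⟨F, fun ω => by rw [hXrec]; exact hF ω⟩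
  have hGdet : ∀ i, DetBy ξ (i + 2) (Gset ξ X i) := by
    intro i
    have h1 : FacBy ξ (i + 2) (X i) := (hXfac i).mono (by omega)
    have h2 : FacBy ξ (i + 2) (ξ (i + 1)) := facBy_coord (by omega)
    exact detBy_rel (fun a b => (3 * a + b) % 4 = 2) h1 h2
  -- single-step probability recursion
  have hμhalf : ∀ i (r : ℕ), r = 1 ∨ r = 3 →
      μ (ξ (i + 1) ⁻¹' {v | v % 4 = r}) = 1 / 2 := by
    intro i r hr
    obtain ⟨hd1, hd3, hd5, hd7⟩ := hξdist (i + 1)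
    have hm : ∀ c : ℕ, MeasurableSet {ω | ξ (i + 1) ω = c} := fun c =>
      hξmeas (i + 1) (measurableSet_singleton c)
    rcases hr with rfl | rfl
    · have hset : ξ (i + 1) ⁻¹' {v | v % 4 = 1}
          = {ω | ξ (i + 1) ω = 1} ∪ {ω | ξ (i + 1) ω = 5} := by
        ext ω; rcases hξval (i + 1) ω with h | h | h | h <;> simp [h]
      have hdisj : Disjoint {ω | ξ (i + 1) ω = 1} {ω | ξ (i + 1) ω = 5} := by
        rw [Set.disjoint_left]; intro ω h1 h5; simp only [Set.mem_setOf_eq] at h1 h5; omega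
      rw [hset, measure_union hdisj (hm 5), hd1, hd5]
      exact quarter_add_quarter
    · have hset : ξ (i + 1) ⁻¹' {v | v % 4 = 3}
          = {ω | ξ (i + 1) ω = 3} ∪ {ω | ξ (i + 1) ω = 7} := by
        ext ω; rcases hξval (i + 1) ω with h | h | h | h <;> simp [h]
      have hdisj : Disjoint {ω | ξ (i + 1) ω = 3} {ω | ξ (i + 1) ω = 7} := by
        rw [Set.disjoint_left]; intro ω h1 h5; simp only [Set.mem_setOf_eq] at h1 h5; omega
      rw [hset, measure_union hdisj (hm 7), hd3, hd7]
      exact quarter_add_quarter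
  have hstepP : ∀ (i : ℕ) (E : Set Ω), DetBy ξ (i + 1) E →
      μ (E ∩ Gset ξ X i) = μ E * (1 / 2) := by
    intro i E hE
    have hXodd4 : ∀ ω, X i ω % 4 = 1 ∨ X i ω % 4 = 3 := by
      intro ω
      have := (hXposodd i ω).2
      rw [Nat.odd_iff] at this
      omega
    have hE1 : DetBy ξ (i + 1) (E ∩ {ω | X i ω % 4 = 1}) :=
      hE.inter (detBy_prop (fun a => a % 4 = 1) (hXfac i))
    have hE3 : DetBy ξ (i + 1) (E ∩ {ω | X i ω % 4 = 3}) :=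
      hE.inter (detBy_prop (fun a => a % 4 = 3) (hXfac i))
    have hsplit : E ∩ Gset ξ X i
        = ((E ∩ {ω | X i ω % 4 = 1}) ∩ ξ (i + 1) ⁻¹' {v | v % 4 = 3})
          ∪ ((E ∩ {ω | X i ω % 4 = 3}) ∩ ξ (i + 1) ⁻¹' {v | v % 4 = 1}) := by
      ext ω
      by_cases hEω : ω ∈ E
      · rcases hXodd4 ω with ha | ha <;> rcases hξval (i + 1) ω with hb | hb | hb | hb <;>
          simp [Gset, hEω, ha, hb, Nat.add_mod, Nat.mul_mod] <;> omega
      · simp [hEω]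
    have hdisj : Disjoint
        ((E ∩ {ω | X i ω % 4 = 1}) ∩ ξ (i + 1) ⁻¹' {v | v % 4 = 3})
        ((E ∩ {ω | X i ω % 4 = 3}) ∩ ξ (i + 1) ⁻¹' {v | v % 4 = 1}) := by
      rw [Set.disjoint_left]
      rintro ω ⟨⟨-, h1⟩, -⟩ ⟨⟨-, h3⟩, -⟩
      simp only [Set.mem_setOf_eq] at h1 h3
      omega
    have hmeas2 : MeasurableSet
        ((E ∩ {ω | X i ω % 4 = 3}) ∩ ξ (i + 1) ⁻¹' {v | v % 4 = 1}) :=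
      (hE3.measurableSet hξmeas).inter (hξmeas (i + 1) (Set.to_countable _).measurableSet)
    rw [hsplit, measure_union hdisj hmeas2,
      key_indep μ hξmeas hξindep hE1 _, key_indep μ hξmeas hξindep hE3 _,
      hμhalf i 3 (Or.inr rfl), hμhalf i 1 (Or.inl rfl), ← add_mul]
    congr 1
    have hmeas3 : MeasurableSet (E ∩ {ω | X i ω % 4 = 3}) := hE3.measurableSet hξmeas
    have hdisj13 : Disjoint (E ∩ {ω | X i ω % 4 = 1}) (E ∩ {ω | X i ω % 4 = 3}) := by
      rw [Set.disjoint_left]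
      rintro ω ⟨-, h1⟩ ⟨-, h3⟩
      simp only [Set.mem_setOf_eq] at h1 h3
      omega
    rw [← measure_union hdisj13 hmeas3]
    congr 1
    ext ω
    by_cases hEω : ω ∈ E
    · rcases hXodd4 ω with ha | ha <;> simp [hEω, ha]
    · simp [hEω]
  -- choice of k
  have hl32 : 0 < Real.log (3 / 2) := Real.log_pos (by norm_num)
  set k : ℕ := max 1 ⌈M / Real.log (3 / 2)⌉₊ with hkdef
  have hk1 : 1 ≤ k := le_max_left _ _
  have hk0 : 0 < k := hk1
  have hkM : M ≤ (k : ℝ) * Real.log (3 / 2) := by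
    have h1 : M / Real.log (3 / 2) ≤ (⌈M / Real.log (3 / 2)⌉₊ : ℝ) := Nat.le_ceil _
    have h2 : (⌈M / Real.log (3 / 2)⌉₊ : ℝ) ≤ (k : ℝ) := by
      exact_mod_cast Nat.cast_le.mpr (le_max_right _ _)
    calc M = (M / Real.log (3 / 2)) * Real.log (3 / 2) := by field_simp
      _ ≤ (k : ℝ) * Real.log (3 / 2) := by
        apply mul_le_mul_of_nonneg_right (h1.trans h2) hl32.le
  -- growth on consecutive good steps
  have hgrow : ∀ (n c : ℕ) ω, (∀ t, t < c → ω ∈ Gset ξ X (n + t)) →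
      3 ^ c * X n ω ≤ 2 ^ c * X (n + c) ω := by
    intro n c
    induction c with
    | zero => intro ω _; simp
    | succ c ih =>
      intro ω h
      have h1 := ih ω (fun t ht => h t (by omega))
      have h2 : 2 * X (n + c + 1) ω = 3 * X (n + c) ω + ξ (n + c + 1) ω :=
        hstep2 (n + c) ω (h c (by omega))
      have h3 : 3 * X (n + c) ω ≤ 2 * X (n + c + 1) ω := by
        rcases hξval (n + c + 1) ω with hb | hb | hb | hb <;> omega
      calc 3 ^ (c + 1) * X n ω = 3 * (3 ^ c * X n ω) := by ring
        _ ≤ 3 * (2 ^ c * X (n + c) ω) := Nat.mul_le_mul_left _ h1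
        _ = 2 ^ c * (3 * X (n + c) ω) := by ring
        _ ≤ 2 ^ c * (2 * X (n + c + 1) ω) := Nat.mul_le_mul_left _ h3
        _ = 2 ^ (c + 1) * X (n + c + 1) ω := by ring
  have hBlog : ∀ j ω, ω ∈ Bset ξ X k j → M ≤ Real.log (X (j * k + k) ω) := by
    intro j ω hω
    simp only [Bset, Set.mem_iInter, Finset.mem_range] at hω
    have hg : 3 ^ k * X (j * k) ω ≤ 2 ^ k * X (j * k + k) ω :=
      hgrow (j * k) k ω (fun t ht => hω t ht)
    have hx1 : 1 ≤ X (j * k) ω := (hXposodd _ ω).1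
    have h3 : (3 : ℝ) ^ k ≤ (2 : ℝ) ^ k * (X (j * k + k) ω : ℝ) := by
      have hnat : 3 ^ k * 1 ≤ 2 ^ k * X (j * k + k) ω :=
        le_trans (Nat.mul_le_mul_left _ hx1) hg
      calc (3 : ℝ) ^ k = ((3 ^ k * 1 : ℕ) : ℝ) := by push_cast; ring
        _ ≤ ((2 ^ k * X (j * k + k) ω : ℕ) : ℝ) := by exact_mod_cast hnat
        _ = (2 : ℝ) ^ k * (X (j * k + k) ω : ℝ) := by push_cast; ring
    have hreal : (3 / 2 : ℝ) ^ k ≤ (X (j * k + k) ω : ℝ) := by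
      rw [div_pow, div_le_iff₀ (by positivity)]
      linarith
    calc M ≤ (k : ℝ) * Real.log (3 / 2) := hkM
      _ = Real.log ((3 / 2 : ℝ) ^ k) := by rw [Real.log_pow]
      _ ≤ Real.log (X (j * k + k) ω) := Real.log_le_log (by positivity) hreal
  -- N₁ basics
  have hN₁le : ∀ (n : ℕ) ω, M ≤ Real.log (X n ω) → N₁ ω ≤ (n : ℕ∞) := by
    intro n ω h
    rw [hN₁]
    exact iInf₂_le n h
  have hCiff : ∀ (n : ℕ) ω, ω ∈ Cset X M n ↔ ¬ N₁ ω ≤ (n : ℕ∞) := by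
    intro n ω
    simp only [Cset, Set.mem_iInter, Set.mem_setOf_eq, Finset.mem_range]
    constructor
    · intro h hle
      have hiInf : ((n : ℕ∞) + 1) ≤ N₁ ω := by
        rw [hN₁]
        refine le_iInf₂ fun j hj => ?_
        have hjn : n < j := by
          by_contra hc
          push_neg at hc
          exact h j (by omega) hj
        have : ((n + 1 : ℕ) : ℕ∞) ≤ (j : ℕ∞) := by exact_mod_cast hjn
        simpa using this
      have := hiInf.trans hle
      have h2 : ((n : ℕ∞) + 1) ≤ (n : ℕ∞) → False := by
        intro hcon
        have : ((n + 1 : ℕ) : ℕ∞) ≤ ((n : ℕ) : ℕ∞) := by push_cast; exact hcon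
        have : n + 1 ≤ n := by exact_mod_cast this
        omega
      exact h2 this
    · intro h j hj hM'
      exact h ((hN₁le j ω hM').trans (by exact_mod_cast Nat.le_of_lt_succ hj))
  have hCdet : ∀ n : ℕ, DetBy ξ (n + 1) (Cset X M n) := by
    intro n
    exact detBy_biInter_range fun j hj =>
      detBy_prop (fun a => ¬ M ≤ Real.log a) ((hXfac j).mono (by omega))
  have hEdet : ∀ m : ℕ, DetBy ξ (m * k + 1) (Eset ξ X k m) := by
    intro m
    refine detBy_biInter_range fun j hj => DetBy.compl ?_
    refine detBy_biInter_range fun t ht => (hGdet (j * k + t)).mono ?_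
    have h1 : (j + 1) * k ≤ m * k := Nat.mul_le_mul_right k hj
    have h2 : (j + 1) * k = j * k + k := by ring
    omega
  -- block probability recursion
  have hrec : ∀ (m s : ℕ), s ≤ k →
      μ (Eset ξ X k m ∩ ⋂ t ∈ Finset.range s, Gset ξ X (m * k + t))
        = μ (Eset ξ X k m) * (1 / 2) ^ s := by
    intro m s
    induction s with
    | zero => intro _; simp
    | succ s ih =>
      intro hs
      have hdetA : DetBy ξ (m * k + s + 1)
          (Eset ξ X k m ∩ ⋂ t ∈ Finset.range s, Gset ξ X (m * k + t)) := by
        refine ((hEdet m).mono (by omega)).inter ?_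
        exact detBy_biInter_range fun t ht => (hGdet (m * k + t)).mono (by omega)
      have hsplit : Eset ξ X k m ∩ ⋂ t ∈ Finset.range (s + 1), Gset ξ X (m * k + t)
          = (Eset ξ X k m ∩ ⋂ t ∈ Finset.range s, Gset ξ X (m * k + t))
            ∩ Gset ξ X (m * k + s) := by
        rw [Finset.range_add_one, Finset.set_biInter_insert]
        ext ω
        simp only [Set.mem_inter_iff, Set.mem_iInter]
        tauto
      rw [hsplit, hstepP (m * k + s) _ hdetA, ih (by omega), pow_succ, mul_assoc]
  have hEq : ∀ m : ℕ, μ (Eset ξ X k (m + 1))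
      = μ (Eset ξ X k m) * (1 - (1 / 2 : ℝ≥0∞) ^ k) := by
    intro m
    have hBdet : DetBy ξ (m * k + k + 1) (Bset ξ X k m) :=
      detBy_biInter_range fun t ht => (hGdet (m * k + t)).mono (by omega)
    have hBmeas := hBdet.measurableSet hξmeas
    have h2 : μ (Eset ξ X k m ∩ Bset ξ X k m) + μ (Eset ξ X k m \ Bset ξ X k m)
        = μ (Eset ξ X k m) := measure_inter_add_diff _ hBmeas
    have h3 : μ (Eset ξ X k m ∩ Bset ξ X k m) = μ (Eset ξ X k m) * (1 / 2) ^ k :=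
      hrec m k le_rfl
    have h4 : Eset ξ X k m \ Bset ξ X k m = Eset ξ X k (m + 1) := by
      simp only [Eset, Finset.range_add_one, Finset.set_biInter_insert, Set.diff_eq]
      exact Set.inter_comm _ _
    have hle : (1 / 2 : ℝ≥0∞) ^ k ≤ 1 := pow_le_one' (by norm_num) k
    have hfin : μ (Eset ξ X k m) * (1 / 2 : ℝ≥0∞) ^ k ≠ ⊤ :=
      ENNReal.mul_ne_top (measure_ne_top μ _) (ne_top_of_le_ne_top ENNReal.one_ne_top hle)
    have hsum : μ (Eset ξ X k m) * (1 / 2) ^ k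
        + μ (Eset ξ X k m) * (1 - (1 / 2 : ℝ≥0∞) ^ k) = μ (Eset ξ X k m) := by
      rw [← mul_add, add_comm, tsub_add_cancel_of_le hle, mul_one]
    have key : μ (Eset ξ X k m) * (1 / 2) ^ k + μ (Eset ξ X k (m + 1))
        = μ (Eset ξ X k m) * (1 / 2) ^ k
          + μ (Eset ξ X k m) * (1 - (1 / 2 : ℝ≥0∞) ^ k) := by
      rw [hsum, ← h3, ← h4]
      exact h2
    exact (ENNReal.add_right_inj hfin).mp key
  have hEbound : ∀ m : ℕ, μ (Eset ξ X k m) ≤ (1 - (1 / 2 : ℝ≥0∞) ^ k) ^ m := by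
    intro m
    induction m with
    | zero => simp [Eset]
    | succ m ih =>
      rw [hEq m, pow_succ]
      exact mul_le_mul' ih le_rfl
  have hCsub : ∀ m : ℕ, Cset X M (m * k) ⊆ Eset ξ X k m := by
    intro m ω hω
    simp only [Eset, Set.mem_iInter, Finset.mem_range, Set.mem_compl_iff]
    intro j hj hB
    have hlog := hBlog j ω hB
    simp only [Cset, Set.mem_iInter, Set.mem_setOf_eq, Finset.mem_range] at hω
    have hjk : j * k + k ≤ m * k := by
      have : (j + 1) * k ≤ m * k := Nat.mul_le_mul_right k hj
      have h2 : (j + 1) * k = j * k + k := by ring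
      omega
    exact hω (j * k + k) (by omega) hlog
  have hCbound : ∀ m : ℕ, μ (Cset X M (m * k)) ≤ (1 - (1 / 2 : ℝ≥0∞) ^ k) ^ m :=
    fun m => (measure_mono (hCsub m)).trans (hEbound m)
  -- a.s. finiteness
  have hq1 : (1 - (1 / 2 : ℝ≥0∞) ^ k) < 1 :=
    ENNReal.sub_lt_self ENNReal.one_ne_top one_ne_zero
      (pow_ne_zero k (by norm_num))
  have hTsub : ∀ m : ℕ, {ω | ¬ N₁ ω < ⊤} ⊆ Cset X M (m * k) := by
    intro m ω hω
    simp only [Set.mem_setOf_eq, not_lt, top_le_iff] at hω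
    refine (hCiff (m * k) ω).mpr ?_
    rw [hω]
    intro hc
    exact absurd (top_le_iff.mp hc) (ENat.coe_ne_top _)
  have hT0 : μ {ω | ¬ N₁ ω < ⊤} = 0 := by
    have hbound : ∀ m : ℕ, μ {ω | ¬ N₁ ω < ⊤} ≤ (1 - (1 / 2 : ℝ≥0∞) ^ k) ^ m :=
      fun m => (measure_mono (hTsub m)).trans (hCbound m)
    have htend := ENNReal.tendsto_pow_atTop_nhds_zero_of_lt_one hq1
    exact le_antisymm (ge_of_tendsto htend (Filter.Eventually.of_forall hbound)) zero_le
  have hae : ∀ᵐ ω ∂μ, N₁ ω < ⊤ := by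
    rw [MeasureTheory.ae_iff]
    exact hT0
  -- the real-valued decay rate
  set qr : ℝ := 1 - (1 / 2 : ℝ) ^ k with hqrdef
  have hqr_pos : 0 < qr := by
    have : (1 / 2 : ℝ) ^ k < 1 := pow_lt_one₀ (by norm_num) (by norm_num) (by omega)
    simp only [hqrdef]; linarith
  have hqr_lt1 : qr < 1 := by
    have : (0 : ℝ) < (1 / 2 : ℝ) ^ k := by positivity
    simp only [hqrdef]; linarith
  have hq_eq : (1 - (1 / 2 : ℝ≥0∞) ^ k) = ENNReal.ofReal qr := by
    rw [hqrdef, ENNReal.ofReal_sub _ (by positivity), ENNReal.ofReal_one,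
      ENNReal.ofReal_pow (by norm_num)]
    congr 2
    rw [ENNReal.ofReal_div_of_pos (by norm_num), ENNReal.ofReal_one, ENNReal.ofReal_ofNat]
  set α₀ : ℝ := Real.log (1 / qr) / k with hα₀def
  have hα₀pos : 0 < α₀ := by
    apply div_pos (Real.log_pos (by rw [lt_div_iff₀ hqr_pos]; linarith)) (by exact_mod_cast hk0)
  -- the main exponential integrability
  have hCmeas : ∀ n : ℕ, MeasurableSet (Cset X M n) :=
    fun n => (hCdet n).measurableSet hξmeas
  have hmain : ∀ α : ℝ, 0 ≤ α → α < α₀ →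
      ∫⁻ ω, ENNReal.ofReal (Real.exp (α * (N₁ ω).toNat)) ∂μ < ⊤ := by
    intro α hα hαlt
    have hkRpos : (0 : ℝ) < (k : ℝ) := by exact_mod_cast hk0
    have hrq : ENNReal.ofReal (Real.exp (α * k)) * (1 - (1 / 2 : ℝ≥0∞) ^ k) < 1 := by
      rw [hq_eq, ← ENNReal.ofReal_mul (Real.exp_nonneg _)]
      have h1 : α * k < Real.log (1 / qr) := (lt_div_iff₀ hkRpos).mp hαlt
      have h2 : Real.exp (α * k) < 1 / qr := by
        rw [← Real.exp_log (show (0 : ℝ) < 1 / qr by positivity)]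
        exact Real.exp_lt_exp.mpr h1
      have h3 : Real.exp (α * k) * qr < 1 := by
        calc Real.exp (α * k) * qr < (1 / qr) * qr := mul_lt_mul_of_pos_right h2 hqr_pos
          _ = 1 := by field_simp
      calc ENNReal.ofReal (Real.exp (α * k) * qr) < ENNReal.ofReal 1 :=
            (ENNReal.ofReal_lt_ofReal_iff (by norm_num)).mpr h3
        _ = 1 := ENNReal.ofReal_one
    have hpt : ∀ ω, ENNReal.ofReal (Real.exp (α * (N₁ ω).toNat)) ≤
        ENNReal.ofReal (Real.exp (α * k)) + ∑' m : ℕ, Set.indicator (Cset X M (m * k))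
          (fun _ => ENNReal.ofReal (Real.exp (α * (((m : ℝ) + 2) * (k : ℝ))))) ω := by
      intro ω
      rcases Nat.lt_or_ge ((N₁ ω).toNat) k with h | h
      · refine le_trans ?_ le_self_add
        apply ENNReal.ofReal_le_ofReal
        apply Real.exp_le_exp.mpr
        apply mul_le_mul_of_nonneg_left _ hα
        exact_mod_cast h.le
      · set t := (N₁ ω).toNat with htdef
        set m := t / k - 1 with hmdef
        have hd1 : 1 ≤ t / k := (Nat.one_le_div_iff hk0).mpr h
        have hmk : (m + 1) * k ≤ t := by
          have h1 : t / k * k ≤ t := Nat.div_mul_le_self t k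
          have h2 : m + 1 = t / k := by omega
          rw [h2]; exact h1
        have hup : t < (m + 2) * k := by
          have h1 : t < (t / k + 1) * k := by
            calc t = k * (t / k) + t % k := (Nat.div_add_mod t k).symm
              _ < k * (t / k) + k := by have := Nat.mod_lt t hk0; omega
              _ = (t / k + 1) * k := by ring
          have h2 : m + 2 = t / k + 1 := by omega
          rw [h2]; exact h1
        have hfin : N₁ ω ≠ ⊤ := by
          intro hc
          have ht0 : t = 0 := by rw [htdef, hc]; rfl
          omega
        have hNt : N₁ ω = (t : ℕ∞) := by rw [htdef]; exact (ENat.coe_toNat hfin).symm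
        have hmem : ω ∈ Cset X M (m * k) := by
          apply (hCiff (m * k) ω).mpr
          rw [hNt]
          intro hle
          have hle' : t ≤ m * k := by exact_mod_cast hle
          have h2 : (m + 1) * k = m * k + k := by ring
          omega
        have hterm : Set.indicator (Cset X M (m * k))
            (fun _ => ENNReal.ofReal (Real.exp (α * (((m : ℝ) + 2) * (k : ℝ))))) ω
            = ENNReal.ofReal (Real.exp (α * (((m : ℝ) + 2) * (k : ℝ)))) :=
          Set.indicator_of_mem hmem _
        have hval : ENNReal.ofReal (Real.exp (α * t)) ≤
            ENNReal.ofReal (Real.exp (α * (((m : ℝ) + 2) * (k : ℝ)))) := by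
          apply ENNReal.ofReal_le_ofReal
          apply Real.exp_le_exp.mpr
          apply mul_le_mul_of_nonneg_left _ hα
          exact_mod_cast hup.le
        refine le_trans hval (le_trans ?_ le_add_self)
        rw [← hterm]
        exact ENNReal.le_tsum m
    have hcm : ∀ m : ℕ, ENNReal.ofReal (Real.exp (α * (((m : ℝ) + 2) * (k : ℝ))))
        = ENNReal.ofReal (Real.exp (α * k * 2)) * (ENNReal.ofReal (Real.exp (α * k))) ^ m := by
      intro m
      rw [← ENNReal.ofReal_pow (Real.exp_nonneg _), ← ENNReal.ofReal_mul (Real.exp_nonneg _),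
        ← Real.exp_nat_mul, ← Real.exp_add]
      congr 1
      push_cast
      ring
    calc ∫⁻ ω, ENNReal.ofReal (Real.exp (α * (N₁ ω).toNat)) ∂μ
        ≤ ∫⁻ ω, (ENNReal.ofReal (Real.exp (α * k)) + ∑' m : ℕ,
            Set.indicator (Cset X M (m * k))
            (fun _ => ENNReal.ofReal (Real.exp (α * (((m : ℝ) + 2) * (k : ℝ))))) ω) ∂μ :=
          lintegral_mono hpt
      _ = ENNReal.ofReal (Real.exp (α * k)) * μ Set.univ + ∫⁻ ω, (∑' m : ℕ,
            Set.indicator (Cset X M (m * k))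
            (fun _ => ENNReal.ofReal (Real.exp (α * (((m : ℝ) + 2) * (k : ℝ))))) ω) ∂μ := by
          rw [lintegral_add_left measurable_const, lintegral_const]
      _ = ENNReal.ofReal (Real.exp (α * k)) + ∑' m : ℕ,
            ENNReal.ofReal (Real.exp (α * (((m : ℝ) + 2) * (k : ℝ)))) * μ (Cset X M (m * k)) := by
          rw [measure_univ, mul_one, lintegral_tsum (fun m =>
            (measurable_const.indicator (hCmeas (m * k))).aemeasurable)]
          congr 1
          refine tsum_congr fun m => ?_
          rw [lintegral_indicator_const (hCmeas (m * k))]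
      _ ≤ ENNReal.ofReal (Real.exp (α * k)) + ∑' m : ℕ,
            ENNReal.ofReal (Real.exp (α * k * 2)) *
              (ENNReal.ofReal (Real.exp (α * k)) * (1 - (1 / 2 : ℝ≥0∞) ^ k)) ^ m := by
          refine add_le_add_right (ENNReal.tsum_le_tsum fun m => ?_) _
          rw [hcm m, mul_pow, mul_assoc]
          exact mul_le_mul_right (mul_le_mul_right (hCbound m) _) _
      _ = ENNReal.ofReal (Real.exp (α * k)) + ENNReal.ofReal (Real.exp (α * k * 2)) *
            (1 - ENNReal.ofReal (Real.exp (α * k)) * (1 - (1 / 2 : ℝ≥0∞) ^ k))⁻¹ := by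
          rw [ENNReal.tsum_mul_left, ENNReal.tsum_geometric]
      _ < ⊤ := by
          apply ENNReal.add_lt_top.mpr
          constructor
          · exact ENNReal.ofReal_lt_top
          · exact ENNReal.mul_lt_top ENNReal.ofReal_lt_top
              (ENNReal.inv_lt_top.mpr (tsub_pos_iff_lt.mpr hrq))
  refine ⟨⟨α₀, hα₀pos, fun α hαlt => ?_⟩, hae, ?_⟩
  · rcases le_or_gt 0 α with hα | hα
    · exact hmain α hα hαlt
    · calc ∫⁻ ω, ENNReal.ofReal (Real.exp (α * (N₁ ω).toNat)) ∂μ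
          ≤ ∫⁻ _, (1 : ℝ≥0∞) ∂μ := by
            refine lintegral_mono fun ω => ?_
            rw [← ENNReal.ofReal_one]
            apply ENNReal.ofReal_le_ofReal
            apply Real.exp_le_one_iff.mpr
            have : (0 : ℝ) ≤ ((N₁ ω).toNat : ℝ) := Nat.cast_nonneg _
            nlinarith
        _ = 1 := by simp
        _ < ⊤ := ENNReal.one_lt_top
  · have hint := hmain (α₀ / 2) (by positivity) (by linarith)
    have hα₀ne : α₀ ≠ 0 := ne_of_gt hα₀pos
    have hmono : ∀ᵐ ω ∂μ, (N₁ ω : ℝ≥0∞) ≤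
        ENNReal.ofReal (2 / α₀) * ENNReal.ofReal (Real.exp ((α₀ / 2) * (N₁ ω).toNat)) := by
      filter_upwards [hae] with ω hω
      have hNt : N₁ ω = (((N₁ ω).toNat : ℕ) : ℕ∞) := (ENat.coe_toNat hω.ne).symm
      set t := (N₁ ω).toNat with htdef
      have h1 : (t : ℝ) ≤ (2 / α₀) * Real.exp ((α₀ / 2) * t) := by
        have h2 : (α₀ / 2) * t ≤ Real.exp ((α₀ / 2) * t) := by
          have := Real.add_one_le_exp ((α₀ / 2) * t)
          linarith
        have h3 := mul_le_mul_of_nonneg_left h2 (le_of_lt (by positivity : (0 : ℝ) < 2 / α₀))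
        calc (t : ℝ) = (2 / α₀) * ((α₀ / 2) * t) := by
              field_simp
          _ ≤ _ := h3
      calc (N₁ ω : ℝ≥0∞) = ((t : ℕ∞) : ℝ≥0∞) := by rw [hNt]
        _ = ((t : ℕ) : ℝ≥0∞) := ENat.toENNReal_coe t
        _ = ENNReal.ofReal (t : ℝ) := (ENNReal.ofReal_natCast t).symm
        _ ≤ ENNReal.ofReal ((2 / α₀) * Real.exp ((α₀ / 2) * t)) := ENNReal.ofReal_le_ofReal h1
        _ = ENNReal.ofReal (2 / α₀) * ENNReal.ofReal (Real.exp ((α₀ / 2) * t)) :=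
            ENNReal.ofReal_mul (by positivity)
    calc ∫⁻ ω, (N₁ ω : ℝ≥0∞) ∂μ
        ≤ ∫⁻ ω, ENNReal.ofReal (2 / α₀) *
            ENNReal.ofReal (Real.exp ((α₀ / 2) * (N₁ ω).toNat)) ∂μ := lintegral_mono_ae hmono
      _ = ENNReal.ofReal (2 / α₀) *
            ∫⁻ ω, ENNReal.ofReal (Real.exp ((α₀ / 2) * (N₁ ω).toNat)) ∂μ :=
          lintegral_const_mul' _ _ ENNReal.ofReal_ne_top
      _ < ⊤ := ENNReal.mul_lt_top ENNReal.ofReal_lt_top hint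
end

section
/- For the randomized Collatz chain started at any positive odd integer x, let M > 1 satisfy ln(1 + (7/3)·e^{−M}) < (1/4)·ln(128/81). Then almost surely X_n < e^M for infinitely many n; that is, P( X_n ∈ O_M infinitely often ) = 1, where O_M denotes the (finite) set of positive odd integers less than e^M. -/
open MeasureTheory
open scoped ENNReal NNReal


lemma val_two_of_two_mod_four (q : ℕ) : padicValNat 2 (4*q+2) = 1 := by
  have h : 4*q+2 = 2 * (2*q+1) := by ring
  rw [h, padicValNat.mul two_ne_zero (by omega), padicValNat.self one_lt_two,
    padicValNat.eq_zero_of_not_dvd (by omega)]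

lemma val_two_of_four_mod_eight (q : ℕ) : padicValNat 2 (8*q+4) = 2 := by
  have h : 8*q+4 = 2^2 * (2*q+1) := by ring
  rw [h, padicValNat.mul (by positivity) (by omega), padicValNat.prime_pow,
    padicValNat.eq_zero_of_not_dvd (by omega)]

lemma val_ge_three_of_eight_dvd (q : ℕ) : 3 ≤ padicValNat 2 (8*(q+1)) := by
  rw [← padicValNat_dvd_iff_le (by omega)]
  exact Dvd.dvd.mul_right (by norm_num) _

lemma term_le_three (s : ℝ) (hs : 0 ≤ s) {d : ℕ} (hd : 3 ≤ d) :
    (2:ℝ)^(-(s*(d:ℝ))) ≤ (2:ℝ)^(-(s*3)) := by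
  apply Real.rpow_le_rpow_of_exponent_le one_le_two
  have : (3:ℝ) ≤ (d:ℝ) := by exact_mod_cast hd
  nlinarith

lemma sum_val_le (s : ℝ) (hs : 0 ≤ s) (m : ℕ) (hm : Odd m) :
    (2:ℝ)^(-(s*(padicValNat 2 (m+1):ℝ))) + (2:ℝ)^(-(s*(padicValNat 2 (m+3):ℝ)))
      + (2:ℝ)^(-(s*(padicValNat 2 (m+5):ℝ))) + (2:ℝ)^(-(s*(padicValNat 2 (m+7):ℝ)))
      ≤ 2*(2:ℝ)^(-(s*1)) + (2:ℝ)^(-(s*2)) + (2:ℝ)^(-(s*3)) := by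
  have hr : m % 8 = 1 ∨ m % 8 = 3 ∨ m % 8 = 5 ∨ m % 8 = 7 := by
    rcases hm with ⟨t, ht⟩; omega
  obtain ⟨q, r, hqr, hrr⟩ : ∃ q r, m = 8*q + r ∧ (r = 1 ∨ r = 3 ∨ r = 5 ∨ r = 7) :=
    ⟨m / 8, m % 8, by omega, hr⟩
  subst hqr
  rcases hrr with rfl | rfl | rfl | rfl
  · have h1 : 8*q+1+1 = 4*(2*q)+2 := by ring
    have h2 : 8*q+1+3 = 8*q+4 := by ring
    have h3 : 8*q+1+5 = 4*(2*q+1)+2 := by ring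
    have h4 : 8*q+1+7 = 8*(q+1) := by ring
    rw [h1, h2, h3, h4, val_two_of_two_mod_four, val_two_of_four_mod_eight,
      val_two_of_two_mod_four]
    have := term_le_three s hs (val_ge_three_of_eight_dvd q)
    push_cast
    linarith
  · have h1 : 8*q+3+1 = 8*q+4 := by ring
    have h2 : 8*q+3+3 = 4*(2*q+1)+2 := by ring
    have h3 : 8*q+3+5 = 8*(q+1) := by ring
    have h4 : 8*q+3+7 = 4*(2*q+2)+2 := by ring
    rw [h1, h2, h3, h4, val_two_of_two_mod_four, val_two_of_four_mod_eight,
      val_two_of_two_mod_four]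
    have := term_le_three s hs (val_ge_three_of_eight_dvd q)
    push_cast
    linarith
  · have h1 : 8*q+5+1 = 4*(2*q+1)+2 := by ring
    have h2 : 8*q+5+3 = 8*(q+1) := by ring
    have h3 : 8*q+5+5 = 4*(2*q+2)+2 := by ring
    have h4 : 8*q+5+7 = 8*(q+1)+4 := by ring
    rw [h1, h2, h3, h4, val_two_of_two_mod_four, val_two_of_four_mod_eight,
      val_two_of_two_mod_four]
    have := term_le_three s hs (val_ge_three_of_eight_dvd q)
    push_cast
    linarith
  · have h1 : 8*q+7+1 = 8*(q+1) := by ring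
    have h2 : 8*q+7+3 = 4*(2*q+2)+2 := by ring
    have h3 : 8*q+7+5 = 8*(q+1)+4 := by ring
    have h4 : 8*q+7+7 = 4*(2*q+3)+2 := by ring
    rw [h1, h2, h3, h4, val_two_of_two_mod_four, val_two_of_four_mod_eight,
      val_two_of_two_mod_four]
    have := term_le_three s hs (val_ge_three_of_eight_dvd q)
    push_cast
    linarith


lemma exp_neg_le_quadratic {u : ℝ} (hu : 0 ≤ u) : Real.exp (-u) ≤ 1 - u + u^2 := by
  have h1 : u + 1 ≤ Real.exp u := Real.add_one_le_exp u
  have h2 : Real.exp (-u) * Real.exp u = 1 := by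
    rw [← Real.exp_add]; simp
  have h3 : (0:ℝ) < Real.exp u := Real.exp_pos u
  have h4 : Real.exp (-u) ≤ 1/(1+u) := by
    rw [Real.exp_neg]
    rw [inv_le_comm₀ h3 (by positivity)]
    rw [div_eq_inv_mul, mul_one, inv_inv]
    linarith
  have h5 : (1:ℝ)/(1+u) ≤ 1 - u + u^2 := by
    rw [div_le_iff₀ (by linarith)]
    nlinarith
  linarith

lemma exists_s (M : ℝ) (hM : 1 < M)
    (hM' : Real.log (1 + (7/3)*Real.exp (-M)) < (1/4)*Real.log (128/81)) :
    ∃ s : ℝ, 0 < s ∧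
      (3*(1 + (7/3)*Real.exp (-M)))^s *
        ((2*(2:ℝ)^(-(s*1)) + (2:ℝ)^(-(s*2)) + (2:ℝ)^(-(s*3)))/4) < 1 := by
  set κ₀ : ℝ := 1 + (7/3)*Real.exp (-M) with hκ₀
  have hκ₀pos : 0 < κ₀ := by positivity
  set δ : ℝ := Real.log κ₀ with hδ
  set L : ℝ := Real.log (128/81) with hL
  have hε : 0 < (1/4)*L - δ := by linarith
  set ε : ℝ := (1/4)*L - δ with hεdef
  set A : ℝ := (15/4)*(Real.log 2)^2 with hA
  have hApos : 0 ≤ A := by positivity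
  set s : ℝ := ε / (A + 1) with hs
  have hspos : 0 < s := by positivity
  refine ⟨s, hspos, ?_⟩
  have hslt : A * s < ε := by
    have e : A * s = ε * A / (A + 1) := by rw [hs]; ring
    rw [e, div_lt_iff₀ (by linarith)]
    nlinarith
  -- bound each 2^{-(s*d)}
  have hterm : ∀ d : ℝ, 0 ≤ d → (2:ℝ)^(-(s*d)) ≤ 1 - s*d*Real.log 2 + (s*d*Real.log 2)^2 := by
    intro d hd
    rw [Real.rpow_def_of_pos (by norm_num)]
    have := exp_neg_le_quadratic (u := s*d*Real.log 2)
      (by positivity)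
    calc Real.exp (Real.log 2 * -(s*d)) = Real.exp (-(s*d*Real.log 2)) := by ring_nf
      _ ≤ _ := this
  have h1 := hterm 1 zero_le_one
  have h2 := hterm 2 (by norm_num)
  have h3 := hterm 3 (by norm_num)
  have hl2 : (0:ℝ) < Real.log 2 := Real.log_pos one_lt_two
  set f4 : ℝ := (2*(2:ℝ)^(-(s*1)) + (2:ℝ)^(-(s*2)) + (2:ℝ)^(-(s*3)))/4 with hf4
  have hf4pos : 0 < f4 := by positivity
  have hf4le : f4 - 1 ≤ -(7/4)*s*Real.log 2 + A * s^2 := by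
    rw [hf4, hA]; nlinarith [sq_nonneg (s*Real.log 2)]
  have hlogf4 : Real.log f4 ≤ f4 - 1 := Real.log_le_sub_one_of_pos hf4pos
  have hlogid : Real.log 3 - (7/4)*Real.log 2 = -(1/4)*L := by
    rw [hL]
    have : (128:ℝ)/81 = (2:ℝ)^(7:ℕ) / (3:ℝ)^(4:ℕ) := by norm_num
    rw [this, Real.log_div (by positivity) (by positivity), Real.log_pow, Real.log_pow]
    push_cast; ring
  have hκpos : (0:ℝ) < 3*κ₀ := by positivity
  have hlogρ : Real.log ((3*κ₀)^s * f4) < 0 := by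
    rw [Real.log_mul (by positivity) (ne_of_gt hf4pos), Real.log_rpow hκpos,
      Real.log_mul (by norm_num) (ne_of_gt hκ₀pos)]
    have key : (δ - (1/4)*L) + A*s < 0 := by
      have h9 : A * s < (1/4)*L - δ := by rw [hεdef] at hslt; linarith
      linarith
    calc s * (Real.log 3 + δ) + Real.log f4
        ≤ s * (Real.log 3 + δ) + (f4 - 1) := by linarith
      _ ≤ s * (Real.log 3 + δ) + (-(7/4)*s*Real.log 2 + A*s^2) := by linarith
      _ = s * ((Real.log 3 - (7/4)*Real.log 2 + δ) + A*s) := by ring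
      _ = s * ((δ - (1/4)*L) + A*s) := by rw [hlogid]; ring
      _ < 0 := mul_neg_of_pos_of_neg hspos key
  have := (Real.log_neg_iff (by positivity)).mp hlogρ
  exact this

noncomputable def collatzTraj (x : ℕ) : ℕ → (ℕ → ℕ) → ℕ
  | 0, _ => x
  | n+1, f =>
    (3 * collatzTraj x n f + f (n+1)) / 2 ^ padicValNat 2 (3 * collatzTraj x n f + f (n+1))

lemma collatzTraj_congr (x : ℕ) (n : ℕ) {f g : ℕ → ℕ}
    (h : ∀ i, 1 ≤ i → i ≤ n → f i = g i) : collatzTraj x n f = collatzTraj x n g := by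
  induction n with
  | zero => rfl
  | succ n ih =>
    have hfg : f (n+1) = g (n+1) := h (n+1) (by omega) le_rfl
    have h2 := ih (fun i h1 h2 => h i h1 (by omega))
    simp only [collatzTraj, h2, hfg]

lemma odd_div_pow_padicValNat {a : ℕ} (ha : a ≠ 0) : Odd (a / 2 ^ padicValNat 2 a) := by
  have h := Nat.not_dvd_ordCompl Nat.prime_two ha
  rw [Nat.factorization_def a Nat.prime_two] at h
  rw [Nat.odd_iff]
  omega

lemma step_real_ineq (s M : ℝ) (hs : 0 < s) (hM : 0 < M) (Xn : ℕ) (v : ℕ) (hv : v ≤ 7)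
    (hXn : Real.exp M ≤ (Xn:ℝ)) :
    (((3*Xn+v) / 2^(padicValNat 2 (3*Xn+v)) : ℕ) : ℝ)^s ≤
      (3*(1+(7/3)*Real.exp (-M)))^s *
        ((Xn:ℝ)^s * (2:ℝ)^(-(s * (padicValNat 2 (3*Xn+v) : ℕ) : ℝ))) := by
  set a : ℕ := 3*Xn+v with ha
  set dd : ℕ := padicValNat 2 a with hdd
  set κ : ℝ := 3*(1+(7/3)*Real.exp (-M)) with hκ
  have hXpos : (0:ℝ) < (Xn:ℝ) := lt_of_lt_of_le (Real.exp_pos M) hXn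
  have hdvd : 2^dd ∣ a := pow_padicValNat_dvd
  have hcast : ((a / 2^dd : ℕ) : ℝ) = (a:ℝ) / ((2:ℝ)^(dd:ℕ)) := by
    rw [Nat.cast_div hdvd (by positivity)]
    push_cast; ring
  have hexp1 : Real.exp (-M) * Real.exp M = 1 := by
    rw [← Real.exp_add]; simp
  have haκ : (a:ℝ) ≤ κ * (Xn:ℝ) := by
    have hv' : (v:ℝ) ≤ 7 := by exact_mod_cast hv
    have h1 : (1:ℝ) ≤ Real.exp (-M) * (Xn:ℝ) := by
      calc (1:ℝ) = Real.exp (-M) * Real.exp M := hexp1.symm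
        _ ≤ Real.exp (-M) * (Xn:ℝ) := by
            apply mul_le_mul_of_nonneg_left hXn (le_of_lt (Real.exp_pos _))
    have : (a:ℝ) = 3*(Xn:ℝ) + v := by rw [ha]; push_cast; ring
    rw [this, hκ]
    nlinarith
  have hκpos : (0:ℝ) < κ := by rw [hκ]; positivity
  have h2pow : ((2:ℝ)^(dd:ℕ)) = (2:ℝ)^((dd:ℝ)) := by
    rw [← Real.rpow_natCast 2 dd]
  rw [hcast, Real.div_rpow (by positivity) (by positivity), h2pow]
  have hrw : ((2:ℝ)^((dd:ℝ)))^s = (2:ℝ)^((dd:ℝ)*s) := (Real.rpow_mul (by norm_num) _ _).symm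
  rw [hrw, div_eq_mul_inv, ← Real.rpow_neg (by norm_num : (0:ℝ) ≤ 2)]
  have hmain : (a:ℝ)^s ≤ κ^s * (Xn:ℝ)^s := by
    rw [← Real.mul_rpow (le_of_lt hκpos) (le_of_lt hXpos)]
    exact Real.rpow_le_rpow (Nat.cast_nonneg a) haκ (le_of_lt hs)
  have hcomm : -((dd:ℝ)*s) = -(s*(dd:ℝ)) := by ring
  rw [hcomm, ← mul_assoc]
  exact mul_le_mul_of_nonneg_right hmain (by positivity)

open ProbabilityTheory in
lemma indep_step
    {Ω : Type*} [MeasurableSpace Ω] (μ : Measure Ω) [IsProbabilityMeasure μ]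
    (ξ : ℕ → Ω → ℕ) (hξmeas : ∀ n, Measurable (ξ n))
    (hξindep : iIndepFun ξ μ)
    (n : ℕ) (Φ : ((↥(Finset.range (n+1)) → ℕ)) → ℝ≥0∞) (v : ℕ) :
    ∫⁻ ω, Φ (fun i => ξ i ω) * Set.indicator {ω' | ξ (n+1) ω' = v} 1 ω ∂μ
      = (∫⁻ ω, Φ (fun i => ξ i ω) ∂μ) * μ {ω' | ξ (n+1) ω' = v} := by
  classical
  have hW : Measurable (fun ω (i : ↥(Finset.range (n+1))) => ξ i ω) :=
    measurable_pi_lambda _ (fun i => hξmeas i)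
  have hΦ : Measurable Φ := measurable_of_countable _
  have hind0 := hξindep.indepFun_finset (Finset.range (n+1)) {n+1} (by simp) hξmeas
  set ψ : ((↥({n+1} : Finset ℕ)) → ℕ) → ℝ≥0∞ :=
    fun g => if g ⟨n+1, by simp⟩ = v then 1 else 0 with hψ
  have hψmeas : Measurable ψ := measurable_of_countable _
  have hcomp := hind0.comp hΦ hψmeas
  have heq2 : (ψ ∘ (fun ω (i : ↥({n+1} : Finset ℕ)) => ξ i ω))
      = fun ω => Set.indicator {ω' | ξ (n+1) ω' = v} 1 ω := by
    funext ω
    simp [hψ, Set.indicator_apply, Set.mem_setOf_eq]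
  have hsetmeas : MeasurableSet {ω' | ξ (n+1) ω' = v} := by
    have : {ω' | ξ (n+1) ω' = v} = ξ (n+1) ⁻¹' {v} := rfl
    rw [this]
    exact hξmeas (n+1) (Set.to_countable _).measurableSet
  have hmain := lintegral_mul_eq_lintegral_mul_lintegral_of_indepFun
    (μ := μ) (hΦ.comp hW)
    (by rw [heq2]; exact (measurable_const.indicator hsetmeas))
    hcomp
  rw [heq2] at hmain
  simp only [Pi.mul_apply, Function.comp_apply] at hmain
  rw [lintegral_indicator_one hsetmeas] at hmain
  exact hmain

lemma escape_null
    {Ω : Type*} [MeasurableSpace Ω] (μ : Measure Ω) [IsProbabilityMeasure μ]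
    (ξ : ℕ → Ω → ℕ)
    (hξval : ∀ n ω, ξ n ω = 1 ∨ ξ n ω = 3 ∨ ξ n ω = 5 ∨ ξ n ω = 7)
    (hξmeas : ∀ n, Measurable (ξ n))
    (hξindep : ProbabilityTheory.iIndepFun ξ μ)
    (hξdist : ∀ n, μ {ω | ξ n ω = 1} = 1/4 ∧ μ {ω | ξ n ω = 3} = 1/4 ∧
      μ {ω | ξ n ω = 5} = 1/4 ∧ μ {ω | ξ n ω = 7} = 1/4)
    (x : ℕ) (X : ℕ → Ω → ℕ)
    (hXmeas : ∀ n, Measurable (X n))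
    (hXodd : ∀ n ω, Odd (X n ω))
    (hXrec : ∀ n ω, X (n + 1) ω =
      (3 * X n ω + ξ (n + 1) ω) / 2 ^ padicValNat 2 (3 * X n ω + ξ (n + 1) ω))
    (hXtraj : ∀ n ω, X n ω = collatzTraj x n (fun k => ξ k ω))
    (hXbdd : ∀ n ω, X n ω ≤ (x+7)*4^n)
    (M : ℝ) (hM : 1 < M) (s : ℝ) (hs0 : 0 < s)
    (hρ : (3*(1+(7/3)*Real.exp (-M)))^s *
      ((2*(2:ℝ)^(-(s*1)) + (2:ℝ)^(-(s*2)) + (2:ℝ)^(-(s*3)))/4) < 1)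
    (N : ℕ) :
    μ {ω | ∀ k, N ≤ k → Real.exp M ≤ (X k ω : ℝ)} = 0 := by
  classical
  set κ : ℝ := 3*(1 + (7/3)*Real.exp (-M)) with hκdef
  set fsum : ℝ := 2*(2:ℝ)^(-(s*1)) + (2:ℝ)^(-(s*2)) + (2:ℝ)^(-(s*3)) with hfdef
  have hκpos : 0 < κ := by positivity
  have hfpos : 0 < fsum := by positivity
  set A : ℕ → Set Ω := fun n => {ω | ∀ k, N ≤ k → k ≤ n → Real.exp M ≤ (X k ω:ℝ)} with hA
  set G : ℕ → Ω → ℝ≥0∞ :=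
    fun n => (A n).indicator (fun ω => ENNReal.ofReal ((X n ω:ℝ)^s)) with hG
  have hcastmeas : ∀ n, Measurable (fun ω => (X n ω : ℝ)) :=
    fun n => (measurable_of_countable (fun m : ℕ => (m:ℝ))).comp (hXmeas n)
  have hAmeas : ∀ n, MeasurableSet (A n) := by
    intro n
    have : A n = ⋂ (k : ℕ), ⋂ (_ : N ≤ k ∧ k ≤ n), {ω | Real.exp M ≤ (X k ω:ℝ)} := by
      ext ω; simp only [hA, Set.mem_setOf_eq, Set.mem_iInter]
      constructor
      · intro h k hk; exact h k hk.1 hk.2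
      · intro h k h1 h2; exact h k ⟨h1, h2⟩
    rw [this]
    exact MeasurableSet.iInter fun k => MeasurableSet.iInter fun _ =>
      measurableSet_le measurable_const (hcastmeas k)
  have hGmeas : ∀ n, Measurable (G n) := by
    intro n
    exact ((measurable_of_countable (fun m : ℕ => ENNReal.ofReal ((m:ℝ)^s))).comp
      (hXmeas n)).indicator (hAmeas n)
  -- the one-step contraction
  have hexp : ∀ (h : ℕ → ℝ≥0∞), ∑ v ∈ ({1,3,5,7} : Finset ℕ), h v = h 1 + h 3 + h 5 + h 7 := by
    intro h
    rw [show ({1,3,5,7}:Finset ℕ) = insert 1 (insert 3 (insert 5 {7})) from rfl]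
    rw [Finset.sum_insert (by norm_num), Finset.sum_insert (by norm_num),
      Finset.sum_insert (by norm_num), Finset.sum_singleton]
    ring
  have step : ∀ n, N ≤ n →
      ∫⁻ ω, G (n+1) ω ∂μ ≤ ENNReal.ofReal (κ^s * (fsum/4)) * ∫⁻ ω, G n ω ∂μ := by
    intro n hn
    set extend : (↥(Finset.range (n+1)) → ℕ) → (ℕ → ℕ) :=
      fun g k => if h : k ∈ Finset.range (n+1) then g ⟨k, h⟩ else 0 with hextend
    set Φ : ℕ → (↥(Finset.range (n+1)) → ℕ) → ℝ≥0∞ := fun v =>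
      Set.indicator {g' | ∀ k, N ≤ k → k ≤ n → Real.exp M ≤ ((collatzTraj x k (extend g') : ℕ):ℝ)}
        (fun g' => ENNReal.ofReal (((collatzTraj x n (extend g') : ℕ):ℝ)^s *
          (2:ℝ)^(-(s * ((padicValNat 2 (3*collatzTraj x n (extend g') + v) : ℕ):ℝ))))) with hΦ
    set F : ℕ → Ω → ℝ≥0∞ := fun v ω => Φ v (fun i => ξ i ω) with hF
    have htraj' : ∀ (ω : Ω) k, k ≤ n →
        collatzTraj x k (extend (fun i => ξ i ω)) = X k ω := by
      intro ω k hk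
      rw [hXtraj k ω]
      apply collatzTraj_congr
      intro i h1 h2
      have hi : i ∈ Finset.range (n+1) := Finset.mem_range.mpr (by omega)
      simp only [hextend, dif_pos hi]
    have hFeval : ∀ v ω, F v ω =
        (A n).indicator (fun ω' => ENNReal.ofReal (((X n ω' : ℕ):ℝ)^s *
          (2:ℝ)^(-(s * ((padicValNat 2 (3*X n ω' + v) : ℕ):ℝ))))) ω := by
      intro v ω
      show Set.indicator _ _ _ = _
      rw [Set.indicator_apply, Set.indicator_apply]
      have hiff : ((fun i : ↥(Finset.range (n+1)) => ξ i ω) ∈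
          {g' | ∀ k, N ≤ k → k ≤ n → Real.exp M ≤ ((collatzTraj x k (extend g') : ℕ):ℝ)})
          ↔ ω ∈ A n := by
        simp only [Set.mem_setOf_eq, hA]
        constructor
        · intro h k h1 h2; rw [← htraj' ω k h2]; exact h k h1 h2
        · intro h k h1 h2; rw [htraj' ω k h2]; exact h k h1 h2
      by_cases hmem : ω ∈ A n
      · rw [if_pos (hiff.mpr hmem), if_pos hmem, htraj' ω n le_rfl]
      · rw [if_neg (fun h => hmem (hiff.mp h)), if_neg hmem]
    have hsets : ∀ v : ℕ, MeasurableSet {ω' | ξ (n+1) ω' = v} := by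
      intro v
      exact hξmeas (n+1) (Set.to_countable {v}).measurableSet
    have hFmeas : ∀ v, Measurable (F v) := fun v =>
      (measurable_of_countable (Φ v)).comp (measurable_pi_lambda _ fun i => hξmeas i)
    have hdecomp : ∀ ω, G (n+1) ω =
        ∑ v ∈ ({1,3,5,7} : Finset ℕ), G (n+1) ω * Set.indicator {ω' | ξ (n+1) ω' = v} 1 ω := by
      intro ω
      rw [hexp]
      rcases hξval (n+1) ω with h|h|h|h <;>
        simp [Set.indicator_apply, Set.mem_setOf_eq, h]
    have hquarter : ∀ v : ℕ, v = 1 ∨ v = 3 ∨ v = 5 ∨ v = 7 →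
        μ {ω' | ξ (n+1) ω' = v} = 1/4 := by
      intro v hv
      obtain ⟨q1, q3, q5, q7⟩ := hξdist (n+1)
      rcases hv with rfl|rfl|rfl|rfl <;> assumption
    -- pointwise bound for each v
    have hpt : ∀ v : ℕ, v = 1 ∨ v = 3 ∨ v = 5 ∨ v = 7 → ∀ ω,
        G (n+1) ω * Set.indicator {ω' | ξ (n+1) ω' = v} 1 ω ≤
          ENNReal.ofReal (κ^s) * (F v ω * Set.indicator {ω' | ξ (n+1) ω' = v} 1 ω) := by
      intro v hv ω
      by_cases hξv : ξ (n+1) ω = v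
      · have hmem1 : ω ∈ {ω' | ξ (n+1) ω' = v} := hξv
        rw [Set.indicator_of_mem hmem1, Pi.one_apply, mul_one, mul_one, hFeval]
        by_cases hA1 : ω ∈ A (n+1)
        · have hAn : ω ∈ A n := fun k h1 h2 => hA1 k h1 (by omega)
          have hXn : Real.exp M ≤ (X n ω : ℝ) := hA1 n hn (by omega)
          show (A (n+1)).indicator _ ω ≤ _
          rw [Set.indicator_of_mem hA1, Set.indicator_of_mem hAn]
          have hXrw : X (n+1) ω = (3 * X n ω + v) / 2 ^ padicValNat 2 (3 * X n ω + v) := by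
            rw [hXrec n ω, hξv]
          have hv7 : v ≤ 7 := by omega
          have hineq := step_real_ineq s M hs0 (by linarith) (X n ω) v hv7 hXn
          rw [hXrw]
          calc ENNReal.ofReal ((((3 * X n ω + v) / 2 ^ padicValNat 2 (3 * X n ω + v) : ℕ):ℝ)^s)
              ≤ ENNReal.ofReal (κ^s * (((X n ω : ℕ):ℝ)^s *
                (2:ℝ)^(-(s * ((padicValNat 2 (3*X n ω + v) : ℕ):ℝ))))) := by
                apply ENNReal.ofReal_le_ofReal
                rw [hκdef]
                exact hineq
            _ = ENNReal.ofReal (κ^s) * ENNReal.ofReal (((X n ω : ℕ):ℝ)^s *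
                (2:ℝ)^(-(s * ((padicValNat 2 (3*X n ω + v) : ℕ):ℝ)))) := by
                rw [ENNReal.ofReal_mul (by positivity)]
        · show (A (n+1)).indicator _ ω ≤ _
          rw [Set.indicator_of_notMem hA1]
          exact zero_le
      · have hmem1 : ω ∉ {ω' | ξ (n+1) ω' = v} := hξv
        rw [Set.indicator_of_notMem hmem1, mul_zero, mul_zero, mul_zero]
    -- pointwise sum bound
    have hsumpt : ∀ ω, ∑ v ∈ ({1,3,5,7} : Finset ℕ), F v ω ≤
        ENNReal.ofReal fsum * G n ω := by
      intro ω
      rw [hexp]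
      simp only [hFeval]
      by_cases hAn : ω ∈ A n
      · simp only [Set.indicator_of_mem hAn]
        show _ ≤ ENNReal.ofReal fsum * (A n).indicator _ ω
        rw [Set.indicator_of_mem hAn]
        have hXs : (0:ℝ) ≤ ((X n ω : ℕ):ℝ)^s := by positivity
        rw [← ENNReal.ofReal_add (by positivity) (by positivity),
          ← ENNReal.ofReal_add (by positivity) (by positivity),
          ← ENNReal.ofReal_add (by positivity) (by positivity),
          ← ENNReal.ofReal_mul (by positivity)]
        apply ENNReal.ofReal_le_ofReal
        have hodd : Odd (3 * X n ω) := (by decide : Odd 3).mul (hXodd n ω)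
        have hsv := sum_val_le s (le_of_lt hs0) (3 * X n ω) hodd
        have hfact : ((X n ω : ℕ):ℝ)^s * (2:ℝ)^(-(s * ((padicValNat 2 (3*X n ω + 1) : ℕ):ℝ)))
            + ((X n ω : ℕ):ℝ)^s * (2:ℝ)^(-(s * ((padicValNat 2 (3*X n ω + 3) : ℕ):ℝ)))
            + ((X n ω : ℕ):ℝ)^s * (2:ℝ)^(-(s * ((padicValNat 2 (3*X n ω + 5) : ℕ):ℝ)))
            + ((X n ω : ℕ):ℝ)^s * (2:ℝ)^(-(s * ((padicValNat 2 (3*X n ω + 7) : ℕ):ℝ)))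
            = ((X n ω : ℕ):ℝ)^s * ((2:ℝ)^(-(s * ((padicValNat 2 (3*X n ω + 1) : ℕ):ℝ)))
              + (2:ℝ)^(-(s * ((padicValNat 2 (3*X n ω + 3) : ℕ):ℝ)))
              + (2:ℝ)^(-(s * ((padicValNat 2 (3*X n ω + 5) : ℕ):ℝ)))
              + (2:ℝ)^(-(s * ((padicValNat 2 (3*X n ω + 7) : ℕ):ℝ)))) := by ring
        rw [hfact, mul_comm fsum _]
        exact mul_le_mul_of_nonneg_left hsv hXs
      · simp only [Set.indicator_of_notMem hAn]
        simp
    -- put everything together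
    calc ∫⁻ ω, G (n+1) ω ∂μ
        = ∫⁻ ω, ∑ v ∈ ({1,3,5,7} : Finset ℕ),
            G (n+1) ω * Set.indicator {ω' | ξ (n+1) ω' = v} 1 ω ∂μ :=
          lintegral_congr hdecomp
      _ = ∑ v ∈ ({1,3,5,7} : Finset ℕ), ∫⁻ ω,
            G (n+1) ω * Set.indicator {ω' | ξ (n+1) ω' = v} 1 ω ∂μ :=
          lintegral_finset_sum _ (fun v _ =>
            (hGmeas (n+1)).mul (measurable_one.indicator (hsets v)))
      _ ≤ ∑ v ∈ ({1,3,5,7} : Finset ℕ), ENNReal.ofReal (κ^s) *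
            ∫⁻ ω, F v ω * Set.indicator {ω' | ξ (n+1) ω' = v} 1 ω ∂μ := by
          apply Finset.sum_le_sum
          intro v hv
          have hv' : v = 1 ∨ v = 3 ∨ v = 5 ∨ v = 7 := by
            simp only [Finset.mem_insert, Finset.mem_singleton] at hv; tauto
          rw [← lintegral_const_mul _ (f := fun ω => F v ω * Set.indicator {ω' | ξ (n+1) ω' = v} 1 ω) ((hFmeas v).mul (measurable_one.indicator (hsets v)))]
          exact lintegral_mono (fun ω => hpt v hv' ω)
      _ = ∑ v ∈ ({1,3,5,7} : Finset ℕ), ENNReal.ofReal (κ^s) *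
            ((∫⁻ ω, F v ω ∂μ) * (1/4)) := by
          apply Finset.sum_congr rfl
          intro v hv
          have hv' : v = 1 ∨ v = 3 ∨ v = 5 ∨ v = 7 := by
            simp only [Finset.mem_insert, Finset.mem_singleton] at hv; tauto
          rw [indep_step μ ξ hξmeas hξindep n (Φ v) v, hquarter v hv']
      _ = ENNReal.ofReal (κ^s) * (1/4) * ∫⁻ ω, ∑ v ∈ ({1,3,5,7} : Finset ℕ), F v ω ∂μ := by
          rw [lintegral_finset_sum _ (fun v _ => hFmeas v), Finset.mul_sum]
          apply Finset.sum_congr rfl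
          intro v _
          ring
      _ ≤ ENNReal.ofReal (κ^s) * (1/4) * ∫⁻ ω, ENNReal.ofReal fsum * G n ω ∂μ := by
          exact mul_le_mul_right (lintegral_mono hsumpt) _
      _ = ENNReal.ofReal (κ^s) * (1/4) * (ENNReal.ofReal fsum * ∫⁻ ω, G n ω ∂μ) := by
          rw [lintegral_const_mul _ (hGmeas n)]
      _ = ENNReal.ofReal (κ^s * (fsum/4)) * ∫⁻ ω, G n ω ∂μ := by
          rw [ENNReal.ofReal_mul (by positivity), show (fsum/4 : ℝ) = fsum * (1/4) by ring,
            ENNReal.ofReal_mul (by positivity),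
            show ENNReal.ofReal ((1:ℝ)/4) = 1/4 by
              rw [ENNReal.ofReal_div_of_pos (by norm_num)]; norm_num]
          ring
  -- iterate
  have iter : ∀ m, ∫⁻ ω, G (N+m) ω ∂μ ≤
      (ENNReal.ofReal (κ^s * (fsum/4)))^m * ∫⁻ ω, G N ω ∂μ := by
    intro m
    induction m with
    | zero => simp
    | succ m ih =>
      have h1 : N + (m+1) = (N + m) + 1 := by omega
      rw [h1]
      calc ∫⁻ ω, G ((N+m)+1) ω ∂μ
          ≤ ENNReal.ofReal (κ^s * (fsum/4)) * ∫⁻ ω, G (N+m) ω ∂μ :=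
            step (N+m) (by omega)
        _ ≤ ENNReal.ofReal (κ^s * (fsum/4)) *
            ((ENNReal.ofReal (κ^s * (fsum/4)))^m * ∫⁻ ω, G N ω ∂μ) := by
            exact mul_le_mul_right ih _
        _ = (ENNReal.ofReal (κ^s * (fsum/4)))^(m+1) * ∫⁻ ω, G N ω ∂μ := by
            rw [pow_succ]; ring
  -- G N is bounded
  have hGN : ∫⁻ ω, G N ω ∂μ ≤ ENNReal.ofReal ((((x+7)*4^N : ℕ):ℝ)^s) := by
    have hb : ∀ ω, G N ω ≤ ENNReal.ofReal ((((x+7)*4^N : ℕ):ℝ)^s) := by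
      intro ω
      refine le_trans (Set.indicator_le_self _ _ ω) ?_
      apply ENNReal.ofReal_le_ofReal
      apply Real.rpow_le_rpow (Nat.cast_nonneg _) ?_ (le_of_lt hs0)
      exact_mod_cast hXbdd N ω
    calc ∫⁻ ω, G N ω ∂μ ≤ ∫⁻ _, ENNReal.ofReal ((((x+7)*4^N : ℕ):ℝ)^s) ∂μ :=
          lintegral_mono hb
      _ = ENNReal.ofReal ((((x+7)*4^N : ℕ):ℝ)^s) := by
          rw [lintegral_const, measure_univ, mul_one]
  -- measure of A is bounded by the integral
  have hμA : ∀ n, N ≤ n → μ (A n) ≤ ∫⁻ ω, G n ω ∂μ := by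
    intro n hn
    have hb : ∀ ω, (A n).indicator 1 ω ≤ G n ω := by
      intro ω
      show (A n).indicator 1 ω ≤ (A n).indicator (fun ω => ENNReal.ofReal ((X n ω:ℝ)^s)) ω
      by_cases hω : ω ∈ A n
      · rw [Set.indicator_of_mem hω, Set.indicator_of_mem hω, Pi.one_apply]
        have h1 : (1:ℝ) ≤ (X n ω:ℝ)^s := by
          apply Real.one_le_rpow ?_ (le_of_lt hs0)
          have h2 : Real.exp M ≤ (X n ω:ℝ) := hω n hn le_rfl
          have h3 : (1:ℝ) ≤ Real.exp M := by
            rw [← Real.exp_zero]; exact Real.exp_le_exp.mpr (by linarith)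
          linarith
        calc (1:ℝ≥0∞) = ENNReal.ofReal 1 := by simp
          _ ≤ ENNReal.ofReal ((X n ω:ℝ)^s) := ENNReal.ofReal_le_ofReal h1
      · rw [Set.indicator_of_notMem hω, Set.indicator_of_notMem hω]
    calc μ (A n) = ∫⁻ ω, (A n).indicator 1 ω ∂μ := (lintegral_indicator_one (hAmeas n)).symm
      _ ≤ ∫⁻ ω, G n ω ∂μ := lintegral_mono hb
  -- conclude
  have hsub : ∀ m, {ω | ∀ k, N ≤ k → Real.exp M ≤ (X k ω : ℝ)} ⊆ A (N+m) := by
    intro m ω hω k h1 _; exact hω k h1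
  have hbound : ∀ m, μ {ω | ∀ k, N ≤ k → Real.exp M ≤ (X k ω : ℝ)} ≤
      (ENNReal.ofReal (κ^s * (fsum/4)))^m * ENNReal.ofReal ((((x+7)*4^N : ℕ):ℝ)^s) := by
    intro m
    calc μ {ω | ∀ k, N ≤ k → Real.exp M ≤ (X k ω : ℝ)} ≤ μ (A (N+m)) :=
          measure_mono (hsub m)
      _ ≤ ∫⁻ ω, G (N+m) ω ∂μ := hμA (N+m) (by omega)
      _ ≤ (ENNReal.ofReal (κ^s * (fsum/4)))^m * ∫⁻ ω, G N ω ∂μ := iter m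
      _ ≤ _ := mul_le_mul_right hGN _
  have htend : Filter.Tendsto
      (fun m => (ENNReal.ofReal (κ^s * (fsum/4)))^m * ENNReal.ofReal ((((x+7)*4^N : ℕ):ℝ)^s))
      Filter.atTop (nhds 0) := by
    have h1 : ENNReal.ofReal (κ^s * (fsum/4)) < 1 := by
      rw [← ENNReal.ofReal_one]
      exact ENNReal.ofReal_lt_ofReal_iff_of_nonneg (by positivity) |>.mpr hρ
    have h2 := ENNReal.tendsto_pow_atTop_nhds_zero_of_lt_one h1
    have h3 := ENNReal.Tendsto.mul_const (b := ENNReal.ofReal ((((x+7)*4^N : ℕ):ℝ)^s)) h2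
      (Or.inr ENNReal.ofReal_ne_top)
    simpa using h3
  have := ge_of_tendsto' htend (fun m => hbound m)
  exact le_antisymm this zero_le




/-- For the randomized Collatz chain started at a positive odd integer `x`, with `M > 1`
such that `ln (1 + (7/3) e^{-M}) < (1/4) ln (128/81)`, almost surely `Xₙ < e^M` for
infinitely many `n`. -/
theorem stmt_12
    {Ω : Type*} [MeasurableSpace Ω] (μ : MeasureTheory.Measure Ω)
    [MeasureTheory.IsProbabilityMeasure μ]
    (ξ : ℕ → Ω → ℕ)
    (hξval : ∀ n ω, ξ n ω = 1 ∨ ξ n ω = 3 ∨ ξ n ω = 5 ∨ ξ n ω = 7)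
    (hξmeas : ∀ n, Measurable (ξ n))
    (hξindep : ProbabilityTheory.iIndepFun ξ μ)
    (hξdist : ∀ n, μ {ω | ξ n ω = 1} = 1/4 ∧ μ {ω | ξ n ω = 3} = 1/4 ∧
      μ {ω | ξ n ω = 5} = 1/4 ∧ μ {ω | ξ n ω = 7} = 1/4)
    (x : ℕ) (hx : Odd x) (hxpos : 0 < x)
    (X : ℕ → Ω → ℕ)
    (hX0 : ∀ ω, X 0 ω = x)
    (hXrec : ∀ n ω, X (n + 1) ω =
      (3 * X n ω + ξ (n + 1) ω) / 2 ^ padicValNat 2 (3 * X n ω + ξ (n + 1) ω))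
    (d : ℕ → Ω → ℕ)
    (hd : ∀ n ω, d (n + 1) ω = padicValNat 2 (3 * X n ω + ξ (n + 1) ω))
    (M : ℝ) (hM : 1 < M)
    (hM' : Real.log (1 + (7 / 3) * Real.exp (-M)) < (1 / 4) * Real.log (128 / 81)) :
    ∀ᵐ ω ∂μ, ∃ᶠ n in Filter.atTop, (X n ω : ℝ) < Real.exp M := by
  classical
  obtain ⟨s, hs0, hρ⟩ := exists_s M hM hM'
  have hXposodd : ∀ n ω, 0 < X n ω ∧ Odd (X n ω) := by
    intro n
    induction n with
    | zero => intro ω; rw [hX0]; exact ⟨hxpos, hx⟩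
    | succ n ih =>
      intro ω
      obtain ⟨h1, h2⟩ := ih ω
      have hne : 3 * X n ω + ξ (n+1) ω ≠ 0 := by omega
      rw [hXrec n ω]
      obtain ⟨t, ht⟩ := odd_div_pow_padicValNat hne
      exact ⟨by omega, ⟨t, ht⟩⟩
  have hXodd : ∀ n ω, Odd (X n ω) := fun n ω => (hXposodd n ω).2
  have hXmeas : ∀ n, Measurable (X n) := by
    intro n
    induction n with
    | zero =>
      have h0 : X 0 = fun _ => x := funext hX0
      rw [h0]; exact measurable_const
    | succ n ih =>
      have h0 : X (n+1) = (fun p : ℕ × ℕ => (3*p.1+p.2)/2^(padicValNat 2 (3*p.1+p.2))) ∘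
          (fun ω => (X n ω, ξ (n+1) ω)) := funext (fun ω => hXrec n ω)
      rw [h0]
      exact (measurable_of_countable _).comp (ih.prodMk (hξmeas (n+1)))
  have hXtraj : ∀ n ω, X n ω = collatzTraj x n (fun k => ξ k ω) := by
    intro n
    induction n with
    | zero => intro ω; rw [hX0]; rfl
    | succ n ih => intro ω; rw [hXrec n ω, ih ω]; rfl
  have hXbdd : ∀ n ω, X n ω ≤ (x+7)*4^n := by
    intro n
    induction n with
    | zero => intro ω; rw [hX0, pow_zero, mul_one]; omega
    | succ n ih =>
      intro ω
      rw [hXrec n ω]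
      have h1 := ih ω
      have h2 : ξ (n+1) ω ≤ 7 := by rcases hξval (n+1) ω with h|h|h|h <;> omega
      have h3 : 1 ≤ 4^n := Nat.one_le_pow n 4 (by norm_num)
      calc (3 * X n ω + ξ (n+1) ω) / 2 ^ padicValNat 2 (3 * X n ω + ξ (n+1) ω)
          ≤ 3 * X n ω + ξ (n+1) ω := Nat.div_le_self _ _
        _ ≤ (x+7)*4^(n+1) := by
            rw [pow_succ]
            nlinarith
  have key := fun N => escape_null μ ξ hξval hξmeas hξindep hξdist x X hXmeas hXodd hXrec
    hXtraj hXbdd M hM s hs0 hρ N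
  rw [MeasureTheory.ae_iff]
  have hsub : {ω | ¬ ∃ᶠ n in Filter.atTop, (X n ω:ℝ) < Real.exp M} ⊆
      ⋃ N, {ω | ∀ k, N ≤ k → Real.exp M ≤ (X k ω:ℝ)} := by
    intro ω hω
    simp only [Set.mem_setOf_eq, Filter.not_frequently, Filter.eventually_atTop, not_lt] at hω
    obtain ⟨N, hN⟩ := hω
    exact Set.mem_iUnion.2 ⟨N, fun k hk => hN k hk⟩
  exact measure_mono_null hsub (measure_iUnion_null key)
end

section
/- (Proposition 2, recurrence part) For the randomized Collatz chain started at any positive odd integer x, almost surely X_n = 1 for infinitely many n; that is, P( X_n = 1 infinitely often ) = 1. -/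
namespace Collatz13

def oddPart (m : ℕ) : ℕ := m / 2 ^ padicValNat 2 m

def step (y e : ℕ) : ℕ := oddPart (3 * y + e)

def force (y : ℕ) : ℕ :=
  if y % 8 = 1 then 5 else if y % 8 = 3 then 7 else if y % 8 = 5 then 1 else 3

def g (y : ℕ) : ℕ := step y (force y)

lemma oddPart_odd {m : ℕ} (hm : m ≠ 0) : Odd (oddPart m) := by
  have h2 : (2:ℕ).Prime := Nat.prime_two
  have h := Nat.not_dvd_ordCompl h2 hm
  rw [Nat.factorization_def m h2] at h
  rw [← Nat.not_even_iff_odd, even_iff_two_dvd]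
  exact h

lemma oddPart_pos {m : ℕ} (hm : m ≠ 0) : 0 < oddPart m := by
  have h2 : (2:ℕ).Prime := Nat.prime_two
  have := Nat.ordCompl_pos (p := 2) hm
  simpa [oddPart, Nat.factorization_def m h2] using this

lemma oddPart_le_of_pow_dvd {m k : ℕ} (hm : m ≠ 0) (h : 2 ^ k ∣ m) :
    oddPart m ≤ m / 2 ^ k := by
  have hk : k ≤ padicValNat 2 m := by
    haveI : Fact (Nat.Prime 2) := ⟨Nat.prime_two⟩
    exact (padicValNat_dvd_iff_le hm).mp h
  exact Nat.div_le_div_left (Nat.pow_le_pow_right (by norm_num) hk) (by positivity)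

lemma oddPart_dvd (m : ℕ) : oddPart m ∣ m := Nat.div_dvd_of_dvd pow_padicValNat_dvd

lemma step_pos {y e : ℕ} (he : 1 ≤ e) : 0 < step y e :=
  oddPart_pos (by omega)

lemma step_odd {y e : ℕ} (he : 1 ≤ e) : Odd (step y e) :=
  oddPart_odd (by omega)

lemma force_cases (y : ℕ) : force y = 1 ∨ force y = 3 ∨ force y = 5 ∨ force y = 7 := by
  unfold force; split_ifs <;> simp

lemma force_dvd {y : ℕ} (hy : Odd y) : 8 ∣ 3 * y + force y := by
  have h8 : y % 8 = 1 ∨ y % 8 = 3 ∨ y % 8 = 5 ∨ y % 8 = 7 := by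
    rcases hy with ⟨k, hk⟩; omega
  have hm : (3 * y + force y) % 8 = (3 * (y % 8) + force y) % 8 := by
    conv_lhs => rw [show 3 * y = 3 * (y % 8) + 3 * 8 * (y / 8) by rw [mul_assoc]; omega]
    omega
  rcases h8 with h | h | h | h <;> simp [force, h] at hm ⊢ <;> omega

lemma step_le_of_pow_dvd {y e k : ℕ} (he : 1 ≤ e) (h : 2 ^ k ∣ 3 * y + e) :
    step y e ≤ (3 * y + e) / 2 ^ k :=
  oddPart_le_of_pow_dvd (by omega) h

lemma g_le {y : ℕ} (hy : Odd y) : g y ≤ (3 * y + 7) / 8 := by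
  have h1 : force y ≤ 7 := by rcases force_cases y with h|h|h|h <;> omega
  have h2 : 1 ≤ force y := by rcases force_cases y with h|h|h|h <;> omega
  calc g y ≤ (3 * y + force y) / 2 ^ 3 := step_le_of_pow_dvd h2 (by simpa using force_dvd hy)
  _ ≤ (3 * y + 7) / 8 := by apply Nat.div_le_div_right; omega

lemma g_lt {y : ℕ} (hy : Odd y) (h2 : 2 ≤ y) : g y < y := by
  have := g_le hy
  have : (3 * y + 7) / 8 < y := by omega
  omega

lemma g_odd {y : ℕ} : Odd (g y) := by
  apply step_odd
  rcases force_cases y with h|h|h|h <;> omega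

lemma g_one : g 1 = 1 := by
  have h1 : g 1 ≤ (3 * 1 + 7) / 8 := g_le (by norm_num)
  have h2 : 0 < g 1 := by
    apply step_pos; rcases force_cases 1 with h|h|h|h <;> omega
  omega

lemma g_iter_eq_one {y : ℕ} (hy : Odd y) (hpos : 0 < y) :
    ∀ m, y ≤ m → g^[m] y = 1 := by
  induction y using Nat.strong_induction_on with
  | _ y IH =>
    intro m hm
    rcases eq_or_lt_of_le (show 1 ≤ y from hpos) with h1 | h1
    · -- y = 1
      have hy1 : y = 1 := h1.symm
      subst hy1
      clear hm IH
      induction m with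
      | zero => rfl
      | succ m ih => rw [Function.iterate_succ_apply, g_one, ih]
    · -- y ≥ 2, so odd y ≥ 3
      have h3 : 2 ≤ y := h1
      have hlt : g y < y := g_lt hy h3
      have hm1 : 1 ≤ m := by omega
      rw [show m = (m-1) + 1 by omega, Function.iterate_succ_apply]
      exact IH (g y) hlt g_odd (step_pos (by rcases force_cases y with h|h|h|h <;> omega))
        (m-1) (by omega)




lemma sqrt_step_le {y e k : ℕ} (he : 1 ≤ e) (he7 : e ≤ 7) (h : 2 ^ k ∣ 3 * y + e) :
    Real.sqrt (step y e) ≤ Real.sqrt ((3 * (y:ℝ) + 7) / 2 ^ k) := by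
  apply Real.sqrt_le_sqrt
  have h1 : step y e ≤ (3 * y + e) / 2 ^ k := oddPart_le_of_pow_dvd (by omega) h
  have h2 : (((3 * y + e) / 2 ^ k : ℕ) : ℝ) = ((3 * y + e : ℕ) : ℝ) / ((2 ^ k : ℕ) : ℝ) :=
    Nat.cast_div h (by positivity)
  have he7' : ((e:ℝ)) ≤ 7 := by exact_mod_cast he7
  calc (step y e : ℝ) ≤ (((3 * y + e) / 2 ^ k : ℕ) : ℝ) := by exact_mod_cast h1
    _ = ((3 * y + e : ℕ) : ℝ) / ((2 ^ k : ℕ) : ℝ) := h2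
    _ ≤ (3 * (y:ℝ) + 7) / 2 ^ k := by push_cast; gcongr

lemma drift {y : ℕ} (hy : Odd y) :
    Real.sqrt (step y 1) + Real.sqrt (step y 3) + Real.sqrt (step y 5) + Real.sqrt (step y 7)
      ≤ 3.932 * Real.sqrt y + 6.04 := by
  have hBnn : (0:ℝ) ≤ 3 * (y:ℝ) + 7 := by positivity
  have gen : ∀ (k : ℕ) (c : ℝ), 0 ≤ c → ((2:ℝ)^k)⁻¹ ≤ c^2 →
      Real.sqrt ((3 * (y:ℝ) + 7) / 2 ^ k) ≤ c * Real.sqrt (3 * (y:ℝ) + 7) := by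
    intro k c hc h
    rw [div_eq_mul_inv, mul_comm, Real.sqrt_mul (by positivity)]
    have : Real.sqrt (((2:ℝ)^k)⁻¹) ≤ c := Real.sqrt_le_iff.mpr ⟨hc, h⟩
    have hs := Real.sqrt_nonneg (3 * (y:ℝ) + 7)
    nlinarith
  have hd1 := gen 1 0.70711 (by norm_num) (by norm_num)
  have hd2 := gen 2 0.5 (by norm_num) (by norm_num)
  have hd3 := gen 3 0.35356 (by norm_num) (by norm_num)
  have hsum : Real.sqrt (step y 1) + Real.sqrt (step y 3) + Real.sqrt (step y 5)
      + Real.sqrt (step y 7) ≤ 2.26778 * Real.sqrt (3 * (y:ℝ) + 7) := by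
    have hosc : y % 8 = 1 ∨ y % 8 = 3 ∨ y % 8 = 5 ∨ y % 8 = 7 := by
      rcases hy with ⟨k, hk⟩; omega
    rcases hosc with h | h | h | h
    · have b1 := sqrt_step_le (y := y) (e := 1) (k := 2) (by norm_num) (by norm_num) (by omega)
      have b3 := sqrt_step_le (y := y) (e := 3) (k := 1) (by norm_num) (by norm_num) (by omega)
      have b5 := sqrt_step_le (y := y) (e := 5) (k := 3) (by norm_num) (by norm_num) (by omega)
      have b7 := sqrt_step_le (y := y) (e := 7) (k := 1) (by norm_num) (by norm_num) (by omega)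
      linarith
    · have b1 := sqrt_step_le (y := y) (e := 1) (k := 1) (by norm_num) (by norm_num) (by omega)
      have b3 := sqrt_step_le (y := y) (e := 3) (k := 2) (by norm_num) (by norm_num) (by omega)
      have b5 := sqrt_step_le (y := y) (e := 5) (k := 1) (by norm_num) (by norm_num) (by omega)
      have b7 := sqrt_step_le (y := y) (e := 7) (k := 3) (by norm_num) (by norm_num) (by omega)
      linarith
    · have b1 := sqrt_step_le (y := y) (e := 1) (k := 3) (by norm_num) (by norm_num) (by omega)
      have b3 := sqrt_step_le (y := y) (e := 3) (k := 1) (by norm_num) (by norm_num) (by omega)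
      have b5 := sqrt_step_le (y := y) (e := 5) (k := 2) (by norm_num) (by norm_num) (by omega)
      have b7 := sqrt_step_le (y := y) (e := 7) (k := 1) (by norm_num) (by norm_num) (by omega)
      linarith
    · have b1 := sqrt_step_le (y := y) (e := 1) (k := 1) (by norm_num) (by norm_num) (by omega)
      have b3 := sqrt_step_le (y := y) (e := 3) (k := 3) (by norm_num) (by norm_num) (by omega)
      have b5 := sqrt_step_le (y := y) (e := 5) (k := 1) (by norm_num) (by norm_num) (by omega)
      have b7 := sqrt_step_le (y := y) (e := 7) (k := 2) (by norm_num) (by norm_num) (by omega)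
      linarith
  have hBle : Real.sqrt (3 * (y:ℝ) + 7) ≤ 1.73206 * Real.sqrt y + 2.64576 := by
    have h3 : Real.sqrt 3 ≤ 1.73206 := Real.sqrt_le_iff.mpr ⟨by norm_num, by norm_num⟩
    have h7 : Real.sqrt 7 ≤ 2.64576 := Real.sqrt_le_iff.mpr ⟨by norm_num, by norm_num⟩
    have h1 : Real.sqrt (3 * (y:ℝ) + 7) ≤ Real.sqrt (3 * (y:ℝ)) + Real.sqrt 7 := by
      rw [Real.sqrt_le_iff]
      refine ⟨by positivity, ?_⟩
      nlinarith [Real.sqrt_nonneg (3*(y:ℝ)), Real.sqrt_nonneg (7:ℝ),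
        Real.sq_sqrt (show (0:ℝ) ≤ 3*(y:ℝ) by positivity),
        Real.sq_sqrt (show (0:ℝ) ≤ (7:ℝ) by norm_num)]
    have h2 : Real.sqrt (3 * (y:ℝ)) = Real.sqrt 3 * Real.sqrt y := Real.sqrt_mul (by norm_num) _
    nlinarith [Real.sqrt_nonneg (y:ℝ), Real.sqrt_nonneg (3:ℝ)]
  nlinarith [mul_le_mul_of_nonneg_left hBle (show (0:ℝ) ≤ 2.26778 by norm_num),
    Real.sqrt_nonneg (y:ℝ)]

open MeasureTheory ProbabilityTheory ENNReal



def Ychain (x : ℕ) (u : ℕ → ℕ) : ℕ → ℕ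
  | 0 => x
  | n+1 => step (Ychain x u n) (u n)

lemma Ychain_congr {x : ℕ} {u v : ℕ → ℕ} {n : ℕ} (h : ∀ i < n, u i = v i) :
    Ychain x u n = Ychain x v n := by
  induction n with
  | zero => rfl
  | succ n ih =>
    show step (Ychain x u n) (u n) = step (Ychain x v n) (v n)
    rw [ih (fun i hi => h i (by omega)), h n (by omega)]

variable {Ω : Type*} [MeasurableSpace Ω]

def Tup (ξ : ℕ → Ω → ℕ) (m : ℕ) (ω : Ω) (i : Fin m) : ℕ := ξ ((i : ℕ) + 1) ω

def extT {m : ℕ} (v : Fin m → ℕ) : ℕ → ℕ := fun i => if h : i < m then v ⟨i, h⟩ else 0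

lemma Tup_measurable (ξ : ℕ → Ω → ℕ) (hξmeas : ∀ n, Measurable (ξ n)) (m : ℕ) :
    Measurable (Tup ξ m) :=
  measurable_pi_lambda _ (fun i => hξmeas _)

/-- The cylinder factorization lemma. -/
lemma fact_mul (μ : Measure Ω) (ξ : ℕ → Ω → ℕ)
    (hξmeas : ∀ n, Measurable (ξ n))
    (hξindep : ProbabilityTheory.iIndepFun ξ μ)
    (m : ℕ) (S : Set (Fin m → ℕ)) (c : ℕ) :
    μ (Tup ξ m ⁻¹' S ∩ {ω | ξ (m+1) ω = c})
      = μ (Tup ξ m ⁻¹' S) * μ {ω | ξ (m+1) ω = c} := by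
  have hdisj : Disjoint (Finset.Icc 1 m) ({m+1} : Finset ℕ) := by
    simp [Finset.disjoint_singleton_right, Finset.mem_Icc]
  have hbase := hξindep.indepFun_finset (Finset.Icc 1 m) {m+1} hdisj hξmeas
  set φ : ((Finset.Icc 1 m : Finset ℕ) → ℕ) → (Fin m → ℕ) :=
    fun v i => v ⟨(i : ℕ) + 1, by simp [Finset.mem_Icc]⟩ with hφ
  set ψ : (({m+1} : Finset ℕ) → ℕ) → ℕ := fun v => v ⟨m+1, by simp⟩ with hψ
  have hind : IndepFun (Tup ξ m) (ξ (m+1)) μ := by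
    have := hbase.comp (φ := φ) (ψ := ψ) Measurable.of_discrete Measurable.of_discrete
    convert this using 1
    all_goals rfl
  have := hind.measure_inter_preimage_eq_mul S {c} MeasurableSet.of_discrete
    (measurableSet_singleton c)
  simpa [Set.preimage, Set.mem_singleton_iff] using this


section Xlemmas

variable {Ω : Type*} [MeasurableSpace Ω]
variable (ξ : ℕ → Ω → ℕ) (X : ℕ → Ω → ℕ) (x : ℕ)

lemma X_eq_Ychain (hX0 : ∀ ω, X 0 ω = x)
    (hstep : ∀ n ω, X (n+1) ω = step (X n ω) (ξ (n+1) ω)) (n : ℕ) (ω : Ω) :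
    X n ω = Ychain x (fun i => ξ (i+1) ω) n := by
  induction n with
  | zero => exact hX0 ω
  | succ n ih => rw [hstep n ω, ih]; rfl

lemma X_eq_ext (hX0 : ∀ ω, X 0 ω = x)
    (hstep : ∀ n ω, X (n+1) ω = step (X n ω) (ξ (n+1) ω)) {n m : ℕ} (hnm : n ≤ m) (ω : Ω) :
    X n ω = Ychain x (extT (Tup ξ m ω)) n := by
  rw [X_eq_Ychain ξ X x hX0 hstep n ω]
  apply Ychain_congr
  intro i hi
  have him : i < m := by omega
  simp [extT, Tup, him]

lemma X_odd_pos (hx : Odd x) (hxpos : 0 < x)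
    (hξval : ∀ n ω, ξ n ω = 1 ∨ ξ n ω = 3 ∨ ξ n ω = 5 ∨ ξ n ω = 7)
    (hX0 : ∀ ω, X 0 ω = x)
    (hstep : ∀ n ω, X (n+1) ω = step (X n ω) (ξ (n+1) ω)) (n : ℕ) (ω : Ω) :
    Odd (X n ω) ∧ 0 < X n ω := by
  induction n with
  | zero => rw [hX0]; exact ⟨hx, hxpos⟩
  | succ n ih =>
    rw [hstep n ω]
    have he : 1 ≤ ξ (n+1) ω := by rcases hξval (n+1) ω with h|h|h|h <;> omega
    exact ⟨step_odd he, step_pos he⟩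

lemma X_meas (hξmeas : ∀ n, Measurable (ξ n)) (hX0 : ∀ ω, X 0 ω = x)
    (hstep : ∀ n ω, X (n+1) ω = step (X n ω) (ξ (n+1) ω)) (n : ℕ) :
    Measurable (X n) := by
  induction n with
  | zero =>
    have : X 0 = fun _ => x := funext hX0
    rw [this]; exact measurable_const
  | succ n ih =>
    have : X (n+1) = (fun p : ℕ × ℕ => step p.1 p.2) ∘ (fun ω => (X n ω, ξ (n+1) ω)) :=
      funext (hstep n)
    rw [this]
    exact Measurable.of_discrete.comp (ih.prodMk (hξmeas (n+1)))

end Xlemmas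


section Jbound

variable {Ω : Type*} [MeasurableSpace Ω]

lemma indep_Tup (μ : Measure Ω) (ξ : ℕ → Ω → ℕ)
    (hξmeas : ∀ n, Measurable (ξ n))
    (hξindep : ProbabilityTheory.iIndepFun ξ μ) (m : ℕ) :
    IndepFun (Tup ξ m) (ξ (m+1)) μ := by
  have hdisj : Disjoint (Finset.Icc 1 m) ({m+1} : Finset ℕ) := by
    simp [Finset.disjoint_singleton_right, Finset.mem_Icc]
  have hbase := hξindep.indepFun_finset (Finset.Icc 1 m) {m+1} hdisj hξmeas
  set φ : ((Finset.Icc 1 m : Finset ℕ) → ℕ) → (Fin m → ℕ) :=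
    fun v i => v ⟨(i : ℕ) + 1, by simp [Finset.mem_Icc]⟩ with hφ
  set ψ : (({m+1} : Finset ℕ) → ℕ) → ℕ := fun v => v ⟨m+1, by simp⟩ with hψ
  have := hbase.comp (φ := φ) (ψ := ψ) Measurable.of_discrete Measurable.of_discrete
  convert this using 1
  all_goals rfl

lemma J_step (μ : Measure Ω) [IsProbabilityMeasure μ]
    (ξ : ℕ → Ω → ℕ) (X : ℕ → Ω → ℕ) (x : ℕ)
    (hξval : ∀ n ω, ξ n ω = 1 ∨ ξ n ω = 3 ∨ ξ n ω = 5 ∨ ξ n ω = 7)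
    (hξmeas : ∀ n, Measurable (ξ n))
    (hξindep : ProbabilityTheory.iIndepFun ξ μ)
    (hξdist : ∀ n, μ {ω | ξ n ω = 1} = 1/4 ∧ μ {ω | ξ n ω = 3} = 1/4 ∧
      μ {ω | ξ n ω = 5} = 1/4 ∧ μ {ω | ξ n ω = 7} = 1/4)
    (hx : Odd x) (hxpos : 0 < x)
    (hX0 : ∀ ω, X 0 ω = x)
    (hstep : ∀ n ω, X (n+1) ω = step (X n ω) (ξ (n+1) ω)) (n : ℕ) :
    ∫⁻ ω, ENNReal.ofReal (Real.sqrt (X (n+1) ω)) ∂μ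
      ≤ ENNReal.ofReal 0.983 * (∫⁻ ω, ENNReal.ofReal (Real.sqrt (X n ω)) ∂μ)
        + ENNReal.ofReal 1.51 := by
  set f : ℕ → Ω → ℝ≥0∞ := fun e ω => ENNReal.ofReal (Real.sqrt (step (X n ω) e)) with hf
  set ind : ℕ → Ω → ℝ≥0∞ :=
    fun e => Set.indicator {ω' | ξ (n+1) ω' = e} (fun _ => (1:ℝ≥0∞)) with hind
  have hXmeas := X_meas ξ X x hξmeas hX0 hstep
  have hmeasf : ∀ e, Measurable (f e) := fun e => by
    have : f e = (fun y : ℕ => ENNReal.ofReal (Real.sqrt (step y e))) ∘ (X n) := rfl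
    rw [this]; exact measurable_from_nat.comp (hXmeas n)
  have hsetmeas : ∀ e : ℕ, MeasurableSet {ω' | ξ (n+1) ω' = e} := fun e =>
    hξmeas (n+1) (measurableSet_singleton e)
  have hmeasind : ∀ e, Measurable (ind e) := fun e =>
    measurable_const.indicator (hsetmeas e)
  have hpt : (fun ω => ENNReal.ofReal (Real.sqrt (X (n+1) ω)))
      = (f 1 * ind 1) + (f 3 * ind 3) + (f 5 * ind 5) + (f 7 * ind 7) := by
    funext ω
    show _ = f 1 ω * ind 1 ω + f 3 ω * ind 3 ω + f 5 ω * ind 5 ω + f 7 ω * ind 7 ω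
    rcases hξval (n+1) ω with h|h|h|h <;>
      simp [hf, hind, Set.indicator, h, hstep n ω]
  have hindepf : ∀ e : ℕ, IndepFun (f e) (ind e) μ := by
    intro e
    have h1 : f e = (fun v : Fin n → ℕ =>
        ENNReal.ofReal (Real.sqrt (step (Ychain x (extT v) n) e))) ∘ (Tup ξ n) := by
      funext ω
      simp only [hf, Function.comp_apply]
      rw [← X_eq_ext ξ X x hX0 hstep (le_refl n) ω]
    have h2 : ind e = (fun k : ℕ => if k = e then (1:ℝ≥0∞) else 0) ∘ (ξ (n+1)) := by
      funext ω
      simp [hind, Set.indicator]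
    rw [h1, h2]
    exact (indep_Tup μ ξ hξmeas hξindep n).comp Measurable.of_discrete Measurable.of_discrete
  have hintind : ∀ e : ℕ, ∫⁻ ω, ind e ω ∂μ = μ {ω' | ξ (n+1) ω' = e} := by
    intro e
    rw [hind]
    rw [MeasureTheory.lintegral_indicator (hsetmeas e)]
    simp
  have hmul : ∀ e : ℕ, ∫⁻ ω, f e ω * ind e ω ∂μ
      = (∫⁻ ω, f e ω ∂μ) * μ {ω' | ξ (n+1) ω' = e} := by
    intro e
    have h := lintegral_mul_eq_lintegral_mul_lintegral_of_indepFun (hmeasf e) (hmeasind e)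
      (hindepf e)
    simp only [Pi.mul_apply] at h
    rw [h, hintind e]
  obtain ⟨hd1, hd3, hd5, hd7⟩ := hξdist (n+1)
  have hsplit : ∫⁻ ω, ENNReal.ofReal (Real.sqrt (X (n+1) ω)) ∂μ
      = ((∫⁻ ω, f 1 ω ∂μ) + (∫⁻ ω, f 3 ω ∂μ) + (∫⁻ ω, f 5 ω ∂μ) + (∫⁻ ω, f 7 ω ∂μ)) * (1/4) := by
    rw [hpt]
    show (∫⁻ ω, ((f 1 * ind 1) ω + (f 3 * ind 3) ω + (f 5 * ind 5) ω + (f 7 * ind 7) ω) ∂μ) = _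
    simp only [Pi.mul_apply]
    rw [lintegral_add_left (f := fun ω => f 1 ω * ind 1 ω + f 3 ω * ind 3 ω + f 5 ω * ind 5 ω)
      (((hmeasf 1).mul (hmeasind 1)).add
      ((hmeasf 3).mul (hmeasind 3)) |>.add ((hmeasf 5).mul (hmeasind 5)))]
    rw [lintegral_add_left (f := fun ω => f 1 ω * ind 1 ω + f 3 ω * ind 3 ω)
      (((hmeasf 1).mul (hmeasind 1)).add ((hmeasf 3).mul (hmeasind 3)))]
    rw [lintegral_add_left (f := fun ω => f 1 ω * ind 1 ω) ((hmeasf 1).mul (hmeasind 1))]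
    rw [hmul 1, hmul 3, hmul 5, hmul 7, hd1, hd3, hd5, hd7]
    ring
  rw [hsplit]
  have hsum : (∫⁻ ω, f 1 ω ∂μ) + (∫⁻ ω, f 3 ω ∂μ) + (∫⁻ ω, f 5 ω ∂μ) + (∫⁻ ω, f 7 ω ∂μ)
      ≤ ENNReal.ofReal 3.932 * (∫⁻ ω, ENNReal.ofReal (Real.sqrt (X n ω)) ∂μ)
        + ENNReal.ofReal 6.04 := by
    have h1 : (∫⁻ ω, f 1 ω ∂μ) + (∫⁻ ω, f 3 ω ∂μ) + (∫⁻ ω, f 5 ω ∂μ) + (∫⁻ ω, f 7 ω ∂μ)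
        = ∫⁻ ω, (f 1 ω + f 3 ω + f 5 ω + f 7 ω) ∂μ := by
      rw [lintegral_add_left (f := fun ω => f 1 ω + f 3 ω + f 5 ω)
        ((hmeasf 1).add (hmeasf 3) |>.add (hmeasf 5))]
      rw [lintegral_add_left (f := fun ω => f 1 ω + f 3 ω) ((hmeasf 1).add (hmeasf 3))]
      rw [lintegral_add_left (hmeasf 1)]
    rw [h1]
    have h2 : ∀ ω, f 1 ω + f 3 ω + f 5 ω + f 7 ω
        ≤ ENNReal.ofReal 3.932 * ENNReal.ofReal (Real.sqrt (X n ω)) + ENNReal.ofReal 6.04 := by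
      intro ω
      have hodd : Odd (X n ω) := (X_odd_pos ξ X x hx hxpos hξval hX0 hstep n ω).1
      have hdr := drift hodd
      have hnn : ∀ z : ℕ, (0:ℝ) ≤ Real.sqrt z := fun z => Real.sqrt_nonneg _
      calc f 1 ω + f 3 ω + f 5 ω + f 7 ω
          = ENNReal.ofReal (Real.sqrt (step (X n ω) 1) + Real.sqrt (step (X n ω) 3)
            + Real.sqrt (step (X n ω) 5) + Real.sqrt (step (X n ω) 7)) := by
            have habcd : ∀ a b c d : ℝ, 0 ≤ a → 0 ≤ b → 0 ≤ c → 0 ≤ d →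
                ENNReal.ofReal a + ENNReal.ofReal b + ENNReal.ofReal c + ENNReal.ofReal d
                  = ENNReal.ofReal (a + b + c + d) := by
              intro a b c d ha hb hc hd
              rw [← ENNReal.ofReal_add ha hb, ← ENNReal.ofReal_add (by positivity) hc,
                ← ENNReal.ofReal_add (by positivity) hd]
            exact habcd _ _ _ _ (hnn _) (hnn _) (hnn _) (hnn _)
        _ ≤ ENNReal.ofReal (3.932 * Real.sqrt (X n ω) + 6.04) := ENNReal.ofReal_le_ofReal hdr
        _ = ENNReal.ofReal 3.932 * ENNReal.ofReal (Real.sqrt (X n ω)) + ENNReal.ofReal 6.04 := by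
            rw [ENNReal.ofReal_add (by positivity) (by norm_num),
              ENNReal.ofReal_mul (by norm_num)]
    calc ∫⁻ ω, (f 1 ω + f 3 ω + f 5 ω + f 7 ω) ∂μ
        ≤ ∫⁻ ω, (ENNReal.ofReal 3.932 * ENNReal.ofReal (Real.sqrt (X n ω))
            + ENNReal.ofReal 6.04) ∂μ := lintegral_mono h2
      _ = ENNReal.ofReal 3.932 * (∫⁻ ω, ENNReal.ofReal (Real.sqrt (X n ω)) ∂μ)
            + ENNReal.ofReal 6.04 := by
          have hm : Measurable (fun ω => ENNReal.ofReal (Real.sqrt (X n ω))) := by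
            have h : (fun ω => ENNReal.ofReal (Real.sqrt (X n ω)))
                = (fun y : ℕ => ENNReal.ofReal (Real.sqrt y)) ∘ (X n) := rfl
            rw [h]; exact measurable_from_nat.comp (hXmeas n)
          rw [lintegral_add_right _ measurable_const]
          rw [lintegral_const_mul _ hm]
          simp [lintegral_const]
    
  calc ((∫⁻ ω, f 1 ω ∂μ) + (∫⁻ ω, f 3 ω ∂μ) + (∫⁻ ω, f 5 ω ∂μ) + (∫⁻ ω, f 7 ω ∂μ)) * (1/4)
      ≤ (ENNReal.ofReal 3.932 * (∫⁻ ω, ENNReal.ofReal (Real.sqrt (X n ω)) ∂μ)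
          + ENNReal.ofReal 6.04) * (1/4) := by
        exact mul_le_mul_left hsum _
    _ = ENNReal.ofReal 0.983 * (∫⁻ ω, ENNReal.ofReal (Real.sqrt (X n ω)) ∂μ)
          + ENNReal.ofReal 1.51 := by
        rw [add_mul]
        congr 1
        · rw [mul_right_comm]
          congr 1
          rw [show (1/4 : ℝ≥0∞) = ENNReal.ofReal (1/4) by
            rw [ENNReal.ofReal_div_of_pos (by norm_num)]; simp]
          rw [← ENNReal.ofReal_mul (by norm_num)]
          norm_num
        · rw [show (1/4 : ℝ≥0∞) = ENNReal.ofReal (1/4) by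
            rw [ENNReal.ofReal_div_of_pos (by norm_num)]; simp]
          rw [← ENNReal.ofReal_mul (by norm_num)]
          norm_num

end Jbound


section JM

variable {Ω : Type*} [MeasurableSpace Ω]

lemma J_bound (μ : Measure Ω) [IsProbabilityMeasure μ]
    (ξ : ℕ → Ω → ℕ) (X : ℕ → Ω → ℕ) (x : ℕ)
    (hξval : ∀ n ω, ξ n ω = 1 ∨ ξ n ω = 3 ∨ ξ n ω = 5 ∨ ξ n ω = 7)
    (hξmeas : ∀ n, Measurable (ξ n))
    (hξindep : ProbabilityTheory.iIndepFun ξ μ)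
    (hξdist : ∀ n, μ {ω | ξ n ω = 1} = 1/4 ∧ μ {ω | ξ n ω = 3} = 1/4 ∧
      μ {ω | ξ n ω = 5} = 1/4 ∧ μ {ω | ξ n ω = 7} = 1/4)
    (hx : Odd x) (hxpos : 0 < x)
    (hX0 : ∀ ω, X 0 ω = x)
    (hstep : ∀ n ω, X (n+1) ω = step (X n ω) (ξ (n+1) ω)) (n : ℕ) :
    ∫⁻ ω, ENNReal.ofReal (Real.sqrt (X n ω)) ∂μ ≤ ENNReal.ofReal (Real.sqrt x + 89) := by
  induction n with
  | zero =>
    have h : (fun ω => ENNReal.ofReal (Real.sqrt (X 0 ω)))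
        = fun _ => ENNReal.ofReal (Real.sqrt x) := by
      funext ω; rw [hX0]
    rw [h, lintegral_const, measure_univ, mul_one]
    exact ENNReal.ofReal_le_ofReal (by nlinarith [Real.sqrt_nonneg (x:ℝ)])
  | succ n ih =>
    calc ∫⁻ ω, ENNReal.ofReal (Real.sqrt (X (n+1) ω)) ∂μ
        ≤ ENNReal.ofReal 0.983 * (∫⁻ ω, ENNReal.ofReal (Real.sqrt (X n ω)) ∂μ)
          + ENNReal.ofReal 1.51 :=
          J_step μ ξ X x hξval hξmeas hξindep hξdist hx hxpos hX0 hstep n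
      _ ≤ ENNReal.ofReal 0.983 * ENNReal.ofReal (Real.sqrt x + 89) + ENNReal.ofReal 1.51 := by
          gcongr
      _ = ENNReal.ofReal (0.983 * (Real.sqrt x + 89) + 1.51) := by
          rw [← ENNReal.ofReal_mul (by norm_num),
            ← ENNReal.ofReal_add (by positivity) (by norm_num)]
      _ ≤ ENNReal.ofReal (Real.sqrt x + 89) := by
          apply ENNReal.ofReal_le_ofReal
          nlinarith [Real.sqrt_nonneg (x:ℝ)]

lemma markov (μ : Measure Ω) [IsProbabilityMeasure μ]
    (ξ : ℕ → Ω → ℕ) (X : ℕ → Ω → ℕ) (x : ℕ)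
    (hξval : ∀ n ω, ξ n ω = 1 ∨ ξ n ω = 3 ∨ ξ n ω = 5 ∨ ξ n ω = 7)
    (hξmeas : ∀ n, Measurable (ξ n))
    (hξindep : ProbabilityTheory.iIndepFun ξ μ)
    (hξdist : ∀ n, μ {ω | ξ n ω = 1} = 1/4 ∧ μ {ω | ξ n ω = 3} = 1/4 ∧
      μ {ω | ξ n ω = 5} = 1/4 ∧ μ {ω | ξ n ω = 7} = 1/4)
    (hx : Odd x) (hxpos : 0 < x)
    (hX0 : ∀ ω, X 0 ω = x)
    (hstep : ∀ n ω, X (n+1) ω = step (X n ω) (ξ (n+1) ω)) (n M : ℕ) (hM : 1 ≤ M) :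
    μ {ω | M < X n ω} ≤ ENNReal.ofReal ((Real.sqrt x + 89) / Real.sqrt M) := by
  have hXmeas := X_meas ξ X x hξmeas hX0 hstep
  have hm : Measurable (fun ω => ENNReal.ofReal (Real.sqrt (X n ω))) := by
    have h : (fun ω => ENNReal.ofReal (Real.sqrt (X n ω)))
        = (fun y : ℕ => ENNReal.ofReal (Real.sqrt y)) ∘ (X n) := rfl
    rw [h]; exact measurable_from_nat.comp (hXmeas n)
  have hMpos : (0:ℝ) < Real.sqrt M := Real.sqrt_pos.mpr (by exact_mod_cast hM)
  have hsub : {ω | M < X n ω}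
      ⊆ {ω | ENNReal.ofReal (Real.sqrt M) ≤ ENNReal.ofReal (Real.sqrt (X n ω))} := by
    intro ω hω
    simp only [Set.mem_setOf_eq] at hω ⊢
    apply ENNReal.ofReal_le_ofReal
    apply Real.sqrt_le_sqrt
    exact_mod_cast hω.le
  calc μ {ω | M < X n ω}
      ≤ μ {ω | ENNReal.ofReal (Real.sqrt M) ≤ ENNReal.ofReal (Real.sqrt (X n ω))} :=
        measure_mono hsub
    _ ≤ (∫⁻ ω, ENNReal.ofReal (Real.sqrt (X n ω)) ∂μ) / ENNReal.ofReal (Real.sqrt M) :=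
        meas_ge_le_lintegral_div hm.aemeasurable (ENNReal.ofReal_pos.mpr hMpos).ne' ENNReal.ofReal_ne_top
    _ ≤ ENNReal.ofReal (Real.sqrt x + 89) / ENNReal.ofReal (Real.sqrt M) := by
        gcongr
        exact J_bound μ ξ X x hξval hξmeas hξindep hξdist hx hxpos hX0 hstep n
    _ = ENNReal.ofReal ((Real.sqrt x + 89) / Real.sqrt M) := by
        rw [ENNReal.ofReal_div_of_pos hMpos]

end JM


section Window

variable {Ω : Type*} [MeasurableSpace Ω]

def PatSet (ξ : ℕ → Ω → ℕ) (X : ℕ → Ω → ℕ) (m j : ℕ) : Set Ω :=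
  {ω | ∀ i, m ≤ i → i < m + j → ξ (i+1) ω = force (X i ω)}

lemma PatSet_measurable (ξ : ℕ → Ω → ℕ) (X : ℕ → Ω → ℕ) (x : ℕ)
    (hξmeas : ∀ n, Measurable (ξ n)) (hX0 : ∀ ω, X 0 ω = x)
    (hstep : ∀ n ω, X (n+1) ω = step (X n ω) (ξ (n+1) ω)) (m j : ℕ) :
    MeasurableSet (PatSet ξ X m j) := by
  have hXmeas := X_meas ξ X x hξmeas hX0 hstep
  have h : PatSet ξ X m j = ⋂ i, {ω | m ≤ i → i < m + j → ξ (i+1) ω = force (X i ω)} := by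
    ext ω; simp [PatSet]
  rw [h]
  apply MeasurableSet.iInter
  intro i
  by_cases hi : m ≤ i ∧ i < m + j
  · have h2 : {ω | m ≤ i → i < m + j → ξ (i+1) ω = force (X i ω)}
        = (fun ω => (ξ (i+1) ω, X i ω)) ⁻¹' {p : ℕ × ℕ | p.1 = force p.2} := by
      ext ω; simp [hi.1, hi.2]
    rw [h2]
    exact ((hξmeas (i+1)).prodMk (hXmeas i)) MeasurableSet.of_discrete
  · have h2 : {ω | m ≤ i → i < m + j → ξ (i+1) ω = force (X i ω)} = Set.univ := by
      ext ω; simp only [Set.mem_setOf_eq, Set.mem_univ, iff_true]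
      intro h1 h2; omega
    rw [h2]; exact MeasurableSet.univ

lemma window (μ : Measure Ω) [IsProbabilityMeasure μ]
    (ξ : ℕ → Ω → ℕ) (X : ℕ → Ω → ℕ) (x : ℕ)
    (hξmeas : ∀ n, Measurable (ξ n))
    (hξindep : ProbabilityTheory.iIndepFun ξ μ)
    (hξdist : ∀ n, μ {ω | ξ n ω = 1} = 1/4 ∧ μ {ω | ξ n ω = 3} = 1/4 ∧
      μ {ω | ξ n ω = 5} = 1/4 ∧ μ {ω | ξ n ω = 7} = 1/4)
    (hX0 : ∀ ω, X 0 ω = x)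
    (hstep : ∀ n ω, X (n+1) ω = step (X n ω) (ξ (n+1) ω)) :
    ∀ (j m : ℕ) (S : Set (Fin m → ℕ)),
      μ (Tup ξ m ⁻¹' S ∩ PatSet ξ X m j) = (1/4 : ℝ≥0∞)^j * μ (Tup ξ m ⁻¹' S) := by
  intro j
  induction j with
  | zero =>
    intro m S
    have h : PatSet ξ X m 0 = Set.univ := by
      ext ω; simp only [PatSet, Set.mem_setOf_eq, Set.mem_univ, iff_true]
      intro i h1 h2; omega
    rw [h, Set.inter_univ, pow_zero, one_mul]
  | succ j IH =>
    intro m S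
    -- the four pieces
    set SB : ℕ → Set (Fin (m+1) → ℕ) := fun c =>
      {v : Fin (m+1) → ℕ | (fun i : Fin m => v i.castSucc) ∈ S ∧
        force (Ychain x (extT fun i : Fin m => v i.castSucc) m) = c ∧ v ⟨m, by omega⟩ = c}
      with hSB
    set SA : ℕ → Set (Fin m → ℕ) := fun c =>
      S ∩ {v | force (Ychain x (extT v) m) = c} with hSA
    have hres : ∀ ω : Ω, (fun i : Fin m => Tup ξ (m+1) ω i.castSucc) = Tup ξ m ω := by
      intro ω; funext i; simp [Tup]
    have hc1 : ∀ c, Tup ξ (m+1) ⁻¹' SB c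
        = (Tup ξ m ⁻¹' SA c) ∩ {ω | ξ (m+1) ω = c} := by
      intro c
      ext ω
      simp only [Set.mem_preimage, hSB, hSA, Set.mem_setOf_eq, Set.mem_inter_iff, hres ω]
      have : Tup ξ (m+1) ω ⟨m, by omega⟩ = ξ (m+1) ω := rfl
      rw [this]
      tauto
    have hXm : ∀ ω, X m ω = Ychain x (extT (Tup ξ m ω)) m :=
      fun ω => X_eq_ext ξ X x hX0 hstep le_rfl ω
    have hBmeas : ∀ c, μ {ω | ξ (m+1) ω = c} = 1/4 → μ (Tup ξ (m+1) ⁻¹' SB c)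
        = μ (Tup ξ m ⁻¹' SA c) * (1/4 : ℝ≥0∞) := by
      intro c hc
      rw [hc1 c, fact_mul μ ξ hξmeas hξindep m (SA c) c, hc]
    have hshift : PatSet ξ X m (j+1)
        = {ω | ξ (m+1) ω = force (X m ω)} ∩ PatSet ξ X (m+1) j := by
      ext ω
      simp only [PatSet, Set.mem_inter_iff, Set.mem_setOf_eq]
      constructor
      · intro h
        exact ⟨h m le_rfl (by omega), fun i h1 h2 => h i (by omega) (by omega)⟩
      · rintro ⟨h0, h⟩ i h1 h2
        rcases eq_or_lt_of_le h1 with rfl | hlt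
        · exact h0
        · exact h i (by omega) (by omega)
    set D : ℕ → Set Ω := fun c => Tup ξ (m+1) ⁻¹' SB c ∩ PatSet ξ X (m+1) j with hD
    have hDsub : ∀ c, D c ⊆ {ω | ξ (m+1) ω = c} := by
      intro c ω hω
      have := hω.1
      rw [hc1 c] at this
      exact this.2
    have hDdisj : ∀ c c' : ℕ, c ≠ c' → Disjoint (D c) (D c') := by
      intro c c' hcc
      rw [Set.disjoint_left]
      intro ω h1 h2
      have e1 := hDsub c h1
      have e2 := hDsub c' h2
      simp only [Set.mem_setOf_eq] at e1 e2
      exact hcc (e1 ▸ e2)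
    have hDmeas : ∀ c, MeasurableSet (D c) :=
      fun c => ((Tup_measurable ξ hξmeas (m+1)) MeasurableSet.of_discrete).inter
        (PatSet_measurable ξ X x hξmeas hX0 hstep (m+1) j)
    have hdecomp : Tup ξ m ⁻¹' S ∩ PatSet ξ X m (j+1) = D 1 ∪ (D 3 ∪ (D 5 ∪ D 7)) := by
      rw [hshift]
      ext ω
      simp only [hD, hc1, Set.mem_inter_iff, Set.mem_union, Set.mem_preimage, hSA,
        Set.mem_setOf_eq, Set.mem_inter_iff]
      constructor
      · rintro ⟨hS, hforce, hPat⟩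
        rw [hXm ω] at hforce
        rcases force_cases (Ychain x (extT (Tup ξ m ω)) m) with hc | hc | hc | hc
        · exact Or.inl ⟨⟨⟨hS, hc⟩, by rw [hforce, hc]⟩, hPat⟩
        · exact Or.inr (Or.inl ⟨⟨⟨hS, hc⟩, by rw [hforce, hc]⟩, hPat⟩)
        · exact Or.inr (Or.inr (Or.inl ⟨⟨⟨hS, hc⟩, by rw [hforce, hc]⟩, hPat⟩))
        · exact Or.inr (Or.inr (Or.inr ⟨⟨⟨hS, hc⟩, by rw [hforce, hc]⟩, hPat⟩))
      · rintro (⟨⟨⟨hS, hc⟩, hxi⟩, hPat⟩ | ⟨⟨⟨hS, hc⟩, hxi⟩, hPat⟩ |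
          ⟨⟨⟨hS, hc⟩, hxi⟩, hPat⟩ | ⟨⟨⟨hS, hc⟩, hxi⟩, hPat⟩) <;>
          exact ⟨hS, by rw [hXm ω, hc]; exact hxi, hPat⟩
    have hPdecomp : Tup ξ m ⁻¹' S
        = (Tup ξ m ⁻¹' SA 1) ∪ ((Tup ξ m ⁻¹' SA 3) ∪ ((Tup ξ m ⁻¹' SA 5) ∪ (Tup ξ m ⁻¹' SA 7))) := by
      ext ω
      simp only [Set.mem_union, Set.mem_preimage, hSA, Set.mem_inter_iff, Set.mem_setOf_eq]
      constructor
      · intro hS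
        rcases force_cases (Ychain x (extT (Tup ξ m ω)) m) with hc | hc | hc | hc
        · exact Or.inl ⟨hS, hc⟩
        · exact Or.inr (Or.inl ⟨hS, hc⟩)
        · exact Or.inr (Or.inr (Or.inl ⟨hS, hc⟩))
        · exact Or.inr (Or.inr (Or.inr ⟨hS, hc⟩))
      · rintro (⟨hS, _⟩ | ⟨hS, _⟩ | ⟨hS, _⟩ | ⟨hS, _⟩) <;> exact hS
    have hPsub : ∀ c, Tup ξ m ⁻¹' SA c ⊆ {ω | force (Ychain x (extT (Tup ξ m ω)) m) = c} := by
      intro c ω hω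
      exact hω.2
    have hPdisj : ∀ c c' : ℕ, c ≠ c' →
        Disjoint (Tup ξ m ⁻¹' SA c) (Tup ξ m ⁻¹' SA c') := by
      intro c c' hcc
      rw [Set.disjoint_left]
      intro ω h1 h2
      have e1 := hPsub c h1
      have e2 := hPsub c' h2
      simp only [Set.mem_setOf_eq] at e1 e2
      exact hcc (e1 ▸ e2)
    have hPmeas : ∀ c : ℕ, MeasurableSet (Tup ξ m ⁻¹' SA c) :=
      fun c => (Tup_measurable ξ hξmeas m) MeasurableSet.of_discrete
    obtain ⟨q1, q3, q5, q7⟩ := hξdist (m+1)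
    -- measure of the union of the D's
    have hDm : μ (D 1 ∪ (D 3 ∪ (D 5 ∪ D 7))) = μ (D 1) + (μ (D 3) + (μ (D 5) + μ (D 7))) := by
      rw [measure_union ((hDdisj 1 3 (by norm_num)).union_right
          ((hDdisj 1 5 (by norm_num)).union_right (hDdisj 1 7 (by norm_num))))
          ((hDmeas 3).union ((hDmeas 5).union (hDmeas 7))),
        measure_union ((hDdisj 3 5 (by norm_num)).union_right (hDdisj 3 7 (by norm_num)))
          ((hDmeas 5).union (hDmeas 7)),
        measure_union (hDdisj 5 7 (by norm_num)) (hDmeas 7)]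
    have hPm : μ (Tup ξ m ⁻¹' S) = μ (Tup ξ m ⁻¹' SA 1)
        + (μ (Tup ξ m ⁻¹' SA 3) + (μ (Tup ξ m ⁻¹' SA 5) + μ (Tup ξ m ⁻¹' SA 7))) := by
      rw [hPdecomp,
        measure_union ((hPdisj 1 3 (by norm_num)).union_right
          ((hPdisj 1 5 (by norm_num)).union_right (hPdisj 1 7 (by norm_num))))
          ((hPmeas 3).union ((hPmeas 5).union (hPmeas 7))),
        measure_union ((hPdisj 3 5 (by norm_num)).union_right (hPdisj 3 7 (by norm_num)))
          ((hPmeas 5).union (hPmeas 7)),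
        measure_union (hPdisj 5 7 (by norm_num)) (hPmeas 7)]
    have hIHc : ∀ c, μ {ω | ξ (m+1) ω = c} = 1/4 →
        μ (D c) = (1/4 : ℝ≥0∞)^j * (μ (Tup ξ m ⁻¹' SA c) * (1/4)) := by
      intro c hc
      rw [hD]
      show μ (Tup ξ (m+1) ⁻¹' SB c ∩ PatSet ξ X (m+1) j) = _
      rw [IH (m+1) (SB c), hBmeas c hc]
    rw [hdecomp, hDm, hIHc 1 q1, hIHc 3 q3, hIHc 5 q5, hIHc 7 q7, hPm]
    ring

end Window


section Final

variable {Ω : Type*} [MeasurableSpace Ω]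

lemma bad_le (μ : Measure Ω) [IsProbabilityMeasure μ]
    (ξ : ℕ → Ω → ℕ) (X : ℕ → Ω → ℕ) (x : ℕ)
    (hξval : ∀ n ω, ξ n ω = 1 ∨ ξ n ω = 3 ∨ ξ n ω = 5 ∨ ξ n ω = 7)
    (hξmeas : ∀ n, Measurable (ξ n))
    (hξindep : ProbabilityTheory.iIndepFun ξ μ)
    (hξdist : ∀ n, μ {ω | ξ n ω = 1} = 1/4 ∧ μ {ω | ξ n ω = 3} = 1/4 ∧
      μ {ω | ξ n ω = 5} = 1/4 ∧ μ {ω | ξ n ω = 7} = 1/4)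
    (hx : Odd x) (hxpos : 0 < x)
    (hX0 : ∀ ω, X 0 ω = x)
    (hstep : ∀ n ω, X (n+1) ω = step (X n ω) (ξ (n+1) ω))
    (N M : ℕ) (hM : 1 ≤ M) :
    (μ {ω | ∀ n, N ≤ n → X n ω ≠ 1}).toReal ≤ (Real.sqrt x + 89) / Real.sqrt M := by
  have hXoddpos := X_odd_pos ξ X x hx hxpos hξval hX0 hstep
  have hXmeas := X_meas ξ X x hξmeas hX0 hstep
  set Bad : Set Ω := {ω | ∀ n, N ≤ n → X n ω ≠ 1} with hBad
  set U : ℕ → Set Ω := fun k => {ω | ∀ jj, 1 ≤ jj → jj ≤ k → X (N + jj*M) ω ≠ 1} with hU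
  set SA : ℕ → ∀ k : ℕ, Set (Fin (N + k*M) → ℕ) := fun _ k =>
    {v | (∀ jj, 1 ≤ jj → jj ≤ k → Ychain x (extT v) (N + jj*M) ≠ 1) ∧
      Ychain x (extT v) (N + k*M) ≤ M} with hSA
  set A : ℕ → Set Ω := fun k => Tup ξ (N + k*M) ⁻¹' SA 0 k with hA
  have hAeq : ∀ k, A k = U k ∩ {ω | X (N + k*M) ω ≤ M} := by
    intro k
    ext ω
    simp only [hA, hU, hSA, Set.mem_preimage, Set.mem_setOf_eq, Set.mem_inter_iff]
    constructor
    · rintro ⟨h1, h2⟩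
      refine ⟨fun jj hj1 hj2 => ?_, ?_⟩
      · rw [X_eq_ext ξ X x hX0 hstep (by exact Nat.add_le_add_left (Nat.mul_le_mul_right M hj2) N) ω]
        exact h1 jj hj1 hj2
      · rw [X_eq_ext ξ X x hX0 hstep (le_refl (N + k*M)) ω]; exact h2
    · rintro ⟨h1, h2⟩
      refine ⟨fun jj hj1 hj2 => ?_, ?_⟩
      · rw [← X_eq_ext ξ X x hX0 hstep (by exact Nat.add_le_add_left (Nat.mul_le_mul_right M hj2) N) ω]
        exact h1 jj hj1 hj2
      · rw [← X_eq_ext ξ X x hX0 hstep (le_refl (N + k*M)) ω]; exact h2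
  set G : ℕ → Set Ω := fun k => A k ∩ PatSet ξ X (N + k*M) M with hG
  have hGmu : ∀ k, μ (G k) = (1/4 : ℝ≥0∞)^M * μ (A k) := by
    intro k
    exact window μ ξ X x hξmeas hξindep hξdist hX0 hstep M (N + k*M) (SA 0 k)
  have hUmeas : ∀ k, MeasurableSet (U k) := by
    intro k
    have : U k = ⋂ jj, {ω | 1 ≤ jj → jj ≤ k → X (N + jj*M) ω ≠ 1} := by
      ext ω; simp [hU]
    rw [this]
    apply MeasurableSet.iInter
    intro jj
    by_cases hjj : 1 ≤ jj ∧ jj ≤ k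
    · have h2 : {ω | 1 ≤ jj → jj ≤ k → X (N + jj*M) ω ≠ 1}
          = (X (N + jj*M)) ⁻¹' ({1}ᶜ) := by
        ext ω; simp [hjj.1, hjj.2]
      rw [h2]
      exact hXmeas _ (measurableSet_singleton 1).compl
    · have h2 : {ω | 1 ≤ jj → jj ≤ k → X (N + jj*M) ω ≠ 1} = Set.univ := by
        ext ω
        simp only [Set.mem_setOf_eq, Set.mem_univ, iff_true]
        intro h1 h2
        exact absurd ⟨h1, h2⟩ hjj
      rw [h2]; exact MeasurableSet.univ
  have hAmeas : ∀ k, MeasurableSet (A k) :=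
    fun k => (Tup_measurable ξ hξmeas (N + k*M)) MeasurableSet.of_discrete
  have hGmeas : ∀ k, MeasurableSet (G k) :=
    fun k => (hAmeas k).inter (PatSet_measurable ξ X x hξmeas hX0 hstep (N + k*M) M)
  have hGsubU : ∀ k, G k ⊆ U k := by
    intro k ω hω
    have := hω.1
    rw [hAeq k] at this
    exact this.1
  have hGdisj : ∀ k, Disjoint (U (k+1)) (G k) := by
    intro k
    rw [Set.disjoint_right]
    intro ω hωG hωU
    -- on G k, X (N + (k+1) * M) ω = 1
    obtain ⟨hωA, hωPat⟩ := hωG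
    rw [hAeq k] at hωA
    obtain ⟨-, hle⟩ := hωA
    have hval : ∀ i, i ≤ M → X (N + k*M + i) ω = g^[i] (X (N + k*M) ω) := by
      intro i
      induction i with
      | zero => intro _; rfl
      | succ i ih =>
        intro hi
        have h1 : X (N + k*M + i + 1) ω = step (X (N + k*M + i) ω) (ξ (N + k*M + i + 1) ω) :=
          hstep (N + k*M + i) ω
        have h2 : ξ ((N + k*M + i) + 1) ω = force (X (N + k*M + i) ω) :=
          hωPat (N + k*M + i) (by omega) (by omega)
        rw [show N + k*M + (i+1) = N + k*M + i + 1 by omega, h1, h2, ih (by omega),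
          Function.iterate_succ_apply']
        rfl
    have hone : X (N + k*M + M) ω = 1 := by
      rw [hval M le_rfl]
      exact g_iter_eq_one (hXoddpos (N + k*M) ω).1 (hXoddpos (N + k*M) ω).2 M hle
    have := hωU (k+1) (by omega) (le_refl (k+1))
    rw [show N + (k+1)*M = N + k*M + M by ring] at this
    exact this hone
  have hUsub : ∀ k, U (k+1) ⊆ U k := by
    intro k ω hω jj h1 h2
    exact hω jj h1 (by omega)
  have hstep' : ∀ k, μ (U (k+1)) + μ (G k) ≤ μ (U k) := by
    intro k
    rw [← measure_union (hGdisj k) (hGmeas k)]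
    apply measure_mono
    exact Set.union_subset (hUsub k) (hGsubU k)
  have hmarkov : ∀ k, μ (U k) ≤ μ (A k)
      + ENNReal.ofReal ((Real.sqrt x + 89) / Real.sqrt M) := by
    intro k
    have hsub : U k ⊆ A k ∪ {ω | M < X (N + k*M) ω} := by
      intro ω hω
      by_cases hc : X (N + k*M) ω ≤ M
      · left; rw [hAeq k]; exact ⟨hω, hc⟩
      · right; simp only [Set.mem_setOf_eq]; omega
    calc μ (U k) ≤ μ (A k ∪ {ω | M < X (N + k*M) ω}) := measure_mono hsub
      _ ≤ μ (A k) + μ {ω | M < X (N + k*M) ω} := measure_union_le _ _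
      _ ≤ μ (A k) + ENNReal.ofReal ((Real.sqrt x + 89) / Real.sqrt M) := by
          gcongr
          exact markov μ ξ X x hξval hξmeas hξindep hξdist hx hxpos hX0 hstep (N + k*M) M hM
  -- pass to real numbers
  set K : ℝ := Real.sqrt x + 89 with hK
  set εR : ℝ := K / Real.sqrt M with hεR
  set δ : ℝ := ((4:ℝ)⁻¹)^M with hδ
  have hKpos : 0 < K := by
    have := Real.sqrt_nonneg (x:ℝ); rw [hK]; linarith
  have hεnn : 0 ≤ εR := by
    apply div_nonneg hKpos.le (Real.sqrt_nonneg _)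
  have hδpos : 0 < δ := by positivity
  have hδle : δ ≤ 1 := by
    rw [hδ]
    apply pow_le_one₀ (by norm_num) (by norm_num)
  set u : ℕ → ℝ := fun k => (μ (U k)).toReal with hu
  set a : ℕ → ℝ := fun k => (μ (A k)).toReal with ha
  have hune : ∀ k, 0 ≤ u k := fun k => ENNReal.toReal_nonneg
  have hu1 : ∀ k, u k ≤ 1 := by
    intro k
    rw [hu]
    calc (μ (U k)).toReal ≤ (1 : ℝ≥0∞).toReal :=
      ENNReal.toReal_mono ENNReal.one_ne_top prob_le_one
    _ = 1 := by simp
  have r1 : ∀ k, u (k+1) + δ * a k ≤ u k := by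
    intro k
    have h1 := hstep' k
    have h2 : (μ (U (k+1)) + μ (G k)).toReal = u (k+1) + δ * a k := by
      rw [ENNReal.toReal_add (measure_ne_top μ _) (measure_ne_top μ _), hGmu k]
      congr 1
      rw [ENNReal.toReal_mul, ENNReal.toReal_pow]
      congr 2
      simp [ENNReal.toReal_inv]
    rw [← h2]
    exact ENNReal.toReal_mono (measure_ne_top μ _) h1
  have r2 : ∀ k, u k ≤ a k + εR := by
    intro k
    have h1 := hmarkov k
    have h2 : (μ (A k) + ENNReal.ofReal εR).toReal = a k + εR := by
      rw [ENNReal.toReal_add (measure_ne_top μ _) ENNReal.ofReal_ne_top,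
        ENNReal.toReal_ofReal hεnn]
    rw [← h2]
    exact ENNReal.toReal_mono (by simp [measure_ne_top]) h1
  have main : ∀ k, u k ≤ (1 - δ)^k + εR := by
    intro k
    induction k with
    | zero =>
      simp only [pow_zero]
      linarith [hu1 0]
    | succ k ih =>
      have h1 := r1 k
      have h2 := r2 k
      have h3 : 0 ≤ (1-δ)^k := pow_nonneg (by linarith) k
      have h4 : 0 ≤ a k := ENNReal.toReal_nonneg
      have : u (k+1) ≤ (1-δ) * u k + δ * εR := by nlinarith
      calc u (k+1) ≤ (1-δ) * u k + δ * εR := this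
        _ ≤ (1-δ) * ((1-δ)^k + εR) + δ * εR := by nlinarith
        _ = (1-δ)^(k+1) + εR := by ring
  have hBadU : ∀ k, Bad ⊆ U k := by
    intro k ω hω jj h1 h2
    exact hω (N + jj*M) (by omega)
  have hBadle : ∀ k, (μ Bad).toReal ≤ u k := by
    intro k
    exact ENNReal.toReal_mono (measure_ne_top μ _) (measure_mono (hBadU k))
  have hlim : Filter.Tendsto (fun k => (1-δ)^k + εR) Filter.atTop (nhds (0 + εR)) := by
    apply Filter.Tendsto.add_const
    exact tendsto_pow_atTop_nhds_zero_of_lt_one (by linarith) (by linarith)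
  have : (μ Bad).toReal ≤ 0 + εR := by
    apply ge_of_tendsto hlim
    filter_upwards with k
    exact (hBadle k).trans (main k)
  simpa using this

lemma badset_zero (μ : Measure Ω) [IsProbabilityMeasure μ]
    (ξ : ℕ → Ω → ℕ) (X : ℕ → Ω → ℕ) (x : ℕ)
    (hξval : ∀ n ω, ξ n ω = 1 ∨ ξ n ω = 3 ∨ ξ n ω = 5 ∨ ξ n ω = 7)
    (hξmeas : ∀ n, Measurable (ξ n))
    (hξindep : ProbabilityTheory.iIndepFun ξ μ)
    (hξdist : ∀ n, μ {ω | ξ n ω = 1} = 1/4 ∧ μ {ω | ξ n ω = 3} = 1/4 ∧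
      μ {ω | ξ n ω = 5} = 1/4 ∧ μ {ω | ξ n ω = 7} = 1/4)
    (hx : Odd x) (hxpos : 0 < x)
    (hX0 : ∀ ω, X 0 ω = x)
    (hstep : ∀ n ω, X (n+1) ω = step (X n ω) (ξ (n+1) ω))
    (N : ℕ) :
    μ {ω | ∀ n, N ≤ n → X n ω ≠ 1} = 0 := by
  by_contra hne
  set K : ℝ := Real.sqrt x + 89 with hK
  have hKpos : 0 < K := by
    have := Real.sqrt_nonneg (x:ℝ); rw [hK]; linarith
  have hpos : 0 < (μ {ω | ∀ n, N ≤ n → X n ω ≠ 1}).toReal :=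
    ENNReal.toReal_pos hne (measure_ne_top μ _)
  set η : ℝ := (μ {ω | ∀ n, N ≤ n → X n ω ≠ 1}).toReal with hη
  set M : ℕ := Nat.ceil ((K/η)^2) + 1 with hM
  have hM1 : 1 ≤ M := by omega
  have hlt : K / η < Real.sqrt M := by
    rw [show (M:ℝ) = ((Nat.ceil ((K/η)^2) : ℕ) : ℝ) + 1 by rw [hM]; push_cast; ring]
    apply lt_of_pow_lt_pow_left₀ 2 (Real.sqrt_nonneg _)
    rw [Real.sq_sqrt (by positivity)]
    have h1 : (K/η)^2 ≤ (Nat.ceil ((K/η)^2) : ℝ) := Nat.le_ceil _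
    linarith
  have hMpos : (0:ℝ) < Real.sqrt M := lt_of_le_of_lt (by positivity) hlt
  have hfin : K / Real.sqrt M < η := by
    rw [div_lt_iff₀ hMpos]
    calc K = (K/η) * η := (div_mul_cancel₀ K (ne_of_gt hpos)).symm
      _ < Real.sqrt M * η := mul_lt_mul_of_pos_right hlt hpos
      _ = η * Real.sqrt M := mul_comm _ _
  have hle := bad_le μ ξ X x hξval hξmeas hξindep hξdist hx hxpos hX0 hstep N M hM1
  rw [← hK, ← hη] at *
  linarith [hle]

end Final

end Collatz13

/-- (Proposition 2, recurrence part) For the randomized Collatz chain started at any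
positive odd integer `x`, almost surely `Xₙ = 1` for infinitely many `n`. -/
theorem stmt_13
    {Ω : Type*} [MeasurableSpace Ω] (μ : MeasureTheory.Measure Ω)
    [MeasureTheory.IsProbabilityMeasure μ]
    (ξ : ℕ → Ω → ℕ)
    (hξval : ∀ n ω, ξ n ω = 1 ∨ ξ n ω = 3 ∨ ξ n ω = 5 ∨ ξ n ω = 7)
    (hξmeas : ∀ n, Measurable (ξ n))
    (hξindep : ProbabilityTheory.iIndepFun ξ μ)
    (hξdist : ∀ n, μ {ω | ξ n ω = 1} = 1/4 ∧ μ {ω | ξ n ω = 3} = 1/4 ∧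
      μ {ω | ξ n ω = 5} = 1/4 ∧ μ {ω | ξ n ω = 7} = 1/4)
    (x : ℕ) (hx : Odd x) (hxpos : 0 < x)
    (X : ℕ → Ω → ℕ)
    (hX0 : ∀ ω, X 0 ω = x)
    (hXrec : ∀ n ω, X (n + 1) ω =
      (3 * X n ω + ξ (n + 1) ω) / 2 ^ padicValNat 2 (3 * X n ω + ξ (n + 1) ω))
    (d : ℕ → Ω → ℕ)
    (hd : ∀ n ω, d (n + 1) ω = padicValNat 2 (3 * X n ω + ξ (n + 1) ω)) :
    ∀ᵐ ω ∂μ, ∃ᶠ n in Filter.atTop, X n ω = 1 := by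
  have hstep : ∀ n ω, X (n + 1) ω = Collatz13.step (X n ω) (ξ (n + 1) ω) := fun n ω => hXrec n ω
  have hzero : ∀ N : ℕ, μ {ω | ∀ n, N ≤ n → X n ω ≠ 1} = 0 := fun N =>
    Collatz13.badset_zero μ ξ X x hξval hξmeas hξindep hξdist hx hxpos hX0 hstep N
  rw [MeasureTheory.ae_iff]
  apply MeasureTheory.measure_mono_null _ (MeasureTheory.measure_iUnion_null hzero)
  intro ω hω
  simp only [Set.mem_setOf_eq] at hω
  rw [Filter.not_frequently, Filter.eventually_atTop] at hω
  obtain ⟨N, hN⟩ := hω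
  exact Set.mem_iUnion.mpr ⟨N, fun n hn => hN n hn⟩
end
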